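/- arXiv:1607.04435 — 2 statements merged into one kernel-verified Lean document; each statement's English description precedes it below -/
import Mathlib

section
/- In ℚ[[z,w]] the bivariate generating function R(z,w) satisfies the quadratic equation z^{2s}w^s·R(z,w)² − [(1−z)(1−z²w+z^{2s}w^s) + z^{2s}w^s·T_m(z)]·R(z,w) + (1 − z²w + z^{2s}w^s) = 0. -/
open scoped Classical

/-- `x` is an endpoint of some pair in `P`. -/
def Paired (P : Finset (ℕ × ℕ)) (x : ℕ) : Prop := ∃ p ∈ P, p.1 = x ∨ p.2 = x

/-- Conditions (i)–(iii): `P` is a set of pairs `(i,j)`, `1 ≤ i < j ≤ n`, each index in at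
most one pair, noncrossing, and every hairpin loop has at least `m` unpaired bases. -/
def SecBase (m n : ℕ) (P : Finset (ℕ × ℕ)) : Prop :=
  (∀ p ∈ P, 1 ≤ p.1 ∧ p.1 < p.2 ∧ p.2 ≤ n) ∧
  (∀ p ∈ P, ∀ q ∈ P, p ≠ q → p.1 ≠ q.1 ∧ p.1 ≠ q.2 ∧ p.2 ≠ q.1 ∧ p.2 ≠ q.2) ∧
  (∀ p ∈ P, ∀ q ∈ P, ¬(p.1 < q.1 ∧ q.1 < p.2 ∧ p.2 < q.2)) ∧
  (∀ p ∈ P, (∀ x, p.1 < x → x < p.2 → ¬Paired P x) → m ≤ p.2 - p.1 - 1)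

/-- Condition (iv): every maximal stack of `P` has length at least `s`. -/
def StackCond (s : ℕ) (P : Finset (ℕ × ℕ)) : Prop :=
  ∀ p ∈ P, (p.1 - 1, p.2 + 1) ∉ P → ∃ t, s ≤ t ∧ ∀ a < t, (p.1 + a, p.2 - a) ∈ P

/-- `P` is a secondary structure of length `n` with minimum stem size `s` and minimum
hairpin size `m`. -/
def IsSecStruct (s m n : ℕ) (P : Finset (ℕ × ℕ)) : Prop :=
  SecBase m n P ∧ StackCond s P

/-- The (finite) set of all secondary structures of length `n`. -/
noncomputable def secFinset (s m n : ℕ) : Finset (Finset (ℕ × ℕ)) :=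
  (Finset.range (n + 1) ×ˢ Finset.range (n + 1)).powerset.filter (IsSecStruct s m n)

/-- `r n`: the number of secondary structures of length `n`. -/
noncomputable def secCount (s m n : ℕ) : ℕ := (secFinset s m n).card

/-- `r_{n,l}`: number of secondary structures of length `n` with exactly `l` pairs. -/
noncomputable def secCount2 (s m n l : ℕ) : ℕ :=
  ((secFinset s m n).filter (fun P => P.card = l)).card

/-- Bivariate generating function `R(z,w) = ∑ r_{n,l} z^n w^l` in `ℚ[[z,w]]`. -/
noncomputable def Rgf2 (s m : ℕ) : MvPowerSeries (Fin 2) ℚ :=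
  fun d => (secCount2 s m (d 0) (d 1) : ℚ)

/-! ### Infrastructure -/

/-- secondary structure living on the interval `(k, n]`. -/
def IsSecOn (s m k n : ℕ) (P : Finset (ℕ × ℕ)) : Prop :=
  (∀ p ∈ P, k + 1 ≤ p.1 ∧ p.1 < p.2 ∧ p.2 ≤ n) ∧
  (∀ p ∈ P, ∀ q ∈ P, p ≠ q → p.1 ≠ q.1 ∧ p.1 ≠ q.2 ∧ p.2 ≠ q.1 ∧ p.2 ≠ q.2) ∧
  (∀ p ∈ P, ∀ q ∈ P, ¬(p.1 < q.1 ∧ q.1 < p.2 ∧ p.2 < q.2)) ∧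
  (∀ p ∈ P, (∀ x, p.1 < x → x < p.2 → ¬Paired P x) → m ≤ p.2 - p.1 - 1) ∧
  StackCond s P

lemma isSecStruct_iff {s m n : ℕ} {P : Finset (ℕ × ℕ)} :
    IsSecStruct s m n P ↔ IsSecOn s m 0 n P := by
  unfold IsSecStruct SecBase IsSecOn
  tauto

lemma mem_secFinset {s m n : ℕ} {P : Finset (ℕ × ℕ)} :
    P ∈ secFinset s m n ↔ IsSecOn s m 0 n P := by
  rw [secFinset, Finset.mem_filter, Finset.mem_powerset, ← isSecStruct_iff]
  constructor
  · exact fun h => h.2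
  · intro h
    refine ⟨fun p hp => ?_, h⟩
    have h1 := h.1.1 p hp
    have h2 : p.1 < n + 1 ∧ p.2 < n + 1 := by omega
    exact Finset.mem_product.2 ⟨Finset.mem_range.2 h2.1, Finset.mem_range.2 h2.2⟩

/-- translate up by `c`. -/
def upP (c : ℕ) (P : Finset (ℕ × ℕ)) : Finset (ℕ × ℕ) :=
  P.image (fun p => (p.1 + c, p.2 + c))

/-- translate down by `c`. -/
def downP (c : ℕ) (P : Finset (ℕ × ℕ)) : Finset (ℕ × ℕ) :=
  P.image (fun p => (p.1 - c, p.2 - c))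

lemma up_mem {c : ℕ} {P : Finset (ℕ × ℕ)} {p : ℕ × ℕ} (hp : p ∈ P) :
    (p.1 + c, p.2 + c) ∈ upP c P :=
  Finset.mem_image.2 ⟨p, hp, rfl⟩

lemma mem_upP {c : ℕ} {P : Finset (ℕ × ℕ)} {q : ℕ × ℕ} :
    q ∈ upP c P ↔ ∃ p ∈ P, p.1 + c = q.1 ∧ p.2 + c = q.2 := by
  constructor
  · intro hq
    rcases Finset.mem_image.1 hq with ⟨p, hp, e⟩
    exact ⟨p, hp, by rw [← e], by rw [← e]⟩
  · rintro ⟨⟨a, b⟩, hp, e1, e2⟩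
    have : q = (a + c, b + c) := by
      rcases q with ⟨x, y⟩
      simp only at e1 e2
      simp only [Prod.mk.injEq]
      omega
    rw [this]
    exact up_mem hp

lemma mem_upP' {c : ℕ} {P : Finset (ℕ × ℕ)} {x y : ℕ} :
    (x + c, y + c) ∈ upP c P ↔ (x, y) ∈ P := by
  constructor
  · intro h
    rcases mem_upP.1 h with ⟨⟨a, b⟩, hp, e1, e2⟩
    simp only at e1 e2
    have : a = x ∧ b = y := by omega
    rcases this with ⟨rfl, rfl⟩
    exact hp
  · intro h
    exact up_mem (p := (x, y)) h

lemma downP_upP (c : ℕ) (P : Finset (ℕ × ℕ)) : downP c (upP c P) = P := by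
  ext ⟨x, y⟩
  constructor
  · intro h
    rcases Finset.mem_image.1 h with ⟨r, hr, e⟩
    rcases mem_upP.1 hr with ⟨⟨a, b⟩, hp, e1, e2⟩
    simp only at e1 e2
    simp only [Prod.mk.injEq] at e
    have : x = a ∧ y = b := by omega
    rcases this with ⟨rfl, rfl⟩
    exact hp
  · intro h
    refine Finset.mem_image.2 ⟨(x + c, y + c), up_mem (p := (x, y)) h, by simp⟩

lemma upP_downP {c : ℕ} {P : Finset (ℕ × ℕ)} (h : ∀ p ∈ P, c ≤ p.1 ∧ c ≤ p.2) :
    upP c (downP c P) = P := by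
  ext ⟨x, y⟩
  constructor
  · intro hq
    rcases mem_upP.1 hq with ⟨r, hr, e1, e2⟩
    rcases Finset.mem_image.1 hr with ⟨⟨a, b⟩, hp, e⟩
    have hb := h _ hp
    subst e
    simp only at e1 e2 hb
    have : x = a ∧ y = b := by omega
    rcases this with ⟨rfl, rfl⟩
    exact hp
  · intro hq
    have hb := h _ hq
    simp only at hb
    have e : ((x - c) + c, (y - c) + c) = ((x : ℕ), (y : ℕ)) := by
      simp only [Prod.mk.injEq]; omega
    rw [← e]
    exact up_mem (p := (x - c, y - c)) (Finset.mem_image.2 ⟨(x, y), hq, rfl⟩)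

lemma card_upP (c : ℕ) (P : Finset (ℕ × ℕ)) : (upP c P).card = P.card := by
  apply Finset.card_image_of_injective
  intro p q h
  simp only [Prod.ext_iff] at h ⊢
  omega

lemma card_downP {c : ℕ} {P : Finset (ℕ × ℕ)} (h : ∀ p ∈ P, c ≤ p.1 ∧ c ≤ p.2) :
    (downP c P).card = P.card := by
  have h1 : P.card = (upP c (downP c P)).card := by rw [upP_downP h]
  have h2 := card_upP c (downP c P)
  have h3 : (downP c P).card ≤ P.card := Finset.card_image_le
  omega

lemma paired_upP {c : ℕ} {P : Finset (ℕ × ℕ)} {x : ℕ} :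
    Paired (upP c P) (x + c) ↔ Paired P x := by
  constructor
  · rintro ⟨q, hq, hx⟩
    rcases mem_upP.1 hq with ⟨p, hp, h1, h2⟩
    exact ⟨p, hp, by omega⟩
  · rintro ⟨p, hp, hx⟩
    refine ⟨(p.1 + c, p.2 + c), up_mem hp, ?_⟩
    simp only
    omega

lemma secOn_up_iff {s m k n c : ℕ} {P : Finset (ℕ × ℕ)} :
    IsSecOn s m (k + c) (n + c) (upP c P) ↔ IsSecOn s m k n P := by
  constructor
  · rintro ⟨h1, h2, h3, h4, h5⟩
    refine ⟨?_, ?_, ?_, ?_, ?_⟩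
    · intro p hp
      have := h1 _ (up_mem hp)
      simp only at this; omega
    · intro p hp q hq hne
      have := h2 _ (up_mem hp) _ (up_mem hq)
        (by simp only [ne_eq, Prod.ext_iff] at hne ⊢; omega)
      simp only at this; omega
    · intro p hp q hq
      have := h3 _ (up_mem hp) _ (up_mem hq)
      simp only at this; omega
    · intro p hp hint
      have := h4 _ (up_mem hp) ?_
      · simp only at this; omega
      · intro y hy1 hy2 hpy
        rcases hpy with ⟨q, hq, hyq⟩
        rcases mem_upP.1 hq with ⟨q', hq', e1, e2⟩
        simp only at hy1 hy2
        rcases hyq with h | h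
        · exact hint q'.1 (by omega) (by omega) ⟨q', hq', Or.inl rfl⟩
        · exact hint q'.2 (by omega) (by omega) ⟨q', hq', Or.inr rfl⟩
    · intro p hp htrig
      have hp' : (p.1 + c, p.2 + c) ∈ upP c P := up_mem hp
      have hb := h1 _ hp'
      simp only at hb
      have htrig' : (p.1 + c - 1, p.2 + c + 1) ∉ upP c P := by
        intro hmem
        rcases mem_upP.1 hmem with ⟨⟨a, b⟩, hq, e1, e2⟩
        apply htrig
        simp only at e1 e2
        have : a = p.1 - 1 ∧ b = p.2 + 1 := by omega
        rcases this with ⟨rfl, rfl⟩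
        exact hq
      rcases h5 _ hp' htrig' with ⟨t, hst, hall⟩
      refine ⟨t, hst, fun a ha => ?_⟩
      have hmem := hall a ha
      have hbb := h1 _ hmem
      simp only at hmem hbb
      rcases mem_upP.1 hmem with ⟨⟨x, y⟩, hq, e1, e2⟩
      simp only at e1 e2
      have : x = p.1 + a ∧ y = p.2 - a := by omega
      rcases this with ⟨rfl, rfl⟩
      exact hq
  · rintro ⟨h1, h2, h3, h4, h5⟩
    refine ⟨?_, ?_, ?_, ?_, ?_⟩
    · intro q hq
      rcases mem_upP.1 hq with ⟨p, hp, e1, e2⟩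
      have := h1 p hp; omega
    · intro q hq q' hq' hne
      rcases mem_upP.1 hq with ⟨p, hp, e1, e2⟩
      rcases mem_upP.1 hq' with ⟨p', hp', e1', e2'⟩
      have hpne : p ≠ p' := by
        intro h
        apply hne
        rcases q with ⟨a, b⟩; rcases q' with ⟨a', b'⟩
        simp only [Prod.mk.injEq]
        subst h
        simp only at e1 e2 e1' e2'
        omega
      have := h2 p hp p' hp' hpne
      omega
    · intro q hq q' hq'
      rcases mem_upP.1 hq with ⟨p, hp, e1, e2⟩
      rcases mem_upP.1 hq' with ⟨p', hp', e1', e2'⟩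
      have := h3 p hp p' hp'
      omega
    · intro q hq hint
      rcases mem_upP.1 hq with ⟨p, hp, e1, e2⟩
      have hb := h1 p hp
      have := h4 p hp ?_
      · omega
      · intro x hx1 hx2 hpx
        refine hint (x + c) (by omega) (by omega) ?_
        exact paired_upP.2 hpx
    · intro q hq htrig
      rcases mem_upP.1 hq with ⟨p, hp, e1, e2⟩
      have hb := h1 p hp
      have htrig' : (p.1 - 1, p.2 + 1) ∉ P := by
        intro hmem
        apply htrig
        have e : (q.1 - 1, q.2 + 1) = ((p.1 - 1) + c, (p.2 + 1) + c) := by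
          simp only [Prod.mk.injEq]; omega
        rw [e]
        exact up_mem (p := (p.1 - 1, p.2 + 1)) hmem
      rcases h5 p hp htrig' with ⟨t, hst, hall⟩
      refine ⟨t, hst, fun a ha => ?_⟩
      have hmem := hall a ha
      have hbb := h1 _ hmem
      simp only at hbb
      have e : (q.1 + a, q.2 - a) = ((p.1 + a) + c, (p.2 - a) + c) := by
        simp only [Prod.mk.injEq]; omega
      rw [e]
      exact up_mem (p := (p.1 + a, p.2 - a)) hmem

lemma secOn_down {s m k n c : ℕ} {P : Finset (ℕ × ℕ)} (hck : c ≤ k) (hcn : c ≤ n)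
    (h : IsSecOn s m k n P) :
    IsSecOn s m (k - c) (n - c) (downP c P) ∧ upP c (downP c P) = P := by
  have hbnd : ∀ p ∈ P, c ≤ p.1 ∧ c ≤ p.2 := by
    intro p hp; have := h.1 p hp; omega
  have hud : upP c (downP c P) = P := upP_downP hbnd
  refine ⟨?_, hud⟩
  rw [← secOn_up_iff (c := c), Nat.sub_add_cancel hck, Nat.sub_add_cancel hcn, hud]
  exact h

lemma paired_mono {P Q : Finset (ℕ × ℕ)} {x : ℕ} (h : P ⊆ Q) (hp : Paired P x) :
    Paired Q x := by
  rcases hp with ⟨p, hp, he⟩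
  exact ⟨p, h hp, he⟩

lemma secOn_join {s m j k n : ℕ} {P₁ P₂ : Finset (ℕ × ℕ)} (hjk : j ≤ k) (hkn : k ≤ n)
    (h1 : IsSecOn s m j k P₁) (h2 : IsSecOn s m k n P₂) :
    IsSecOn s m j n (P₁ ∪ P₂) := by
  obtain ⟨b1, i1, c1, v1, t1⟩ := h1
  obtain ⟨b2, i2, c2, v2, t2⟩ := h2
  have hb1 : ∀ p ∈ P₁, j + 1 ≤ p.1 ∧ p.1 < p.2 ∧ p.2 ≤ k := b1
  have hb2 : ∀ p ∈ P₂, k + 1 ≤ p.1 ∧ p.1 < p.2 ∧ p.2 ≤ n := b2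
  refine ⟨?_, ?_, ?_, ?_, ?_⟩
  · intro p hp
    rcases Finset.mem_union.1 hp with h | h
    · have := hb1 p h; omega
    · have := hb2 p h; omega
  · intro p hp q hq hne
    rcases Finset.mem_union.1 hp with h | h <;> rcases Finset.mem_union.1 hq with h' | h'
    · exact i1 p h q h' hne
    · have := hb1 p h; have := hb2 q h'; omega
    · have := hb2 p h; have := hb1 q h'; omega
    · exact i2 p h q h' hne
  · intro p hp q hq
    rcases Finset.mem_union.1 hp with h | h <;> rcases Finset.mem_union.1 hq with h' | h'
    · exact c1 p h q h'
    · have := hb1 p h; have := hb2 q h'; omega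
    · have := hb2 p h; have := hb1 q h'; omega
    · exact c2 p h q h'
  · intro p hp hint
    rcases Finset.mem_union.1 hp with h | h
    · exact v1 p h fun x hx1 hx2 hpx =>
        hint x hx1 hx2 (paired_mono Finset.subset_union_left hpx)
    · exact v2 p h fun x hx1 hx2 hpx =>
        hint x hx1 hx2 (paired_mono Finset.subset_union_right hpx)
  · intro p hp htrig
    rcases Finset.mem_union.1 hp with h | h
    · have htrig' : (p.1 - 1, p.2 + 1) ∉ P₁ := fun hc => htrig (Finset.mem_union_left _ hc)
      rcases t1 p h htrig' with ⟨t, hst, hall⟩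
      exact ⟨t, hst, fun a ha => Finset.mem_union_left _ (hall a ha)⟩
    · have htrig' : (p.1 - 1, p.2 + 1) ∉ P₂ := fun hc => htrig (Finset.mem_union_right _ hc)
      rcases t2 p h htrig' with ⟨t, hst, hall⟩
      exact ⟨t, hst, fun a ha => Finset.mem_union_right _ (hall a ha)⟩

lemma secOn_split {s m j n k : ℕ} {P : Finset (ℕ × ℕ)}
    (h : IsSecOn s m j n P) (hside : ∀ p ∈ P, p.2 ≤ k ∨ k + 1 ≤ p.1) :
    IsSecOn s m j k (P.filter (fun p => p.2 ≤ k)) ∧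
      IsSecOn s m k n (P.filter (fun p => k + 1 ≤ p.1)) := by
  obtain ⟨b, i, c, v, t⟩ := h
  constructor
  · refine ⟨?_, ?_, ?_, ?_, ?_⟩
    · intro p hp
      rcases Finset.mem_filter.1 hp with ⟨hp, hpk⟩
      have := b p hp; omega
    · intro p hp q hq hne
      exact i p (Finset.mem_filter.1 hp).1 q (Finset.mem_filter.1 hq).1 hne
    · intro p hp q hq
      exact c p (Finset.mem_filter.1 hp).1 q (Finset.mem_filter.1 hq).1
    · intro p hp hint
      rcases Finset.mem_filter.1 hp with ⟨hpP, hpk⟩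
      refine v p hpP fun x hx1 hx2 hpx => hint x hx1 hx2 ?_
      rcases hpx with ⟨q, hq, he⟩
      have hbq := b q hq
      have hq2 : q.2 ≤ k := by
        rcases hside q hq with h' | h'
        · exact h'
        · omega
      exact ⟨q, Finset.mem_filter.2 ⟨hq, hq2⟩, he⟩
    · intro p hp htrig
      rcases Finset.mem_filter.1 hp with ⟨hpP, hpk⟩
      have hbp := b p hpP
      have htrig' : (p.1 - 1, p.2 + 1) ∉ P := by
        intro hc
        rcases hside _ hc with h' | h'
        · exact htrig (Finset.mem_filter.2 ⟨hc, h'⟩)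
        · simp only at h'; omega
      rcases t p hpP htrig' with ⟨tt, hst, hall⟩
      refine ⟨tt, hst, fun a ha => Finset.mem_filter.2 ⟨hall a ha, ?_⟩⟩
      simp only
      omega
  · refine ⟨?_, ?_, ?_, ?_, ?_⟩
    · intro p hp
      rcases Finset.mem_filter.1 hp with ⟨hp', hpk⟩
      have := b p hp'; omega
    · intro p hp q hq hne
      exact i p (Finset.mem_filter.1 hp).1 q (Finset.mem_filter.1 hq).1 hne
    · intro p hp q hq
      exact c p (Finset.mem_filter.1 hp).1 q (Finset.mem_filter.1 hq).1
    · intro p hp hint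
      rcases Finset.mem_filter.1 hp with ⟨hpP, hpk⟩
      refine v p hpP fun x hx1 hx2 hpx => hint x hx1 hx2 ?_
      rcases hpx with ⟨q, hq, he⟩
      have hbq := b q hq
      have hq1 : k + 1 ≤ q.1 := by
        rcases hside q hq with h' | h'
        · omega
        · exact h'
      exact ⟨q, Finset.mem_filter.2 ⟨hq, hq1⟩, he⟩
    · intro p hp htrig
      rcases Finset.mem_filter.1 hp with ⟨hpP, hpk⟩
      have hbp := b p hpP
      have htrig' : (p.1 - 1, p.2 + 1) ∉ P := by
        intro hc
        rcases hside _ hc with h' | h'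
        · simp only at h'; omega
        · exact htrig (Finset.mem_filter.2 ⟨hc, h'⟩)
      rcases t p hpP htrig' with ⟨tt, hst, hall⟩
      refine ⟨tt, hst, fun a ha => Finset.mem_filter.2 ⟨hall a ha, ?_⟩⟩
      simp only
      omega

lemma split_union {k : ℕ} {P : Finset (ℕ × ℕ)}
    (hside : ∀ p ∈ P, p.2 ≤ k ∨ k + 1 ≤ p.1) (hlt : ∀ p ∈ P, p.1 < p.2) :
    P.filter (fun p => p.2 ≤ k) ∪ P.filter (fun p => k + 1 ≤ p.1) = P := by
  ext p
  simp only [Finset.mem_union, Finset.mem_filter]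
  constructor
  · rintro (⟨h, _⟩ | ⟨h, _⟩) <;> exact h
  · intro hp
    rcases hside p hp with h | h
    · exact Or.inl ⟨hp, h⟩
    · exact Or.inr ⟨hp, h⟩

lemma split_card {k : ℕ} {P : Finset (ℕ × ℕ)}
    (hside : ∀ p ∈ P, p.2 ≤ k ∨ k + 1 ≤ p.1) (hlt : ∀ p ∈ P, p.1 < p.2) :
    (P.filter (fun p => p.2 ≤ k)).card + (P.filter (fun p => k + 1 ≤ p.1)).card = P.card := by
  rw [← Finset.card_union_of_disjoint, split_union hside hlt]
  rw [Finset.disjoint_left]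
  intro p h1 h2
  rcases Finset.mem_filter.1 h1 with ⟨hp, ha⟩
  rcases Finset.mem_filter.1 h2 with ⟨-, hb⟩
  have := hlt p hp
  omega

lemma sided_of_closed {s m n k : ℕ} {P : Finset (ℕ × ℕ)}
    (h : IsSecOn s m 0 n P) (hk : (1, k) ∈ P) :
    ∀ p ∈ P, p.2 ≤ k ∨ k + 1 ≤ p.1 := by
  intro p hp
  by_cases hpk : p = (1, k)
  · subst hpk; simp only; omega
  · have h2 := h.2.1 p hp (1, k) hk hpk
    have h3 := h.2.2.1 (1, k) hk p hp
    have h1 := h.1 p hp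
    simp only at h2 h3
    omega

noncomputable def closedFinset (s m n : ℕ) : Finset (Finset (ℕ × ℕ)) :=
  (secFinset s m n).filter (fun P => (1, n) ∈ P)

noncomputable def cc (s m n l : ℕ) : ℕ :=
  ((closedFinset s m n).filter (fun P => P.card = l)).card

lemma mem_closedFinset {s m n : ℕ} {P : Finset (ℕ × ℕ)} :
    P ∈ closedFinset s m n ↔ IsSecOn s m 0 n P ∧ (1, n) ∈ P := by
  rw [closedFinset, Finset.mem_filter, mem_secFinset]

/-- the partner of base 1, or 0 if unpaired. -/
noncomputable def pt (P : Finset (ℕ × ℕ)) : ℕ := (P.filter (fun p => p.1 = 1)).sup Prod.snd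

lemma pt_eq {s m n k : ℕ} {P : Finset (ℕ × ℕ)} (h : IsSecOn s m 0 n P)
    (hk : (1, k) ∈ P) : pt P = k := by
  have hsingle : P.filter (fun p => p.1 = 1) = {(1, k)} := by
    apply Finset.eq_singleton_iff_unique_mem.2
    refine ⟨Finset.mem_filter.2 ⟨hk, rfl⟩, ?_⟩
    intro q hq
    rcases Finset.mem_filter.1 hq with ⟨hqP, hq1⟩
    by_contra hne
    have := h.2.1 q hqP (1, k) hk hne
    simp only at this
    omega
  rw [pt, hsingle, Finset.sup_singleton]

lemma pt_cases {s m n : ℕ} {P : Finset (ℕ × ℕ)} (h : IsSecOn s m 0 n P) :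
    (pt P = 0 ∧ ¬Paired P 1) ∨ (1, pt P) ∈ P := by
  by_cases hf : (P.filter (fun p => p.1 = 1)).Nonempty
  · right
    rcases hf with ⟨q, hq⟩
    rcases Finset.mem_filter.1 hq with ⟨hqP, hq1⟩
    have hq' : q = (1, q.2) := by
      rcases q with ⟨a, b⟩; simp only at hq1; simp [hq1]
    rw [hq'] at hqP
    rw [pt_eq h hqP]
    exact hqP
  · left
    have he : P.filter (fun p => p.1 = 1) = ∅ := Finset.not_nonempty_iff_eq_empty.1 hf
    constructor
    · rw [pt, he, Finset.sup_empty]; rfl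
    · rintro ⟨q, hq, hq1 | hq2⟩
      · exact hf ⟨q, Finset.mem_filter.2 ⟨hq, hq1⟩⟩
      · have := h.1 q hq; omega

lemma pt_le {s m n : ℕ} {P : Finset (ℕ × ℕ)} (h : IsSecOn s m 0 n P) : pt P ≤ n := by
  rcases pt_cases h with ⟨h0, -⟩ | hk
  · omega
  · exact (h.1 _ hk).2.2

lemma pt_ne_one {s m n : ℕ} {P : Finset (ℕ × ℕ)} (h : IsSecOn s m 0 n P) : pt P ≠ 1 := by
  rcases pt_cases h with ⟨h0, -⟩ | hk
  · omega
  · intro h1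
    rw [h1] at hk
    have := h.1 _ hk
    simp only at this
    omega

lemma secOn_empty (s m k n : ℕ) : IsSecOn s m k n (∅ : Finset (ℕ × ℕ)) := by
  refine ⟨?_, ?_, ?_, ?_, ?_⟩ <;> intro p hp <;> simp at hp

lemma sec0 (s m l : ℕ) : secCount2 s m 0 l = if l = 0 then 1 else 0 := by
  have h1 : secFinset s m 0 = {∅} := by
    ext P
    rw [mem_secFinset, Finset.mem_singleton]
    constructor
    · intro h
      apply Finset.eq_empty_of_forall_notMem
      intro p hp
      have := h.1 p hp
      omega
    · rintro rfl
      exact secOn_empty s m 0 0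
  rw [secCount2, h1]
  by_cases hl : l = 0
  · subst hl
    rw [if_pos rfl]
    rw [Finset.filter_singleton, if_pos (by simp)]
    rfl
  · rw [if_neg hl]
    rw [Finset.filter_singleton, if_neg (by simpa using Ne.symm hl)]
    rfl

lemma cc_small {s m n l : ℕ} (hn : n ≤ 1) : cc s m n l = 0 := by
  rw [cc, Finset.card_eq_zero]
  apply Finset.eq_empty_of_forall_notMem
  intro P hP
  rcases Finset.mem_filter.1 hP with ⟨hP, -⟩
  rcases mem_closedFinset.1 hP with ⟨h, hk⟩
  have := h.1 _ hk
  simp only at this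
  omega

lemma fiber0 (s m n l : ℕ) :
    ((secFinset s m (n + 1)).filter (fun P => P.card = l ∧ pt P = 0)).card
      = secCount2 s m n l := by
  rw [secCount2]
  apply Finset.card_bij' (fun P _ => downP 1 P) (fun Q _ => upP 1 Q)
  · intro P hP
    rcases Finset.mem_filter.1 hP with ⟨hPs, hcard, hpt⟩
    have h := mem_secFinset.1 hPs
    have hnp : ¬Paired P 1 := by
      rcases pt_cases h with ⟨-, h2⟩ | hk
      · exact h2
      · rw [hpt] at hk
        have := h.1 _ hk
        simp only at this
        omega
    have h1 : IsSecOn s m 1 (n + 1) P := by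
      refine ⟨fun p hp => ?_, h.2.1, h.2.2.1, h.2.2.2.1, h.2.2.2.2⟩
      have hb := h.1 p hp
      have : p.1 ≠ 1 := fun hc => hnp ⟨p, hp, Or.inl hc⟩
      omega
    have hd := secOn_down (c := 1) le_rfl (by omega) h1
    rw [Finset.mem_filter, mem_secFinset]
    have hbnd : ∀ p ∈ P, 1 ≤ p.1 ∧ 1 ≤ p.2 := fun p hp => by
      have := h.1 p hp; omega
    exact ⟨hd.1, by rw [card_downP hbnd, hcard]⟩
  · intro Q hQ
    rcases Finset.mem_filter.1 hQ with ⟨hQs, hcard⟩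
    have h := mem_secFinset.1 hQs
    have hup : IsSecOn s m 1 (n + 1) (upP 1 Q) := secOn_up_iff.2 h
    have hup0 : IsSecOn s m 0 (n + 1) (upP 1 Q) := by
      refine ⟨fun p hp => ?_, hup.2.1, hup.2.2.1, hup.2.2.2.1, hup.2.2.2.2⟩
      have := hup.1 p hp
      omega
    rw [Finset.mem_filter, mem_secFinset]
    refine ⟨hup0, by rw [card_upP, hcard], ?_⟩
    rcases pt_cases hup0 with ⟨h0, -⟩ | hk
    · exact h0
    · rcases mem_upP.1 hk with ⟨p, hp, e1, e2⟩
      have := h.1 p hp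
      simp only at e1 e2
      omega
  · intro P hP
    rcases Finset.mem_filter.1 hP with ⟨hPs, hcard, hpt⟩
    have h := mem_secFinset.1 hPs
    exact upP_downP (fun p hp => by have := h.1 p hp; omega)
  · intro Q _
    exact downP_upP 1 Q

lemma card_prod_filter_add {α β : Type*} (A : Finset α) (B : Finset β)
    (f : α → ℕ) (g : β → ℕ) (l : ℕ) :
    ((A ×ˢ B).filter (fun x => f x.1 + g x.2 = l)).card
      = ∑ j ∈ Finset.range (l + 1),
          (A.filter (fun a => f a = j)).card * (B.filter (fun b => g b = l - j)).card := by
  have key : (A ×ˢ B).filter (fun x => f x.1 + g x.2 = l)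
      = (Finset.range (l + 1)).biUnion
          (fun j => (A.filter (fun a => f a = j)) ×ˢ (B.filter (fun b => g b = l - j))) := by
    ext x
    simp only [Finset.mem_filter, Finset.mem_biUnion, Finset.mem_range, Finset.mem_product]
    constructor
    · rintro ⟨⟨ha, hb⟩, hsum⟩
      exact ⟨f x.1, by omega, ⟨ha, rfl⟩, hb, by omega⟩
    · rintro ⟨j, hj, ⟨ha, hfa⟩, hb, hgb⟩
      exact ⟨⟨ha, hb⟩, by omega⟩
  rw [key, Finset.card_biUnion]
  · apply Finset.sum_congr rfl
    intro j _
    rw [Finset.card_product]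
  · intro i _ j _ hij
    rw [Function.onFun, Finset.disjoint_left]
    rintro x hx hx'
    rcases Finset.mem_product.1 hx with ⟨ha, -⟩
    rcases Finset.mem_product.1 hx' with ⟨ha', -⟩
    rcases Finset.mem_filter.1 ha with ⟨-, h1⟩
    rcases Finset.mem_filter.1 ha' with ⟨-, h2⟩
    omega

lemma fiberk (s m n l k : ℕ) (hk2 : 2 ≤ k) (hkn : k ≤ n) :
    ((secFinset s m n).filter (fun P => P.card = l ∧ pt P = k)).card
      = ∑ j ∈ Finset.range (l + 1), cc s m k j * secCount2 s m (n - k) (l - j) := by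
  have step : ((secFinset s m n).filter (fun P => P.card = l ∧ pt P = k)).card
      = (((closedFinset s m k) ×ˢ (secFinset s m (n - k))).filter
          (fun Q => Q.1.card + Q.2.card = l)).card := by
    apply Finset.card_bij'
      (fun P _ => (P.filter (fun p => p.2 ≤ k), downP k (P.filter (fun p => k + 1 ≤ p.1))))
      (fun Q _ => Q.1 ∪ upP k Q.2)
    · intro P hP
      rcases Finset.mem_filter.1 hP with ⟨hPs, hcard, hpt⟩
      have h := mem_secFinset.1 hPs
      have hk1 : (1, k) ∈ P := by
        rcases pt_cases h with ⟨h0, -⟩ | hmem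
        · omega
        · rwa [hpt] at hmem
      have hside := sided_of_closed h hk1
      have hsplit := secOn_split h hside
      have hd := secOn_down (c := k) le_rfl hkn hsplit.2
      have hlt : ∀ p ∈ P, p.1 < p.2 := fun p hp => (h.1 p hp).2.1
      have hbnd2 : ∀ p ∈ P.filter (fun p => k + 1 ≤ p.1), k ≤ p.1 ∧ k ≤ p.2 := by
        intro p hp
        rcases Finset.mem_filter.1 hp with ⟨hpP, hk'⟩
        have := h.1 p hpP
        omega
      simp only [Finset.mem_filter, Finset.mem_product]
      refine ⟨⟨mem_closedFinset.2 ⟨hsplit.1, Finset.mem_filter.2 ⟨hk1, le_rfl⟩⟩,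
        mem_secFinset.2 (by simpa using hd.1)⟩, ?_⟩
      rw [card_downP hbnd2]
      rw [split_card hside hlt, hcard]
    · intro Q hQ
      rcases Finset.mem_filter.1 hQ with ⟨hQp, hcard⟩
      rcases Finset.mem_product.1 hQp with ⟨hQ1, hQ2⟩
      rcases mem_closedFinset.1 hQ1 with ⟨h1, hk1⟩
      have h2 := mem_secFinset.1 hQ2
      have hup : IsSecOn s m k n (upP k Q.2) := by
        have := secOn_up_iff (k := 0) (n := n - k) (c := k) (P := Q.2) |>.2 h2
        rwa [Nat.zero_add, Nat.sub_add_cancel hkn] at this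
      have hjoin : IsSecOn s m 0 n (Q.1 ∪ upP k Q.2) :=
        secOn_join (Nat.zero_le k) hkn h1 hup
      have hdisj : Disjoint Q.1 (upP k Q.2) := by
        rw [Finset.disjoint_left]
        intro p hp hp'
        have hbp := h1.1 p hp
        have hbp' := hup.1 p hp'
        omega
      rw [Finset.mem_filter, mem_secFinset]
      refine ⟨hjoin, ?_, pt_eq hjoin (Finset.mem_union_left _ hk1)⟩
      rw [Finset.card_union_of_disjoint hdisj, card_upP, hcard]
    · intro P hP
      rcases Finset.mem_filter.1 hP with ⟨hPs, hcard, hpt⟩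
      have h := mem_secFinset.1 hPs
      have hk1 : (1, k) ∈ P := by
        rcases pt_cases h with ⟨h0, -⟩ | hmem
        · omega
        · rwa [hpt] at hmem
      have hside := sided_of_closed h hk1
      have hsplit := secOn_split h hside
      have hd := secOn_down (c := k) le_rfl hkn hsplit.2
      rw [hd.2]
      exact split_union hside (fun p hp => (h.1 p hp).2.1)
    · intro Q hQ
      rcases Finset.mem_filter.1 hQ with ⟨hQp, hcard⟩
      rcases Finset.mem_product.1 hQp with ⟨hQ1, hQ2⟩
      rcases mem_closedFinset.1 hQ1 with ⟨h1, hk1⟩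
      have h2 := mem_secFinset.1 hQ2
      have e1 : (Q.1 ∪ upP k Q.2).filter (fun p => p.2 ≤ k) = Q.1 := by
        rw [Finset.filter_union]
        have ea : Q.1.filter (fun p => p.2 ≤ k) = Q.1 :=
          Finset.filter_true_of_mem (fun p hp => (h1.1 p hp).2.2)
        have eb : (upP k Q.2).filter (fun p => p.2 ≤ k) = ∅ := by
          apply Finset.filter_false_of_mem
          intro p hp
          rcases mem_upP.1 hp with ⟨q, hq, e1, e2⟩
          have := h2.1 q hq
          omega
        rw [ea, eb, Finset.union_empty]
      have e2 : (Q.1 ∪ upP k Q.2).filter (fun p => k + 1 ≤ p.1) = upP k Q.2 := by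
        rw [Finset.filter_union]
        have ea : Q.1.filter (fun p => k + 1 ≤ p.1) = ∅ := by
          apply Finset.filter_false_of_mem
          intro p hp
          have := h1.1 p hp
          omega
        have eb : (upP k Q.2).filter (fun p => k + 1 ≤ p.1) = upP k Q.2 := by
          apply Finset.filter_true_of_mem
          intro p hp
          rcases mem_upP.1 hp with ⟨q, hq, e1, e2⟩
          have := h2.1 q hq
          omega
        rw [ea, eb, Finset.empty_union]
      rw [e1, e2, downP_upP]

  rw [step, card_prod_filter_add]
  rfl

lemma E1 (s m n l : ℕ) :
    secCount2 s m n l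
      = (if n = 0 ∧ l = 0 then 1 else 0)
        + (if 1 ≤ n then secCount2 s m (n - 1) l else 0)
        + ∑ k ∈ Finset.range (n + 1), ∑ j ∈ Finset.range (l + 1),
            cc s m k j * secCount2 s m (n - k) (l - j) := by
  rcases Nat.eq_zero_or_pos n with rfl | hn
  · have hz : ∀ k ∈ Finset.range (0 + 1),
        ∑ j ∈ Finset.range (l + 1), cc s m k j * secCount2 s m (0 - k) (l - j) = 0 := by
      intro k hk
      rw [Finset.mem_range] at hk
      have : ∀ j ∈ Finset.range (l + 1), cc s m k j * secCount2 s m (0 - k) (l - j) = 0 := by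
        intro j _; rw [cc_small (by omega), Nat.zero_mul]
      rw [Finset.sum_congr rfl this, Finset.sum_const_zero]
    rw [Finset.sum_congr rfl hz, Finset.sum_const_zero, sec0]
    by_cases hl : l = 0 <;> simp [hl]
  · obtain ⟨n', rfl⟩ : ∃ n', n = n' + 1 := ⟨n - 1, by omega⟩
    have hfib : secCount2 s m (n' + 1) l
        = ∑ k ∈ Finset.range (n' + 1 + 1),
            (((secFinset s m (n' + 1)).filter (fun P => P.card = l)).filter
              (fun P => pt P = k)).card := by
      rw [secCount2]
      apply Finset.card_eq_sum_card_fiberwise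
      intro P hP
      rcases Finset.mem_filter.1 hP with ⟨hPs, -⟩
      rw [Finset.mem_coe, Finset.mem_range]
      have := pt_le (mem_secFinset.1 hPs)
      omega
    rw [hfib]
    have hterm : ∀ k ∈ Finset.range (n' + 1 + 1),
        (((secFinset s m (n' + 1)).filter (fun P => P.card = l)).filter
            (fun P => pt P = k)).card
          = (if k = 0 then secCount2 s m n' l else 0)
            + ∑ j ∈ Finset.range (l + 1), cc s m k j * secCount2 s m (n' + 1 - k) (l - j) := by
      intro k hk
      rw [Finset.mem_range] at hk
      rw [Finset.filter_filter]
      rcases Nat.lt_or_ge k 2 with hk2 | hk2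
      · interval_cases k
        · rw [if_pos rfl, fiber0]
          have : ∀ j ∈ Finset.range (l + 1),
              cc s m 0 j * secCount2 s m (n' + 1 - 0) (l - j) = 0 := by
            intro j _; rw [cc_small (by omega), Nat.zero_mul]
          rw [Finset.sum_congr rfl this, Finset.sum_const_zero]
          omega
        · rw [if_neg (by omega)]
          have hemp : (secFinset s m (n' + 1)).filter (fun P => P.card = l ∧ pt P = 1) = ∅ := by
            apply Finset.eq_empty_of_forall_notMem
            intro P hP
            rcases Finset.mem_filter.1 hP with ⟨hPs, -, hpt⟩
            exact pt_ne_one (mem_secFinset.1 hPs) hpt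
          rw [hemp]
          have : ∀ j ∈ Finset.range (l + 1),
              cc s m 1 j * secCount2 s m (n' + 1 - 1) (l - j) = 0 := by
            intro j _; rw [cc_small (by omega), Nat.zero_mul]
          rw [Finset.sum_congr rfl this, Finset.sum_const_zero]
          simp
      · rw [if_neg (by omega), fiberk s m (n' + 1) l k hk2 (by omega), Nat.zero_add]
    rw [Finset.sum_congr rfl hterm, Finset.sum_add_distrib]
    rw [Finset.sum_ite_eq' (Finset.range (n' + 1 + 1)) 0 (fun _ => secCount2 s m n' l)]
    rw [if_pos (Finset.mem_range.2 (by omega))]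
    rw [if_neg (by omega), if_pos (by omega)]
    simp only [Nat.add_sub_cancel]
    omega

lemma not_mem_zero {s m k n y : ℕ} {P : Finset (ℕ × ℕ)} (h : IsSecOn s m k n P) :
    (0, y) ∉ P := by
  intro hc
  have := h.1 _ hc
  simp only at this
  omega

lemma secOn_wrap {s m n : ℕ} (hs : 1 ≤ s) {Q : Finset (ℕ × ℕ)}
    (hq : IsSecOn s m 0 n Q) (hqc : (1, n) ∈ Q) :
    IsSecOn s m 0 (n + 2) (insert (1, n + 2) (upP 1 Q))
      ∧ (s + 1, n + 2 - s) ∈ insert (1, n + 2) (upP 1 Q) := by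
  have hn2 : 2 ≤ n := by have := hq.1 _ hqc; simp only at this; omega
  have hu : IsSecOn s m 1 (n + 1) (upP 1 Q) := secOn_up_iff.2 hq
  have hub : ∀ p ∈ upP 1 Q, 2 ≤ p.1 ∧ p.1 < p.2 ∧ p.2 ≤ n + 1 := hu.1
  -- the stack of (1, n) in Q
  have htr : (0, n + 1) ∉ Q := not_mem_zero hq
  obtain ⟨t0, ht0, hall0⟩ := hq.2.2.2.2 (1, n) hqc (by simpa using htr)
  have hstk0 : ∀ a < s, (1 + a, n - a) ∈ Q := fun a ha => hall0 a (by omega)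
  have hmain : IsSecOn s m 0 (n + 2) (insert (1, n + 2) (upP 1 Q)) := by
    refine ⟨?_, ?_, ?_, ?_, ?_⟩
    · intro p hp
      rcases Finset.mem_insert.1 hp with rfl | hp
      · simp only; omega
      · have := hub p hp; omega
    · intro p hp q hq' hne
      rcases Finset.mem_insert.1 hp with rfl | hp <;>
        rcases Finset.mem_insert.1 hq' with rfl | hq'
      · exact absurd rfl hne
      · have := hub q hq'; simp only; omega
      · have := hub p hp; simp only; omega
      · exact hu.2.1 p hp q hq' hne
    · intro p hp q hq'
      rcases Finset.mem_insert.1 hp with rfl | hp <;>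
        rcases Finset.mem_insert.1 hq' with rfl | hq'
      · simp only; omega
      · have := hub q hq'; simp only; omega
      · have := hub p hp; simp only; omega
      · exact hu.2.2.1 p hp q hq'
    · intro p hp hint
      rcases Finset.mem_insert.1 hp with rfl | hp
      · exfalso
        refine hint 2 (by simp) (by simp; omega) ?_
        refine ⟨(2, n + 1), Finset.mem_insert_of_mem ?_, Or.inl rfl⟩
        exact mem_upP' (c := 1) (x := 1) (y := n) |>.2 hqc
      · refine hu.2.2.2.1 p hp fun x hx1 hx2 hpx => hint x hx1 hx2 ?_
        exact paired_mono (Finset.subset_insert _ _) hpx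
    · intro p hp htrig
      rcases Finset.mem_insert.1 hp with rfl | hp
      · refine ⟨s, le_rfl, fun a ha => ?_⟩
        rcases Nat.eq_zero_or_pos a with rfl | hapos
        · simpa using Finset.mem_insert_self _ _
        · have hmem := hstk0 (a - 1) (by omega)
          have hbq := hq.1 _ hmem
          simp only at hbq
          apply Finset.mem_insert_of_mem
          have e : ((1 : ℕ) + a, n + 2 - a) = ((1 + (a - 1)) + 1, (n - (a - 1)) + 1) := by
            simp only [Prod.mk.injEq]; omega
          simp only
          rw [e]
          exact up_mem (p := (1 + (a - 1), n - (a - 1))) hmem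
      · have hbp := hub p hp
        have htrig' : (p.1 - 1, p.2 + 1) ∉ upP 1 Q := fun hc =>
          htrig (Finset.mem_insert_of_mem hc)
        obtain ⟨t, ht, hall⟩ := hu.2.2.2.2 p hp htrig'
        exact ⟨t, ht, fun a ha => Finset.mem_insert_of_mem (hall a ha)⟩
  refine ⟨hmain, ?_⟩
  · have hmem := hstk0 (s - 1) (by omega)
    have hbq := hq.1 _ hmem
    simp only at hbq
    apply Finset.mem_insert_of_mem
    have e : ((s : ℕ) + 1, n + 2 - s) = ((1 + (s - 1)) + 1, (n - (s - 1)) + 1) := by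
      simp only [Prod.mk.injEq]; omega
    rw [e]
    exact up_mem (p := (1 + (s - 1), n - (s - 1))) hmem

/-- CL-A : closed structures with outer stack longer than `s` ↔ closed structures 2 shorter -/
lemma stripA (s m n l : ℕ) (hs : 1 ≤ s) :
    ((closedFinset s m (n + 2)).filter
        (fun P => P.card = l + 1 ∧ (s + 1, n + 2 - s) ∈ P)).card
      = cc s m n l := by
  rw [cc]
  apply Finset.card_bij' (fun P _ => downP 1 (P.erase (1, n + 2)))
    (fun Q _ => insert (1, n + 2) (upP 1 Q))
  · intro P hP
    rcases Finset.mem_filter.1 hP with ⟨hPc, hcard, hstk⟩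
    rcases mem_closedFinset.1 hPc with ⟨h, htop⟩
    -- (2, n+1) ∈ P
    have h2n : (2, n + 1) ∈ P := by
      rcases Nat.lt_or_ge s 2 with hs1 | hs2
      · have : s = 1 := by omega
        rw [this] at hstk
        have e : n + 2 - 1 = n + 1 := by omega
        rwa [e] at hstk
      · obtain ⟨t, ht, hall⟩ := h.2.2.2.2 (1, n + 2) htop (by simpa using not_mem_zero h)
        have := hall 1 (by omega)
        simpa using this
    have herase : ∀ p ∈ P.erase (1, n + 2), 2 ≤ p.1 ∧ p.1 < p.2 ∧ p.2 ≤ n + 1 := by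
      intro p hp
      rcases Finset.mem_erase.1 hp with ⟨hne, hpP⟩
      have hb := h.1 p hpP
      have hd := h.2.1 p hpP (1, n + 2) htop hne
      simp only at hd
      omega
    have hsec : IsSecOn s m 1 (n + 1) (P.erase (1, n + 2)) := by
      refine ⟨herase, ?_, ?_, ?_, ?_⟩
      · intro p hp q hq hne
        exact h.2.1 p (Finset.mem_of_mem_erase hp) q (Finset.mem_of_mem_erase hq) hne
      · intro p hp q hq
        exact h.2.2.1 p (Finset.mem_of_mem_erase hp) q (Finset.mem_of_mem_erase hq)
      · intro p hp hint
        have hbp := herase p hp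
        refine h.2.2.2.1 p (Finset.mem_of_mem_erase hp) fun x hx1 hx2 hpx => ?_
        refine hint x hx1 hx2 ?_
        rcases hpx with ⟨q, hq, he⟩
        refine ⟨q, Finset.mem_erase.2 ⟨?_, hq⟩, he⟩
        intro hc
        rw [hc] at he
        simp only at he
        omega
      · intro p hp htrig
        rcases Finset.mem_erase.1 hp with ⟨hne, hpP⟩
        have hbp := herase p hp
        by_cases hp2 : p = (2, n + 1)
        · subst hp2
          -- use stack of (1, n+2) together with hstk
          obtain ⟨t0, ht0, hall0⟩ := h.2.2.2.2 (1, n + 2) htop (by simpa using not_mem_zero h)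
          refine ⟨s, le_rfl, fun a ha => ?_⟩
          have hmem : (2 + a, n + 1 - a) ∈ P := by
            rcases Nat.lt_or_ge (a + 1) t0 with hlt | hge
            · have := hall0 (a + 1) hlt
              have e : ((2 : ℕ) + a, n + 1 - a) = (1 + (a + 1), n + 2 - (a + 1)) := by
                simp only [Prod.mk.injEq]; omega
              rwa [e]
            · have : a + 1 = s := by omega
              have e : ((2 : ℕ) + a, n + 1 - a) = (s + 1, n + 2 - s) := by
                simp only [Prod.mk.injEq]; omega
              rwa [e]
          refine Finset.mem_erase.2 ⟨?_, hmem⟩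
          simp only [ne_eq, Prod.mk.injEq]
          omega
        · have htrig' : (p.1 - 1, p.2 + 1) ∉ P := by
            intro hc
            apply htrig
            refine Finset.mem_erase.2 ⟨?_, hc⟩
            simp only [ne_eq, Prod.mk.injEq]
            intro ⟨e1, e2⟩
            apply hp2
            have : p = (2, n + 1) := by
              rcases p with ⟨x, y⟩
              simp only at e1 e2
              simp only [Prod.mk.injEq]
              omega
            exact this
          obtain ⟨t, ht, hall⟩ := h.2.2.2.2 p hpP htrig'
          refine ⟨t, ht, fun a ha => Finset.mem_erase.2 ⟨?_, hall a ha⟩⟩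
          simp only [ne_eq, Prod.mk.injEq]
          omega
    have hd := secOn_down (c := 1) le_rfl (by omega) hsec
    rw [Finset.mem_filter, mem_closedFinset]
    have hbnd : ∀ p ∈ P.erase (1, n + 2), 1 ≤ p.1 ∧ 1 ≤ p.2 := by
      intro p hp; have := herase p hp; omega
    refine ⟨⟨by simpa using hd.1, ?_⟩, ?_⟩
    · have h2n' : (2, n + 1) ∈ P.erase (1, n + 2) :=
        Finset.mem_erase.2 ⟨by simp only [ne_eq, Prod.mk.injEq]; omega, h2n⟩
      have : ((1 : ℕ), n) = (2 - 1, (n + 1) - 1) := by simp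
      rw [this]
      exact Finset.mem_image.2 ⟨(2, n + 1), h2n', rfl⟩
    · rw [card_downP hbnd, Finset.card_erase_of_mem htop, hcard]
      omega
  · intro Q hQ
    rcases Finset.mem_filter.1 hQ with ⟨hQc, hcard⟩
    rcases mem_closedFinset.1 hQc with ⟨hq, hqc⟩
    have hw := secOn_wrap hs hq hqc
    have hnotin : (1, n + 2) ∉ upP 1 Q := by
      intro hc
      rcases mem_upP.1 hc with ⟨p, hp, e1, e2⟩
      have := hq.1 p hp
      omega
    rw [Finset.mem_filter, mem_closedFinset]
    refine ⟨⟨hw.1, Finset.mem_insert_self _ _⟩, ?_, hw.2⟩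
    rw [Finset.card_insert_of_notMem hnotin, card_upP, hcard]
  · intro P hP
    rcases Finset.mem_filter.1 hP with ⟨hPc, hcard, hstk⟩
    rcases mem_closedFinset.1 hPc with ⟨h, htop⟩
    have hbnd : ∀ p ∈ P.erase (1, n + 2), 1 ≤ p.1 ∧ 1 ≤ p.2 := by
      intro p hp
      rcases Finset.mem_erase.1 hp with ⟨hne, hpP⟩
      have := h.1 p hpP
      omega
    rw [upP_downP hbnd, Finset.insert_erase htop]
  · intro Q hQ
    rcases Finset.mem_filter.1 hQ with ⟨hQc, hcard⟩
    rcases mem_closedFinset.1 hQc with ⟨hq, hqc⟩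
    have hnotin : (1, n + 2) ∉ upP 1 Q := by
      intro hc
      rcases mem_upP.1 hc with ⟨p, hp, e1, e2⟩
      have := hq.1 p hp
      omega
    rw [Finset.erase_insert hnotin, downP_upP]

/-- decomposition of a closed structure: the `s` outermost stack pairs are present and
everything else lives strictly inside them. -/
lemma closed_decomp {s m n : ℕ} {P : Finset (ℕ × ℕ)}
    (h : IsSecOn s m 0 n P) (htop : (1, n) ∈ P) :
    (∀ a < s, (1 + a, n - a) ∈ P) ∧
      ∀ p ∈ P, (∃ b < s, p = (1 + b, n - b)) ∨ (s + 1 ≤ p.1 ∧ p.2 ≤ n - s) := by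
  obtain ⟨t0, ht0, hall0⟩ := h.2.2.2.2 (1, n) htop (by simpa using not_mem_zero h)
  have hstk : ∀ a < s, (1 + a, n - a) ∈ P := fun a ha => hall0 a (by omega)
  refine ⟨hstk, ?_⟩
  have key : ∀ a, a ≤ s → ∀ p ∈ P, (∃ b < a, p = (1 + b, n - b)) ∨
      (a + 1 ≤ p.1 ∧ p.2 ≤ n - a) := by
    intro a
    induction a with
    | zero =>
      intro _ p hp
      right
      have := h.1 p hp
      omega
    | succ a ih =>
      intro hle p hp
      rcases ih (by omega) p hp with ⟨b, hb, rfl⟩ | ⟨h1, h2⟩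
      · exact Or.inl ⟨b, by omega, rfl⟩
      · by_cases hpe : p = (1 + a, n - a)
        · exact Or.inl ⟨a, by omega, hpe⟩
        · have hne := h.2.1 p hp _ (hstk a (by omega)) hpe
          have hbp := h.1 p hp
          have hbs := h.1 _ (hstk a (by omega))
          simp only at hne hbs
          right
          omega
  exact key s le_rfl

def stackF (s N : ℕ) : Finset (ℕ × ℕ) := (Finset.range s).image (fun a => (1 + a, N - a))

lemma mem_stackF {s N : ℕ} {p : ℕ × ℕ} :
    p ∈ stackF s N ↔ ∃ a < s, p = (1 + a, N - a) := by
  simp only [stackF, Finset.mem_image, Finset.mem_range]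
  constructor
  · rintro ⟨a, ha, rfl⟩
    exact ⟨a, ha, rfl⟩
  · rintro ⟨a, ha, rfl⟩
    exact ⟨a, ha, rfl⟩

lemma card_stackF {s N : ℕ} : (stackF s N).card = s := by
  rw [stackF, Finset.card_image_of_injective, Finset.card_range]
  intro a b hab
  simp only [Prod.mk.injEq] at hab
  omega

lemma stackF_bounds {s N : ℕ} (hsN : 2 * s ≤ N) {p : ℕ × ℕ} (hp : p ∈ stackF s N) :
    1 ≤ p.1 ∧ p.1 ≤ s ∧ N - s + 1 ≤ p.2 ∧ p.2 ≤ N ∧ p.1 + p.2 = N + 1 := by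
  rcases mem_stackF.1 hp with ⟨a, ha, rfl⟩
  simp only
  omega

/-- CL-B : closed structures with outer stack exactly `s` ↔ inner structures. -/
lemma stackB (s m : ℕ) (hs : 1 ≤ s) (r j : ℕ) :
    ((closedFinset s m (r + 2 * s)).filter
        (fun P => P.card = j + s ∧ (s + 1, r + s) ∉ P)).card
      = ((secFinset s m r).filter
          (fun Q => Q.card = j ∧ (1, r) ∉ Q ∧ (Q = ∅ → m ≤ r))).card := by
  have hsN : 2 * s ≤ r + 2 * s := by omega
  apply Finset.card_bij' (fun P _ => downP s (P.filter (fun p => s + 1 ≤ p.1)))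
    (fun Q _ => stackF s (r + 2 * s) ∪ upP s Q)
  -- forward map lands in target
  · intro P hP
    rcases Finset.mem_filter.1 hP with ⟨hPc, hcard, hns⟩
    rcases mem_closedFinset.1 hPc with ⟨h, htop⟩
    obtain ⟨hstk, hclaim⟩ := closed_decomp h htop
    set F := P.filter (fun p => s + 1 ≤ p.1) with hF
    have hFb : ∀ p ∈ F, s + 1 ≤ p.1 ∧ p.1 < p.2 ∧ p.2 ≤ r + s := by
      intro p hp
      rcases Finset.mem_filter.1 hp with ⟨hpP, hp1⟩
      have hbp := h.1 p hpP
      rcases hclaim p hpP with ⟨b, hb, rfl⟩ | ⟨h1, h2⟩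
      · simp only at hp1 ⊢; omega
      · omega
    have hQ0 : IsSecOn s m s (r + s) F := by
      refine ⟨hFb, ?_, ?_, ?_, ?_⟩
      · intro p hp q hq hne
        exact h.2.1 p (Finset.mem_filter.1 hp).1 q (Finset.mem_filter.1 hq).1 hne
      · intro p hp q hq
        exact h.2.2.1 p (Finset.mem_filter.1 hp).1 q (Finset.mem_filter.1 hq).1
      · intro p hp hint
        have hbp := hFb p hp
        refine h.2.2.2.1 p (Finset.mem_filter.1 hp).1 fun x hx1 hx2 hpx => ?_
        refine hint x hx1 hx2 ?_
        rcases hpx with ⟨q, hqP, he⟩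
        rcases hclaim q hqP with ⟨b, hb, rfl⟩ | ⟨h1, h2⟩
        · simp only at he
          exfalso
          omega
        · exact ⟨q, Finset.mem_filter.2 ⟨hqP, h1⟩, he⟩
      · intro p hp htrig
        rcases Finset.mem_filter.1 hp with ⟨hpP, hp1⟩
        have hbp := h.1 p hpP
        have htrig' : (p.1 - 1, p.2 + 1) ∉ P := by
          intro hc
          rcases hclaim _ hc with ⟨b, hb, he⟩ | ⟨h1, h2⟩
          · simp only [Prod.mk.injEq] at he
            have hpe : p = (s + 1, r + s) := by
              rcases p with ⟨x, y⟩
              simp only at hp1 hbp he ⊢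
              simp only [Prod.mk.injEq]
              omega
            rw [hpe] at hpP
            exact hns hpP
          · exact htrig (Finset.mem_filter.2 ⟨hc, by simp only at h1 ⊢; omega⟩)
        obtain ⟨t, ht, hall⟩ := h.2.2.2.2 p hpP htrig'
        refine ⟨t, ht, fun a ha => Finset.mem_filter.2 ⟨hall a ha, ?_⟩⟩
        simp only
        omega
    have hd := secOn_down (c := s) le_rfl (by omega) hQ0
    have hFneg : P.filter (fun p => ¬ (s + 1 ≤ p.1)) = stackF s (r + 2 * s) := by
      ext p
      rw [Finset.mem_filter, mem_stackF]
      constructor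
      · rintro ⟨hpP, hneg⟩
        rcases hclaim p hpP with ⟨b, hb, rfl⟩ | ⟨h1, h2⟩
        · exact ⟨b, hb, rfl⟩
        · omega
      · rintro ⟨a, ha, rfl⟩
        exact ⟨hstk a ha, by simp only; omega⟩
    have hFcard : F.card = j := by
      have := Finset.card_filter_add_card_filter_not (s := P) (p := fun p => s + 1 ≤ p.1)
      rw [hFneg, card_stackF, hcard] at this
      rw [← hF] at this
      omega
    rw [Finset.mem_filter, mem_secFinset]
    have hbndF : ∀ p ∈ F, s ≤ p.1 ∧ s ≤ p.2 := by
      intro p hp; have := hFb p hp; omega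
    refine ⟨by simpa using hd.1, by rw [card_downP hbndF, hFcard], ?_, ?_⟩
    · intro hc
      have : ((1 : ℕ) + s, r + s) ∈ upP s (downP s F) := by
        have := up_mem (c := s) (p := ((1 : ℕ), r)) hc
        simpa using this
      rw [hd.2] at this
      have : (s + 1, r + s) ∈ P := by
        have h' := Finset.mem_filter.1 this
        have e : ((s : ℕ) + 1, r + s) = (1 + s, r + s) := by simp [Nat.add_comm]
        rw [e]
        exact h'.1
      exact hns this
    · intro hemp
      have hFemp : F = ∅ := by
        have := hd.2
        rw [hemp] at this
        simpa [upP] using this.symm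
      have hpair := hstk (s - 1) (by omega)
      have hbs := h.1 _ hpair
      simp only at hbs
      have hm := h.2.2.2.1 _ hpair ?_
      · simp only at hm
        omega
      · intro x hx1 hx2 hpx
        simp only at hx1 hx2
        rcases hpx with ⟨q, hqP, he⟩
        rcases hclaim q hqP with ⟨b, hb, rfl⟩ | ⟨h1, h2⟩
        · simp only at he
          omega
        · have : q ∈ F := Finset.mem_filter.2 ⟨hqP, h1⟩
          rw [hFemp] at this
          simp at this
  -- inverse map lands in source
  · intro Q hQ
    rcases Finset.mem_filter.1 hQ with ⟨hQs, hqcard, hnc, hne⟩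
    have hq2 := mem_secFinset.1 hQs
    have hu : IsSecOn s m s (r + s) (upP s Q) := by
      have := secOn_up_iff (k := 0) (n := r) (c := s) (P := Q) |>.2 hq2
      simpa using this
    have hUb := hu.1
    have hSmem : ∀ a < s, (1 + a, r + 2 * s - a) ∈ stackF s (r + 2 * s) :=
      fun a ha => mem_stackF.2 ⟨a, ha, rfl⟩
    have hP : IsSecOn s m 0 (r + 2 * s) (stackF s (r + 2 * s) ∪ upP s Q) := by
      refine ⟨?_, ?_, ?_, ?_, ?_⟩
      · intro p hp
        rcases Finset.mem_union.1 hp with hp | hp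
        · have := stackF_bounds hsN hp; omega
        · have := hUb p hp; omega
      · intro p hp q hq hne
        rcases Finset.mem_union.1 hp with hp | hp <;> rcases Finset.mem_union.1 hq with hq | hq
        · rcases mem_stackF.1 hp with ⟨a, ha, rfl⟩
          rcases mem_stackF.1 hq with ⟨b, hb, rfl⟩
          have hab : a ≠ b := by
            intro e; rw [e] at hne; exact hne rfl
          simp only
          omega
        · have := stackF_bounds hsN hp; have := hUb q hq; omega
        · have := hUb p hp; have := stackF_bounds hsN hq; omega
        · exact hu.2.1 p hp q hq hne
      · intro p hp q hq
        rcases Finset.mem_union.1 hp with hp | hp <;> rcases Finset.mem_union.1 hq with hq | hq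
        · have := stackF_bounds hsN hp; have := stackF_bounds hsN hq; omega
        · have := stackF_bounds hsN hp; have := hUb q hq; omega
        · have := hUb p hp; have := stackF_bounds hsN hq; omega
        · exact hu.2.2.1 p hp q hq
      · intro p hp hint
        rcases Finset.mem_union.1 hp with hp | hp
        · rcases mem_stackF.1 hp with ⟨a, ha, rfl⟩
          by_cases hlast : a + 1 < s
          · exfalso
            refine hint (2 + a) (by simp only; omega) (by simp only; omega) ?_
            refine ⟨(1 + (a + 1), r + 2 * s - (a + 1)),
              Finset.mem_union_left _ (hSmem (a + 1) hlast), Or.inl (by simp only; omega)⟩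
          · have ha' : a = s - 1 := by omega
            rcases Q.eq_empty_or_nonempty with rfl | ⟨q0, hq0⟩
            · have := hne rfl
              simp only
              omega
            · exfalso
              have hbq0 := hq2.1 q0 hq0
              refine hint (q0.1 + s) (by simp only; omega) (by simp only; omega) ?_
              exact ⟨(q0.1 + s, q0.2 + s), Finset.mem_union_right _ (up_mem hq0), Or.inl rfl⟩
        · refine hu.2.2.2.1 p hp fun x hx1 hx2 hpx => hint x hx1 hx2 ?_
          exact paired_mono Finset.subset_union_right hpx
      · intro p hp htrig
        rcases Finset.mem_union.1 hp with hp | hp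
        · rcases mem_stackF.1 hp with ⟨a, ha, rfl⟩
          rcases Nat.eq_zero_or_pos a with rfl | hapos
          · refine ⟨s, le_rfl, fun b hb => ?_⟩
            have e : ((1 : ℕ) + 0 + b, (r + 2 * s - 0) - b) = (1 + b, r + 2 * s - b) := by
              simp only [Prod.mk.injEq, true_and, and_true]; omega
            rw [e]
            exact Finset.mem_union_left _ (hSmem b hb)
          · exfalso
            apply htrig
            have e : ((1 : ℕ) + a - 1, (r + 2 * s - a) + 1)
                = (1 + (a - 1), r + 2 * s - (a - 1)) := by
              simp only [Prod.mk.injEq]; omega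
            rw [e]
            exact Finset.mem_union_left _ (hSmem (a - 1) (by omega))
        · rcases mem_upP.1 hp with ⟨q, hqQ, e1, e2⟩
          have hbq := hq2.1 q hqQ
          have τQ : (q.1 - 1, q.2 + 1) ∉ Q := by
            intro hc
            apply htrig
            apply Finset.mem_union_right
            have e : (p.1 - 1, p.2 + 1) = ((q.1 - 1) + s, (q.2 + 1) + s) := by
              simp only [Prod.mk.injEq]; omega
            rw [e]
            exact up_mem hc
          obtain ⟨t, ht, hall⟩ := hq2.2.2.2.2 q hqQ τQ
          refine ⟨t, ht, fun b hb => ?_⟩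
          have hb' := hall b hb
          have hbb := hq2.1 _ hb'
          simp only at hbb
          apply Finset.mem_union_right
          have e : (p.1 + b, p.2 - b) = ((q.1 + b) + s, (q.2 - b) + s) := by
            simp only [Prod.mk.injEq]; omega
          rw [e]
          exact up_mem hb'
    have hdisj : Disjoint (stackF s (r + 2 * s)) (upP s Q) := by
      rw [Finset.disjoint_left]
      intro p hp hp'
      have := stackF_bounds hsN hp
      have := hUb p hp'
      omega
    rw [Finset.mem_filter, mem_closedFinset]
    refine ⟨⟨hP, ?_⟩, ?_, ?_⟩
    · have e : ((1 : ℕ), r + 2 * s) = (1 + 0, r + 2 * s - 0) := by simp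
      rw [e]
      exact Finset.mem_union_left _ (hSmem 0 (by omega))
    · rw [Finset.card_union_of_disjoint hdisj, card_stackF, card_upP, hqcard]
      omega
    · intro hc
      rcases Finset.mem_union.1 hc with hc | hc
      · have := stackF_bounds hsN hc
        simp only at this
        omega
      · have e : ((s : ℕ) + 1, r + s) = ((1 : ℕ) + s, r + s) := by simp [Nat.add_comm]
        rw [e] at hc
        exact hnc (mem_upP'.1 hc)
  -- left inverse
  · intro P hP
    rcases Finset.mem_filter.1 hP with ⟨hPc, hcard, hns⟩
    rcases mem_closedFinset.1 hPc with ⟨h, htop⟩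
    obtain ⟨hstk, hclaim⟩ := closed_decomp h htop
    have hbndF : ∀ p ∈ P.filter (fun p => s + 1 ≤ p.1), s ≤ p.1 ∧ s ≤ p.2 := by
      intro p hp
      rcases Finset.mem_filter.1 hp with ⟨hpP, hp1⟩
      have := h.1 p hpP
      omega
    rw [upP_downP hbndF]
    ext p
    rw [Finset.mem_union, mem_stackF, Finset.mem_filter]
    constructor
    · rintro (⟨a, ha, rfl⟩ | ⟨hpP, -⟩)
      · exact hstk a ha
      · exact hpP
    · intro hpP
      rcases hclaim p hpP with ⟨b, hb, rfl⟩ | ⟨h1, h2⟩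
      · exact Or.inl ⟨b, hb, rfl⟩
      · exact Or.inr ⟨hpP, h1⟩
  -- right inverse
  · intro Q hQ
    rcases Finset.mem_filter.1 hQ with ⟨hQs, hqcard, hnc, hne⟩
    have hq2 := mem_secFinset.1 hQs
    have e1 : (stackF s (r + 2 * s) ∪ upP s Q).filter (fun p => s + 1 ≤ p.1) = upP s Q := by
      rw [Finset.filter_union]
      have ea : (stackF s (r + 2 * s)).filter (fun p => s + 1 ≤ p.1) = ∅ := by
        apply Finset.filter_false_of_mem
        intro p hp
        have := stackF_bounds hsN hp
        omega
      have eb : (upP s Q).filter (fun p => s + 1 ≤ p.1) = upP s Q := by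
        apply Finset.filter_true_of_mem
        intro p hp
        rcases mem_upP.1 hp with ⟨q, hq, e1, e2⟩
        have := hq2.1 q hq
        omega
      rw [ea, eb, Finset.empty_union]
    rw [e1, downP_upP]

/-- counting inner structures -/
lemma inner_count (s m r j : ℕ) :
    secCount2 s m r j
      = ((secFinset s m r).filter
            (fun Q => Q.card = j ∧ (1, r) ∉ Q ∧ (Q = ∅ → m ≤ r))).card
        + cc s m r j
        + (if j = 0 ∧ r < m then 1 else 0) := by
  classical
  set A := (secFinset s m r).filter (fun Q => Q.card = j) with hA
  have h1 : secCount2 s m r j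
      = (A.filter (fun Q => (1, r) ∈ Q)).card + (A.filter (fun Q => (1, r) ∉ Q)).card := by
    rw [secCount2, ← hA]
    exact (Finset.card_filter_add_card_filter_not (fun Q => (1, r) ∈ Q)).symm
  have h2 : (A.filter (fun Q => (1, r) ∈ Q)).card = cc s m r j := by
    rw [cc, closedFinset, hA, Finset.filter_comm]
  have h3 : (A.filter (fun Q => (1, r) ∉ Q)).card
      = ((A.filter (fun Q => (1, r) ∉ Q)).filter (fun Q => Q = ∅ → m ≤ r)).card
        + ((A.filter (fun Q => (1, r) ∉ Q)).filter (fun Q => ¬(Q = ∅ → m ≤ r))).card :=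
    (Finset.card_filter_add_card_filter_not (fun Q => Q = ∅ → m ≤ r)).symm
  have h4 : (A.filter (fun Q => (1, r) ∉ Q)).filter (fun Q => Q = ∅ → m ≤ r)
      = (secFinset s m r).filter (fun Q => Q.card = j ∧ (1, r) ∉ Q ∧ (Q = ∅ → m ≤ r)) := by
    rw [hA, Finset.filter_filter, Finset.filter_filter]
  have h5 : ((A.filter (fun Q => (1, r) ∉ Q)).filter (fun Q => ¬(Q = ∅ → m ≤ r))).card
      = (if j = 0 ∧ r < m then 1 else 0) := by
    by_cases hc : j = 0 ∧ r < m
    · rw [if_pos hc]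
      have : (A.filter (fun Q => (1, r) ∉ Q)).filter (fun Q => ¬(Q = ∅ → m ≤ r))
          = {∅} := by
        apply Finset.eq_singleton_iff_unique_mem.2
        constructor
        · rw [Finset.mem_filter, Finset.mem_filter, hA, Finset.mem_filter]
          refine ⟨⟨⟨mem_secFinset.2 (secOn_empty s m 0 r), by simp [hc.1]⟩, by simp⟩, ?_⟩
          intro himp
          have := himp rfl
          omega
        · intro Q hQ
          rw [Finset.mem_filter] at hQ
          by_contra hne
          exact hQ.2 (fun he => absurd he hne)
      rw [this, Finset.card_singleton]
    · rw [if_neg hc]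
      rw [Finset.card_eq_zero]
      apply Finset.eq_empty_of_forall_notMem
      intro Q hQ
      rw [Finset.mem_filter, Finset.mem_filter, hA, Finset.mem_filter] at hQ
      have hQe : Q = ∅ := by
        by_contra hne
        exact hQ.2 (fun he => absurd he hne)
      have hmr : ¬ m ≤ r := fun hle => hQ.2 (fun _ => hle)
      apply hc
      rw [hQe] at hQ
      simp only [Finset.card_empty] at hQ
      exact ⟨hQ.1.1.2.symm ▸ rfl, by omega⟩
  rw [h4] at h3
  omega

lemma Afib_eval (s m : ℕ) (hs : 1 ≤ s) (n l : ℕ) :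
    ((closedFinset s m n).filter (fun P => P.card = l ∧ (s + 1, n - s) ∈ P)).card
      = if 2 ≤ n ∧ 1 ≤ l then cc s m (n - 2) (l - 1) else 0 := by
  by_cases hc : 2 ≤ n ∧ 1 ≤ l
  · rw [if_pos hc]
    obtain ⟨n', rfl⟩ : ∃ n', n = n' + 2 := ⟨n - 2, by omega⟩
    obtain ⟨l', rfl⟩ : ∃ l', l = l' + 1 := ⟨l - 1, by omega⟩
    have := stripA s m n' l' hs
    simp only [Nat.add_sub_cancel]
    exact this
  · rw [if_neg hc]
    rw [Finset.card_eq_zero]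
    apply Finset.eq_empty_of_forall_notMem
    intro P hP
    rcases Finset.mem_filter.1 hP with ⟨hPc, hcard, -⟩
    rcases mem_closedFinset.1 hPc with ⟨h, htop⟩
    have hb := h.1 _ htop
    simp only at hb
    have hpos : 0 < P.card := Finset.card_pos.2 ⟨_, htop⟩
    exact hc ⟨by omega, by omega⟩

lemma Bfib_eval (s m : ℕ) (hs : 1 ≤ s) (n l : ℕ) :
    ((closedFinset s m n).filter (fun P => P.card = l ∧ (s + 1, n - s) ∉ P)).card
      = if 2 * s ≤ n ∧ s ≤ l then
          ((secFinset s m (n - 2 * s)).filter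
            (fun Q => Q.card = l - s ∧ (1, n - 2 * s) ∉ Q ∧ (Q = ∅ → m ≤ n - 2 * s))).card
        else 0 := by
  by_cases hc : 2 * s ≤ n ∧ s ≤ l
  · rw [if_pos hc]
    obtain ⟨r, rfl⟩ : ∃ r, n = r + 2 * s := ⟨n - 2 * s, by omega⟩
    obtain ⟨j, rfl⟩ : ∃ j, l = j + s := ⟨l - s, by omega⟩
    have := stackB s m hs r j
    simp only [Nat.add_sub_cancel]
    have e : r + 2 * s - s = r + s := by omega
    rw [e]
    exact this
  · rw [if_neg hc]
    rw [Finset.card_eq_zero]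
    apply Finset.eq_empty_of_forall_notMem
    intro P hP
    rcases Finset.mem_filter.1 hP with ⟨hPc, hcard, -⟩
    rcases mem_closedFinset.1 hPc with ⟨h, htop⟩
    obtain ⟨hstk, -⟩ := closed_decomp h htop
    have hsub : stackF s n ⊆ P := by
      intro p hp
      rcases mem_stackF.1 hp with ⟨a, ha, rfl⟩
      exact hstk a ha
    have hcards : s ≤ P.card := by
      have := Finset.card_le_card hsub
      rwa [card_stackF] at this
    have hlast := h.1 _ (hstk (s - 1) (by omega))
    simp only at hlast
    exact hc ⟨by omega, by omega⟩

/-- E2 : the recurrence for closed structures, additive form -/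
lemma E2 (s m : ℕ) (hs : 1 ≤ s) (n l : ℕ) :
    cc s m n l
      + (if 2 * s ≤ n ∧ s ≤ l then
          cc s m (n - 2 * s) (l - s)
            + (if l - s = 0 ∧ n - 2 * s < m then 1 else 0) else 0)
      = (if 2 ≤ n ∧ 1 ≤ l then cc s m (n - 2) (l - 1) else 0)
        + (if 2 * s ≤ n ∧ s ≤ l then secCount2 s m (n - 2 * s) (l - s) else 0) := by
  classical
  have hsplit : cc s m n l
      = ((closedFinset s m n).filter (fun P => P.card = l ∧ (s + 1, n - s) ∈ P)).card
        + ((closedFinset s m n).filter (fun P => P.card = l ∧ (s + 1, n - s) ∉ P)).card := by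
    rw [cc]
    have := Finset.card_filter_add_card_filter_not
      (s := (closedFinset s m n).filter (fun P => P.card = l))
      (p := fun P => (s + 1, n - s) ∈ P)
    rw [Finset.filter_filter, Finset.filter_filter] at this
    exact this.symm
  rw [hsplit, Afib_eval s m hs, Bfib_eval s m hs]
  by_cases hc : 2 * s ≤ n ∧ s ≤ l
  · rw [if_pos hc, if_pos hc, if_pos hc]
    have := inner_count s m (n - 2 * s) (l - s)
    omega
  · rw [if_neg hc, if_neg hc, if_neg hc]

/-! ### Power series -/

noncomputable def Cgf (s m : ℕ) : MvPowerSeries (Fin 2) ℚ :=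
  fun d => (cc s m (d 0) (d 1) : ℚ)

lemma coeff_Rgf (s m : ℕ) (d : Fin 2 →₀ ℕ) :
    MvPowerSeries.coeff d (Rgf2 s m) = (secCount2 s m (d 0) (d 1) : ℚ) := rfl

lemma coeff_Cgf (s m : ℕ) (d : Fin 2 →₀ ℕ) :
    MvPowerSeries.coeff d (Cgf s m) = (cc s m (d 0) (d 1) : ℚ) := rfl

/-- the finsupp with value a at 0 and b at 1 -/
noncomputable def fp (a b : ℕ) : Fin 2 →₀ ℕ := Finsupp.single 0 a + Finsupp.single 1 b

lemma fp_apply0 (a b : ℕ) : fp a b 0 = a := by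
  simp [fp, Finsupp.single_apply]

lemma fp_apply1 (a b : ℕ) : fp a b 1 = b := by
  simp [fp, Finsupp.single_apply]

lemma eq_fp (d : Fin 2 →₀ ℕ) : d = fp (d 0) (d 1) := by
  ext x
  fin_cases x
  · exact (fp_apply0 (d 0) (d 1)).symm
  · exact (fp_apply1 (d 0) (d 1)).symm

lemma fp_zero_snd (a : ℕ) : fp a 0 = Finsupp.single (0 : Fin 2) a := by
  simp [fp]

lemma fp_le_iff (a b : ℕ) (d : Fin 2 →₀ ℕ) : fp a b ≤ d ↔ a ≤ d 0 ∧ b ≤ d 1 := by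
  rw [Finsupp.le_def]
  constructor
  · intro h
    exact ⟨by simpa [fp_apply0] using h 0, by simpa [fp_apply1] using h 1⟩
  · intro ⟨h1, h2⟩ x
    fin_cases x
    · simpa [fp_apply0] using h1
    · simpa [fp_apply1] using h2

lemma sub_fp_apply0 (a b : ℕ) (d : Fin 2 →₀ ℕ) : (d - fp a b) 0 = d 0 - a := by
  rw [Finsupp.tsub_apply, fp_apply0]

lemma sub_fp_apply1 (a b : ℕ) (d : Fin 2 →₀ ℕ) : (d - fp a b) 1 = d 1 - b := by
  rw [Finsupp.tsub_apply, fp_apply1]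

lemma fp_eq_iff (a b : ℕ) (d : Fin 2 →₀ ℕ) : fp a b = d ↔ a = d 0 ∧ b = d 1 := by
  constructor
  · rintro rfl
    rw [fp_apply0, fp_apply1]
    exact ⟨rfl, rfl⟩
  · rintro ⟨h1, h2⟩
    rw [eq_fp d, ← h1, ← h2]

lemma fp_zero_iff (d : Fin 2 →₀ ℕ) : d = 0 ↔ d 0 = 0 ∧ d 1 = 0 := by
  constructor
  · rintro rfl; exact ⟨rfl, rfl⟩
  · rintro ⟨h1, h2⟩
    rw [eq_fp d, h1, h2]
    simp [fp]

lemma X_prod_eq (s : ℕ) (a b : ℕ) :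
    (MvPowerSeries.X 0 : MvPowerSeries (Fin 2) ℚ) ^ a * MvPowerSeries.X 1 ^ b
      = MvPowerSeries.monomial (fp a b) 1 := by
  rw [MvPowerSeries.X_pow_eq, MvPowerSeries.X_pow_eq, MvPowerSeries.monomial_mul_monomial,
    one_mul, fp]

lemma coeff_mono_mul (e : Fin 2 →₀ ℕ) (φ : MvPowerSeries (Fin 2) ℚ) (d : Fin 2 →₀ ℕ) :
    MvPowerSeries.coeff d (MvPowerSeries.monomial e 1 * φ)
      = if e ≤ d then MvPowerSeries.coeff (d - e) φ else 0 := by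
  rw [MvPowerSeries.coeff_monomial_mul]
  by_cases h : e ≤ d
  · rw [if_pos h, if_pos h, one_mul]
  · rw [if_neg h, if_neg h]

/-- coefficient of `T_m` -/
lemma coeff_T (m : ℕ) (d : Fin 2 →₀ ℕ) :
    MvPowerSeries.coeff d
        (∑ j ∈ Finset.range m, (MvPowerSeries.X 0 : MvPowerSeries (Fin 2) ℚ) ^ j)
      = if d 1 = 0 ∧ d 0 < m then 1 else 0 := by
  rw [map_sum]
  have hterm : ∀ j ∈ Finset.range m,
      MvPowerSeries.coeff d ((MvPowerSeries.X 0 : MvPowerSeries (Fin 2) ℚ) ^ j)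
        = if d 1 = 0 ∧ j = d 0 then 1 else 0 := by
    intro j _
    rw [MvPowerSeries.X_pow_eq, MvPowerSeries.coeff_monomial]
    have hs : Finsupp.single (0 : Fin 2) j = d ↔ j = d 0 ∧ 0 = d 1 := by
      rw [← fp_zero_snd, fp_eq_iff]
    by_cases hc : Finsupp.single (0 : Fin 2) j = d
    · rw [if_pos hc.symm]
      rcases hs.1 hc with ⟨h2, h1⟩
      rw [if_pos ⟨h1.symm, h2⟩]
    · rw [if_neg (fun hh => hc hh.symm), if_neg]
      rintro ⟨h1, h2⟩
      exact hc (hs.2 ⟨h2, h1.symm⟩)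
  rw [Finset.sum_congr rfl hterm]
  by_cases h1 : d 1 = 0
  · simp only [h1, true_and]
    rw [Finset.sum_ite_eq' (Finset.range m) (d 0) (fun _ => (1 : ℚ))]
    by_cases h2 : d 0 < m
    · rw [if_pos (Finset.mem_range.2 h2), if_pos h2]
    · rw [if_neg (fun hc => h2 (Finset.mem_range.1 hc)), if_neg h2]
  · simp only [h1, false_and, if_false]
    exact Finset.sum_const_zero

lemma antidiag_sum (d : Fin 2 →₀ ℕ) (F : ℕ → ℕ → ℕ → ℕ → ℚ) :
    ∑ p ∈ Finset.HasAntidiagonal.antidiagonal d, F (p.1 0) (p.1 1) (p.2 0) (p.2 1)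
      = ∑ k ∈ Finset.range (d 0 + 1), ∑ j ∈ Finset.range (d 1 + 1),
          F k j (d 0 - k) (d 1 - j) := by
  rw [← Finset.sum_product']
  apply Finset.sum_nbij' (i := fun p => (p.1 0, p.1 1))
    (j := fun x => (fp x.1 x.2, fp (d 0 - x.1) (d 1 - x.2)))
  · intro p hp
    rw [Finset.HasAntidiagonal.mem_antidiagonal] at hp
    have h0 : p.1 0 + p.2 0 = d 0 := by rw [← Finsupp.add_apply, hp]
    have h1 : p.1 1 + p.2 1 = d 1 := by rw [← Finsupp.add_apply, hp]
    rw [Finset.mem_product, Finset.mem_range, Finset.mem_range]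
    omega
  · intro x hx
    rw [Finset.mem_product, Finset.mem_range, Finset.mem_range] at hx
    rw [Finset.HasAntidiagonal.mem_antidiagonal]
    ext i
    fin_cases i
    · show (fp x.1 x.2) 0 + (fp (d 0 - x.1) (d 1 - x.2)) 0 = d 0
      rw [fp_apply0, fp_apply0]
      omega
    · show (fp x.1 x.2) 1 + (fp (d 0 - x.1) (d 1 - x.2)) 1 = d 1
      rw [fp_apply1, fp_apply1]
      omega
  · intro p hp
    rw [Finset.HasAntidiagonal.mem_antidiagonal] at hp
    have h0 : p.1 0 + p.2 0 = d 0 := by rw [← Finsupp.add_apply, hp]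
    have h1 : p.1 1 + p.2 1 = d 1 := by rw [← Finsupp.add_apply, hp]
    have e1 : fp (p.1 0) (p.1 1) = p.1 := (eq_fp p.1).symm
    have e2 : fp (d 0 - p.1 0) (d 1 - p.1 1) = p.2 := by
      rw [show d 0 - p.1 0 = p.2 0 by omega, show d 1 - p.1 1 = p.2 1 by omega]
      exact (eq_fp p.2).symm
    rw [e1, e2]
  · intro x hx
    simp only
    rw [fp_apply0, fp_apply1]
  · intro p hp
    rw [Finset.HasAntidiagonal.mem_antidiagonal] at hp
    have h0 : p.1 0 + p.2 0 = d 0 := by rw [← Finsupp.add_apply, hp]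
    have h1 : p.1 1 + p.2 1 = d 1 := by rw [← Finsupp.add_apply, hp]
    simp only
    rw [show d 0 - p.1 0 = p.2 0 by omega, show d 1 - p.1 1 = p.2 1 by omega]

lemma X0_eq : (MvPowerSeries.X 0 : MvPowerSeries (Fin 2) ℚ)
    = MvPowerSeries.monomial (fp 1 0) 1 := by
  rw [← X_prod_eq 0 1 0, pow_one, pow_zero, mul_one]

lemma EqI (s m : ℕ) :
    Rgf2 s m = 1 + MvPowerSeries.X 0 * Rgf2 s m + Cgf s m * Rgf2 s m := by
  apply MvPowerSeries.ext
  intro d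
  have hone : MvPowerSeries.coeff d (1 : MvPowerSeries (Fin 2) ℚ)
      = if d 0 = 0 ∧ d 1 = 0 then 1 else 0 := by
    rw [MvPowerSeries.coeff_one]
    by_cases hc : d = 0
    · rw [if_pos hc, if_pos ((fp_zero_iff d).1 hc)]
    · rw [if_neg hc, if_neg (fun h => hc ((fp_zero_iff d).2 h))]
  have hxr : MvPowerSeries.coeff d (MvPowerSeries.X 0 * Rgf2 s m)
      = if 1 ≤ d 0 then (secCount2 s m (d 0 - 1) (d 1) : ℚ) else 0 := by
    rw [X0_eq, coeff_mono_mul]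
    by_cases hc : 1 ≤ d 0
    · rw [if_pos ((fp_le_iff 1 0 d).2 ⟨hc, by omega⟩), if_pos hc, coeff_Rgf,
        sub_fp_apply0, sub_fp_apply1, Nat.sub_zero]
    · rw [if_neg (fun h => hc ((fp_le_iff 1 0 d).1 h).1), if_neg hc]
  have hcr : MvPowerSeries.coeff d (Cgf s m * Rgf2 s m)
      = ∑ k ∈ Finset.range (d 0 + 1), ∑ j ∈ Finset.range (d 1 + 1),
          (cc s m k j : ℚ) * (secCount2 s m (d 0 - k) (d 1 - j) : ℚ) := by
    rw [MvPowerSeries.coeff_mul]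
    rw [Finset.sum_congr rfl (fun p _ => by rw [coeff_Cgf, coeff_Rgf])]
    exact antidiag_sum d (fun a b c e => (cc s m a b : ℚ) * (secCount2 s m c e : ℚ))
  rw [map_add, map_add, hone, hxr, hcr, coeff_Rgf]
  have e1 := E1 s m (d 0) (d 1)
  have e1q : (secCount2 s m (d 0) (d 1) : ℚ)
      = ((if d 0 = 0 ∧ d 1 = 0 then 1 else 0)
          + (if 1 ≤ d 0 then secCount2 s m (d 0 - 1) (d 1) else 0)
          + ∑ k ∈ Finset.range (d 0 + 1), ∑ j ∈ Finset.range (d 1 + 1),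
              cc s m k j * secCount2 s m (d 0 - k) (d 1 - j) : ℕ) := by
    exact_mod_cast congrArg (fun x : ℕ => (x : ℚ)) e1
  push_cast at e1q
  convert e1q using 2

lemma EqII (s m : ℕ) (hs : 1 ≤ s) :
    Cgf s m
      = MvPowerSeries.X 0 ^ 2 * MvPowerSeries.X 1 * Cgf s m
        + MvPowerSeries.X 0 ^ (2 * s) * MvPowerSeries.X 1 ^ s
            * (Rgf2 s m - Cgf s m
                - ∑ j ∈ Finset.range m, (MvPowerSeries.X 0 : MvPowerSeries (Fin 2) ℚ) ^ j) := by
  apply MvPowerSeries.ext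
  intro d
  have hb : (MvPowerSeries.X 0 : MvPowerSeries (Fin 2) ℚ) ^ 2 * MvPowerSeries.X 1
      = MvPowerSeries.monomial (fp 2 1) 1 := by
    rw [← X_prod_eq 0 2 1, pow_one]
  have hbc : MvPowerSeries.coeff d
      (MvPowerSeries.X 0 ^ 2 * MvPowerSeries.X 1 * Cgf s m)
      = if 2 ≤ d 0 ∧ 1 ≤ d 1 then (cc s m (d 0 - 2) (d 1 - 1) : ℚ) else 0 := by
    rw [hb, coeff_mono_mul]
    by_cases hc : 2 ≤ d 0 ∧ 1 ≤ d 1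
    · rw [if_pos ((fp_le_iff 2 1 d).2 hc), if_pos hc, coeff_Cgf,
        sub_fp_apply0, sub_fp_apply1]
    · rw [if_neg (fun h => hc ((fp_le_iff 2 1 d).1 h)), if_neg hc]
  have huc : MvPowerSeries.coeff d
      (MvPowerSeries.X 0 ^ (2 * s) * MvPowerSeries.X 1 ^ s
        * (Rgf2 s m - Cgf s m
            - ∑ j ∈ Finset.range m, (MvPowerSeries.X 0 : MvPowerSeries (Fin 2) ℚ) ^ j))
      = if 2 * s ≤ d 0 ∧ s ≤ d 1 then
          ((secCount2 s m (d 0 - 2 * s) (d 1 - s) : ℚ)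
            - (cc s m (d 0 - 2 * s) (d 1 - s) : ℚ)
            - if d 1 - s = 0 ∧ d 0 - 2 * s < m then 1 else 0)
        else 0 := by
    rw [X_prod_eq 0 (2 * s) s, coeff_mono_mul]
    by_cases hc : 2 * s ≤ d 0 ∧ s ≤ d 1
    · rw [if_pos ((fp_le_iff (2 * s) s d).2 hc), if_pos hc, map_sub, map_sub,
        coeff_Rgf, coeff_Cgf, coeff_T, sub_fp_apply0, sub_fp_apply1]
    · rw [if_neg (fun h => hc ((fp_le_iff (2 * s) s d).1 h)), if_neg hc]
  rw [map_add, hbc, huc, coeff_Cgf]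
  have e2 := E2 s m hs (d 0) (d 1)
  by_cases c2 : 2 * s ≤ d 0 ∧ s ≤ d 1
  · rw [if_pos c2, if_pos c2] at e2
    rw [if_pos c2]
    have e2q : (cc s m (d 0) (d 1) : ℚ)
        + ((cc s m (d 0 - 2 * s) (d 1 - s) : ℚ)
            + if d 1 - s = 0 ∧ d 0 - 2 * s < m then 1 else 0)
        = (if 2 ≤ d 0 ∧ 1 ≤ d 1 then (cc s m (d 0 - 2) (d 1 - 1) : ℚ) else 0)
          + (secCount2 s m (d 0 - 2 * s) (d 1 - s) : ℚ) := by
      exact_mod_cast congrArg (fun x : ℕ => (x : ℚ)) e2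
    linarith [e2q]
  · rw [if_neg c2, if_neg c2] at e2
    rw [if_neg c2]
    have e2q : (cc s m (d 0) (d 1) : ℚ) + 0
        = (if 2 ≤ d 0 ∧ 1 ≤ d 1 then (cc s m (d 0 - 2) (d 1 - 1) : ℚ) else 0) + 0 := by
      exact_mod_cast congrArg (fun x : ℕ => (x : ℚ)) e2
    linarith [e2q]

theorem stmt6 (s m : ℕ) (hs : 1 ≤ s) (hm : 1 ≤ m) :
    (MvPowerSeries.X 0 : MvPowerSeries (Fin 2) ℚ) ^ (2 * s) * MvPowerSeries.X 1 ^ s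
        * Rgf2 s m ^ 2
      - ((1 - MvPowerSeries.X 0)
            * (1 - MvPowerSeries.X 0 ^ 2 * MvPowerSeries.X 1
                + MvPowerSeries.X 0 ^ (2 * s) * MvPowerSeries.X 1 ^ s)
          + MvPowerSeries.X 0 ^ (2 * s) * MvPowerSeries.X 1 ^ s
            * ∑ j ∈ Finset.range m, (MvPowerSeries.X 0 : MvPowerSeries (Fin 2) ℚ) ^ j)
        * Rgf2 s m
      + (1 - MvPowerSeries.X 0 ^ 2 * MvPowerSeries.X 1
          + MvPowerSeries.X 0 ^ (2 * s) * MvPowerSeries.X 1 ^ s) = 0 := by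
  linear_combination
    (-(1 - MvPowerSeries.X 0 ^ 2 * MvPowerSeries.X 1
        + MvPowerSeries.X 0 ^ (2 * s) * MvPowerSeries.X 1 ^ s)) * EqI s m
    - Rgf2 s m * EqII s m hs
end

section
/- In ℚ[[z,w,u]] the trivariate generating function R(z,w,u) satisfies (1−z)·z^{2s}w^s·R(z,w,u)² − [(1−z)²(1−z²w+z^{2s}w^s) + z^{2s}w^s(1−uz^m)]·R(z,w,u) + (1−z)(1 − z²w + z^{2s}w^s) = 0; equivalently, R(z,w,u) satisfies the quadratic z^{2s}w^sR² − [(1−z)(1−z²w+z^{2s}w^s) + z^{2s}w^sT_m(z,u)]R + (1−z²w+z^{2s}w^s) = 0 with T_m(z,u) = (1 − uz^m)/(1 − z). -/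
open scoped Classical

/-- A hairpin of `P`: a pair with no paired index strictly inside it. -/
def IsHairpin (P : Finset (ℕ × ℕ)) (p : ℕ × ℕ) : Prop :=
  p ∈ P ∧ ∀ x, p.1 < x → x < p.2 → ¬Paired P x

/-- Number of hairpins of `P`. -/
noncomputable def numHairpins (P : Finset (ℕ × ℕ)) : ℕ :=
  (P.filter (IsHairpin P)).card

/-- `r_{n,l,k}`: number of secondary structures of length `n` with exactly `l` pairs
and exactly `k` hairpins. -/
noncomputable def secCount3 (s m n l k : ℕ) : ℕ :=
  ((secFinset s m n).filter (fun P => P.card = l ∧ numHairpins P = k)).card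

/-- Trivariate generating function `R(z,w,u) = ∑ r_{n,l,k} z^n w^l u^k` in `ℚ[[z,w,u]]`. -/
noncomputable def Rgf3 (s m : ℕ) : MvPowerSeries (Fin 3) ℚ :=
  fun d => (secCount3 s m (d 0) (d 1) (d 2) : ℚ)

namespace SecProof
open Finset

lemma mem_secFinset {s m n : ℕ} {P : Finset (ℕ × ℕ)} :
    P ∈ secFinset s m n ↔ IsSecStruct s m n P := by
  constructor
  · intro h; exact (Finset.mem_filter.1 h).2
  · intro h
    refine Finset.mem_filter.2 ⟨Finset.mem_powerset.2 ?_, h⟩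
    intro p hp
    obtain ⟨h1, h2, h3⟩ := h.1.1 p hp
    simp only [Finset.mem_product, Finset.mem_range]
    omega

def shiftP (c : ℕ) (P : Finset (ℕ × ℕ)) : Finset (ℕ × ℕ) :=
  P.image fun q => (q.1 + c, q.2 + c)

lemma shift_inj (c : ℕ) : Function.Injective (fun q : ℕ × ℕ => (q.1 + c, q.2 + c)) := by
  intro p q h
  simp only [Prod.ext_iff] at h ⊢
  omega

lemma mem_shiftP {c : ℕ} {P : Finset (ℕ × ℕ)} {x : ℕ × ℕ} :
    x ∈ shiftP c P ↔ ∃ q ∈ P, q.1 + c = x.1 ∧ q.2 + c = x.2 := by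
  simp [shiftP, Prod.ext_iff]

lemma card_shiftP (c : ℕ) (P : Finset (ℕ × ℕ)) : (shiftP c P).card = P.card :=
  Finset.card_image_of_injective _ (shift_inj c)

lemma shiftP_injective (c : ℕ) : Function.Injective (shiftP c) :=
  fun _ _ h => Finset.image_injective (shift_inj c) h

/-- bounds predicate -/
def Bnd (n : ℕ) (P : Finset (ℕ × ℕ)) : Prop := ∀ p ∈ P, 1 ≤ p.1 ∧ p.1 < p.2 ∧ p.2 ≤ n

lemma paired_shiftP {c : ℕ} {P : Finset (ℕ × ℕ)} {x : ℕ} :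
    Paired (shiftP c P) x ↔ ∃ y, y + c = x ∧ Paired P y := by
  constructor
  · rintro ⟨p, hp, h⟩
    rw [mem_shiftP] at hp
    obtain ⟨q, hq, h1, h2⟩ := hp
    rcases h with h | h
    · exact ⟨q.1, by omega, q, hq, Or.inl rfl⟩
    · exact ⟨q.2, by omega, q, hq, Or.inr rfl⟩
  · rintro ⟨y, hyx, q, hq, h⟩
    refine ⟨(q.1 + c, q.2 + c), mem_shiftP.2 ⟨q, hq, rfl, rfl⟩, ?_⟩
    rcases h with h | h
    · exact Or.inl (by simp; omega)
    · exact Or.inr (by simp; omega)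

lemma paired_le {a : ℕ} {P : Finset (ℕ × ℕ)} (hB : Bnd a P) {x : ℕ} (h : Paired P x) :
    1 ≤ x ∧ x ≤ a := by
  obtain ⟨p, hp, h⟩ := h
  have := hB p hp
  omega


section Union
variable {s m a b : ℕ} {P1 Q : Finset (ℕ × ℕ)}

lemma mem_left_bnd (h1 : Bnd a P1) {p : ℕ × ℕ} (hp : p ∈ P1) :
    1 ≤ p.1 ∧ p.1 < p.2 ∧ p.2 ≤ a := h1 p hp

lemma mem_right_bnd (hQ : Bnd b Q) {p : ℕ × ℕ} (hp : p ∈ shiftP a Q) :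
    a + 1 ≤ p.1 ∧ p.1 < p.2 ∧ p.2 ≤ a + b := by
  rw [mem_shiftP] at hp
  obtain ⟨q, hq, h1, h2⟩ := hp
  have := hQ q hq
  omega

lemma shift_mem_iff (hQ : Bnd b Q) {x y : ℕ} :
    (x, y) ∈ shiftP a Q ↔ a < x ∧ a < y ∧ (x - a, y - a) ∈ Q := by
  rw [mem_shiftP]
  constructor
  · rintro ⟨q, hq, h1, h2⟩
    have := hQ q hq
    have hx : q.1 = x - a := by omega
    have hy : q.2 = y - a := by omega
    refine ⟨by omega, by omega, ?_⟩
    rw [← hx, ← hy]; exact hq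
  · rintro ⟨hx, hy, h⟩
    exact ⟨(x - a, y - a), h, by omega, by omega⟩

lemma paired_union (h1 : Bnd a P1) (hQ : Bnd b Q) {x : ℕ} :
    Paired (P1 ∪ shiftP a Q) x ↔ Paired P1 x ∨ (a < x ∧ Paired Q (x - a)) := by
  constructor
  · rintro ⟨p, hp, h⟩
    rcases Finset.mem_union.1 hp with hp | hp
    · exact Or.inl ⟨p, hp, h⟩
    · right
      rw [mem_shiftP] at hp
      obtain ⟨q, hq, e1, e2⟩ := hp
      have hb := hQ q hq
      rcases h with h | h
      · refine ⟨by omega, q, hq, Or.inl (by omega)⟩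
      · refine ⟨by omega, q, hq, Or.inr (by omega)⟩
  · rintro (⟨p, hp, h⟩ | ⟨hx, hp⟩)
    · exact ⟨p, Finset.mem_union_left _ hp, h⟩
    · have : Paired (shiftP a Q) x := paired_shiftP.2 ⟨x - a, by omega, hp⟩
      obtain ⟨p, hp', h'⟩ := this
      exact ⟨p, Finset.mem_union_right _ hp', h'⟩

lemma not_paired_left {x : ℕ} (h1 : Bnd a P1) (hx : a < x) : ¬ Paired P1 x := by
  intro h; have := paired_le h1 h; omega

lemma secBase_union (h1 : Bnd a P1) (hQ : Bnd b Q) :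
    SecBase m (a + b) (P1 ∪ shiftP a Q) ↔ SecBase m a P1 ∧ SecBase m b Q := by
  constructor
  · rintro ⟨hb, hu, hc, hh⟩
    refine ⟨⟨h1, ?_, ?_, ?_⟩, ⟨hQ, ?_, ?_, ?_⟩⟩
    · intro p hp q hq hne
      exact hu p (Finset.mem_union_left _ hp) q (Finset.mem_union_left _ hq) hne
    · intro p hp q hq
      exact hc p (Finset.mem_union_left _ hp) q (Finset.mem_union_left _ hq)
    · intro p hp hunp
      apply hh p (Finset.mem_union_left _ hp)
      intro x hx1 hx2 hpx
      have hpb := h1 p hp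
      rcases (paired_union h1 hQ).1 hpx with h | h
      · exact hunp x hx1 hx2 h
      · omega
    · intro p hp q hq hne
      have hp' : (p.1 + a, p.2 + a) ∈ shiftP a Q := mem_shiftP.2 ⟨p, hp, rfl, rfl⟩
      have hq' : (q.1 + a, q.2 + a) ∈ shiftP a Q := mem_shiftP.2 ⟨q, hq, rfl, rfl⟩
      have hne' : ((p.1 + a, p.2 + a) : ℕ × ℕ) ≠ (q.1 + a, q.2 + a) := by
        have := hQ p hp; have := hQ q hq
        simp only [ne_eq, Prod.mk.injEq, not_and] at *
        intro h1' h2'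
        exact hne (Prod.ext_iff.2 ⟨by omega, by omega⟩)
      have := hu _ (Finset.mem_union_right _ hp') _ (Finset.mem_union_right _ hq') hne'
      simp only at this
      omega
    · intro p hp q hq
      have hp' : (p.1 + a, p.2 + a) ∈ shiftP a Q := mem_shiftP.2 ⟨p, hp, rfl, rfl⟩
      have hq' : (q.1 + a, q.2 + a) ∈ shiftP a Q := mem_shiftP.2 ⟨q, hq, rfl, rfl⟩
      have := hc _ (Finset.mem_union_right _ hp') _ (Finset.mem_union_right _ hq')
      simp only at this
      omega
    · intro p hp hunp
      have hp' : (p.1 + a, p.2 + a) ∈ shiftP a Q := mem_shiftP.2 ⟨p, hp, rfl, rfl⟩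
      have hpb := hQ p hp
      have := hh _ (Finset.mem_union_right _ hp') ?_
      · simp only at this; omega
      · intro x hx1 hx2 hpx
        simp only at hx1 hx2
        rcases (paired_union h1 hQ).1 hpx with h | h
        · have := paired_le h1 h; omega
        · have hxa : x - a + a = x := by omega
          have := hunp (x - a) (by omega) (by omega) h.2
          exact this
  · rintro ⟨⟨_, hu1, hc1, hh1⟩, ⟨_, huQ, hcQ, hhQ⟩⟩
    refine ⟨?_, ?_, ?_, ?_⟩
    · intro p hp
      rcases Finset.mem_union.1 hp with hp | hp
      · have := h1 p hp; omega
      · have := mem_right_bnd (a := a) hQ hp; omega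
    · intro p hp q hq hne
      rcases Finset.mem_union.1 hp with hp | hp <;> rcases Finset.mem_union.1 hq with hq | hq
      · exact hu1 p hp q hq hne
      · have := h1 p hp; have := mem_right_bnd (a := a) hQ hq; omega
      · have := h1 q hq; have := mem_right_bnd (a := a) hQ hp; omega
      · rw [mem_shiftP] at hp hq
        obtain ⟨p', hp', e1, e2⟩ := hp
        obtain ⟨q', hq', f1, f2⟩ := hq
        have hne' : p' ≠ q' := by
          intro h; apply hne; subst h
          exact Prod.ext (by omega) (by omega)
        have := huQ p' hp' q' hq' hne'
        omega
    · intro p hp q hq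
      rcases Finset.mem_union.1 hp with hp | hp <;> rcases Finset.mem_union.1 hq with hq | hq
      · exact hc1 p hp q hq
      · have := h1 p hp; have := mem_right_bnd (a := a) hQ hq; omega
      · have := h1 q hq; have := mem_right_bnd (a := a) hQ hp; omega
      · rw [mem_shiftP] at hp hq
        obtain ⟨p', hp', e1, e2⟩ := hp
        obtain ⟨q', hq', f1, f2⟩ := hq
        have := hcQ p' hp' q' hq'
        omega
    · intro p hp hunp
      rcases Finset.mem_union.1 hp with hp | hp
      · apply hh1 p hp
        intro x hx1 hx2 hpx
        exact hunp x hx1 hx2 ((paired_union h1 hQ).2 (Or.inl hpx))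
      · rw [mem_shiftP] at hp
        obtain ⟨q, hq, e1, e2⟩ := hp
        have hqb := hQ q hq
        have := hhQ q hq ?_
        · omega
        · intro x hx1 hx2 hpx
          have : Paired (P1 ∪ shiftP a Q) (x + a) := by
            apply (paired_union h1 hQ).2
            right
            refine ⟨by omega, ?_⟩
            have : x + a - a = x := by omega
            rw [this]; exact hpx
          exact hunp (x + a) (by omega) (by omega) this

lemma stackCond_union (h1 : Bnd a P1) (hQ : Bnd b Q) :
    StackCond s (P1 ∪ shiftP a Q) ↔ StackCond s P1 ∧ StackCond s Q := by
  constructor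
  · intro hS
    constructor
    · intro p hp hnp
      have hpb := h1 p hp
      have hnp' : (p.1 - 1, p.2 + 1) ∉ P1 ∪ shiftP a Q := by
        intro h
        rcases Finset.mem_union.1 h with h | h
        · exact hnp h
        · have := mem_right_bnd (a := a) hQ h; simp only at this; omega
      obtain ⟨t, ht, hst⟩ := hS p (Finset.mem_union_left _ hp) hnp'
      refine ⟨t, ht, fun i hi => ?_⟩
      have := hst i hi
      rcases Finset.mem_union.1 this with h | h
      · exact h
      · have := mem_right_bnd (a := a) hQ h; simp only at this; omega
    · intro q hq hnq
      have hqb := hQ q hq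
      have hq' : (q.1 + a, q.2 + a) ∈ P1 ∪ shiftP a Q :=
        Finset.mem_union_right _ (mem_shiftP.2 ⟨q, hq, rfl, rfl⟩)
      have hnp' : (q.1 + a - 1, q.2 + a + 1) ∉ P1 ∪ shiftP a Q := by
        intro h
        rcases Finset.mem_union.1 h with h | h
        · have := h1 _ h; simp only at this; omega
        · rw [mem_shiftP] at h
          obtain ⟨q', hq', e1, e2⟩ := h
          apply hnq
          have hq'b := hQ q' hq'
          have : q' = (q.1 - 1, q.2 + 1) := Prod.ext (by omega) (by omega)
          rw [← this]; exact hq'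
      obtain ⟨t, ht, hst⟩ := hS _ hq' hnp'
      refine ⟨t, ht, fun i hi => ?_⟩
      have hmem := hst i hi
      simp only at hmem
      rcases Finset.mem_union.1 hmem with h | h
      · have := h1 _ h; simp only at this; omega
      · rw [mem_shiftP] at h
        obtain ⟨q', hq', e1, e2⟩ := h
        have hq'b := hQ q' hq'
        have : q' = (q.1 + i, q.2 - i) := Prod.ext (by omega) (by omega)
        rw [← this]; exact hq'
  · rintro ⟨hS1, hSQ⟩
    intro p hp hnp
    rcases Finset.mem_union.1 hp with hp | hp
    · have hnp1 : (p.1 - 1, p.2 + 1) ∉ P1 := fun h => hnp (Finset.mem_union_left _ h)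
      obtain ⟨t, ht, hst⟩ := hS1 p hp hnp1
      exact ⟨t, ht, fun i hi => Finset.mem_union_left _ (hst i hi)⟩
    · rw [mem_shiftP] at hp
      obtain ⟨q, hq, e1, e2⟩ := hp
      have hqb := hQ q hq
      have hnpQ : (q.1 - 1, q.2 + 1) ∉ Q := by
        intro h
        apply hnp
        apply Finset.mem_union_right
        rw [mem_shiftP]
        exact ⟨(q.1 - 1, q.2 + 1), h, by have := hQ _ h; simp only at *; omega⟩
      obtain ⟨t, ht, hst⟩ := hSQ q hq hnpQ
      refine ⟨t, ht, fun i hi => ?_⟩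
      have hmem := hst i hi
      have hmb := hQ _ hmem
      apply Finset.mem_union_right
      rw [mem_shiftP]
      exact ⟨(q.1 + i, q.2 - i), hmem, by simp only at *; omega⟩

lemma isSecStruct_union (h1 : Bnd a P1) (hQ : Bnd b Q) :
    IsSecStruct s m (a + b) (P1 ∪ shiftP a Q) ↔ IsSecStruct s m a P1 ∧ IsSecStruct s m b Q := by
  rw [IsSecStruct, IsSecStruct, IsSecStruct, secBase_union h1 hQ, stackCond_union h1 hQ]
  tauto

lemma disjoint_union_parts (h1 : Bnd a P1) (hQ : Bnd b Q) :
    Disjoint P1 (shiftP a Q) := by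
  rw [Finset.disjoint_left]
  intro p hp hp'
  have := h1 p hp
  have := mem_right_bnd (a := a) hQ hp'
  omega

lemma card_union_parts (h1 : Bnd a P1) (hQ : Bnd b Q) :
    (P1 ∪ shiftP a Q).card = P1.card + Q.card := by
  rw [Finset.card_union_of_disjoint (disjoint_union_parts h1 hQ), card_shiftP]

lemma isHairpin_union_left (h1 : Bnd a P1) (hQ : Bnd b Q) {p : ℕ × ℕ} (hp : p ∈ P1) :
    IsHairpin (P1 ∪ shiftP a Q) p ↔ IsHairpin P1 p := by
  have hpb := h1 p hp
  constructor
  · rintro ⟨_, h⟩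
    exact ⟨hp, fun x hx1 hx2 hpx => h x hx1 hx2 ((paired_union h1 hQ).2 (Or.inl hpx))⟩
  · rintro ⟨_, h⟩
    refine ⟨Finset.mem_union_left _ hp, fun x hx1 hx2 hpx => ?_⟩
    rcases (paired_union h1 hQ).1 hpx with hh | hh
    · exact h x hx1 hx2 hh
    · omega

lemma isHairpin_union_right (h1 : Bnd a P1) (hQ : Bnd b Q) {q : ℕ × ℕ} (hq : q ∈ Q) :
    IsHairpin (P1 ∪ shiftP a Q) (q.1 + a, q.2 + a) ↔ IsHairpin Q q := by
  have hqb := hQ q hq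
  constructor
  · rintro ⟨_, h⟩
    refine ⟨hq, fun x hx1 hx2 hpx => ?_⟩
    refine h (x + a) (by omega) (by omega) ?_
    apply (paired_union h1 hQ).2
    right
    refine ⟨by omega, ?_⟩
    have : x + a - a = x := by omega
    rw [this]; exact hpx
  · rintro ⟨_, h⟩
    refine ⟨Finset.mem_union_right _ (mem_shiftP.2 ⟨q, hq, rfl, rfl⟩),
      fun x hx1 hx2 hpx => ?_⟩
    simp only at hx1 hx2
    rcases (paired_union h1 hQ).1 hpx with hh | hh
    · have := paired_le h1 hh; omega
    · exact h (x - a) (by omega) (by omega) hh.2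

lemma numHairpins_union (h1 : Bnd a P1) (hQ : Bnd b Q) :
    numHairpins (P1 ∪ shiftP a Q) = numHairpins P1 + numHairpins Q := by
  unfold numHairpins
  rw [Finset.filter_union]
  have e1 : (P1.filter (IsHairpin (P1 ∪ shiftP a Q))) = P1.filter (IsHairpin P1) := by
    apply Finset.filter_congr
    intro p hp
    simp only [isHairpin_union_left h1 hQ hp]
  have e2 : ((shiftP a Q).filter (IsHairpin (P1 ∪ shiftP a Q)))
      = shiftP a (Q.filter (IsHairpin Q)) := by
    unfold shiftP
    rw [Finset.filter_image]
    congr 1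
    apply Finset.filter_congr
    intro q hq
    simpa [shiftP] using isHairpin_union_right h1 hQ hq
  rw [e1, e2]
  rw [Finset.card_union_of_disjoint, card_shiftP]
  exact disjoint_union_parts (fun p hp => h1 p (Finset.mem_filter.1 hp).1)
    (fun q hq => hQ q (Finset.mem_filter.1 hq).1)

end Union

section Fin3
lemma ext3 {f g : Fin 3 →₀ ℕ} (h0 : f 0 = g 0) (h1 : f 1 = g 1) (h2 : f 2 = g 2) : f = g := by
  ext i
  fin_cases i
  · exact h0
  · exact h1
  · exact h2

noncomputable def mk3 (x y z : ℕ) : Fin 3 →₀ ℕ :=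
  Finsupp.single 0 x + Finsupp.single 1 y + Finsupp.single 2 z

@[simp] lemma mk3_apply0 (x y z : ℕ) : mk3 x y z 0 = x := by
  simp [mk3, Finsupp.single_apply]
@[simp] lemma mk3_apply1 (x y z : ℕ) : mk3 x y z 1 = y := by
  simp [mk3, Finsupp.single_apply]
@[simp] lemma mk3_apply2 (x y z : ℕ) : mk3 x y z 2 = z := by
  simp [mk3, Finsupp.single_apply]

lemma sub_single0_apply (d : Fin 3 →₀ ℕ) (i : Fin 3) :
    (d - Finsupp.single 0 1 : Fin 3 →₀ ℕ) i = d i - Finsupp.single 0 1 i :=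
  Finsupp.tsub_apply d _ i

lemma le3_iff {v d : Fin 3 →₀ ℕ} : v ≤ d ↔ v 0 ≤ d 0 ∧ v 1 ≤ d 1 ∧ v 2 ≤ d 2 := by
  rw [Finsupp.le_def]
  constructor
  · intro h; exact ⟨h 0, h 1, h 2⟩
  · rintro ⟨h0, h1, h2⟩ i
    fin_cases i
    · exact h0
    · exact h1
    · exact h2

lemma ne_zero3 {d : Fin 3 →₀ ℕ} (h : d ≠ 0) : d 0 ≠ 0 ∨ d 1 ≠ 0 ∨ d 2 ≠ 0 := by
  by_contra hc
  push_neg at hc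
  exact h (ext3 hc.1 hc.2.1 hc.2.2)
end Fin3

section Split
variable {s m n i : ℕ} {P : Finset (ℕ × ℕ)}

lemma isSecStruct_empty : IsSecStruct s m n (∅ : Finset (ℕ × ℕ)) := by
  refine ⟨⟨?_, ?_, ?_, ?_⟩, ?_⟩ <;> intro p hp <;> simp at hp

lemma partner_eq (h : IsSecStruct s m n P) {i j : ℕ} (h1 : (i, n) ∈ P) (h2 : (j, n) ∈ P) :
    i = j := by
  by_contra hne
  have hne' : ((i, n) : ℕ × ℕ) ≠ (j, n) := by
    simp only [ne_eq, Prod.mk.injEq]; tauto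
  have := h.1.2.1 _ h1 _ h2 hne'
  simp only at this
  omega

lemma dichotomy (h : IsSecStruct s m n P) (hin : (i, n) ∈ P) {p : ℕ × ℕ} (hp : p ∈ P) :
    p.2 ≤ i - 1 ∨ i ≤ p.1 := by
  obtain ⟨⟨hb, hu, hc, _⟩, _⟩ := h
  have hbi := hb _ hin
  have hbp := hb p hp
  simp only at hbi
  by_contra hcon
  push_neg at hcon
  obtain ⟨h1, h2⟩ := hcon
  have hne : p ≠ (i, n) := by
    intro hpe; rw [hpe] at h2; simp only at h2; omega
  have hu' := hu p hp (i, n) hin hne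
  have hc' := hc p hp (i, n) hin
  simp only at hu' hc'
  omega

lemma split_main (h : IsSecStruct s m n P) (hin : (i, n) ∈ P) :
    ∃ P1 Q, P = P1 ∪ shiftP (i - 1) Q ∧
      IsSecStruct s m (i - 1) P1 ∧ IsSecStruct s m (n - (i - 1)) Q ∧ (1, n - (i - 1)) ∈ Q := by
  have hbi := h.1.1 _ hin
  simp only at hbi
  set a := i - 1 with ha
  set P1 := P.filter (fun p => p.2 ≤ a) with hP1
  set T := P.filter (fun p => i ≤ p.1) with hT
  set Q := T.image (fun p => (p.1 - a, p.2 - a)) with hQ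
  have hTb : ∀ p ∈ T, i ≤ p.1 ∧ p.1 < p.2 ∧ p.2 ≤ n := by
    intro p hp
    rw [hT, Finset.mem_filter] at hp
    have := h.1.1 p hp.1
    exact ⟨hp.2, this.2⟩
  have hsQ : shiftP a Q = T := by
    rw [hQ, shiftP, Finset.image_image]
    rw [Finset.image_congr (g := id), Finset.image_id]
    intro p hp
    have := hTb p hp
    simp only [Function.comp_apply, id_eq]
    exact Prod.ext (by simp; omega) (by simp; omega)
  have hsplit : P = P1 ∪ shiftP a Q := by
    rw [hsQ, hP1, hT, ← Finset.filter_or]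
    symm
    apply Finset.filter_true_of_mem
    intro p hp
    exact dichotomy h hin hp
  have hB1 : Bnd a P1 := by
    intro p hp
    rw [hP1, Finset.mem_filter] at hp
    have := h.1.1 p hp.1
    exact ⟨this.1, this.2.1, hp.2⟩
  have hBQ : Bnd (n - a) Q := by
    intro q hq
    rw [hQ, Finset.mem_image] at hq
    obtain ⟨p, hp, hpq⟩ := hq
    have := hTb p hp
    rw [← hpq]
    simp only
    omega
  have hab : a + (n - a) = n := by omega
  have hval : IsSecStruct s m (a + (n - a)) (P1 ∪ shiftP a Q) := by
    rw [hab, ← hsplit]; exact h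
  have := (isSecStruct_union hB1 hBQ).1 hval
  refine ⟨P1, Q, hsplit, this.1, this.2, ?_⟩
  have : (i, n) ∈ T := by
    rw [hT, Finset.mem_filter]; exact ⟨hin, le_refl i⟩
  rw [hQ, Finset.mem_image]
  refine ⟨(i, n), this, ?_⟩
  simp only
  exact Prod.ext (by simp; omega) (by first | (simp; omega) | simp)

lemma recover_left {a b : ℕ} {P1 Q : Finset (ℕ × ℕ)} (h1 : Bnd a P1) (hQ : Bnd b Q) :
    (P1 ∪ shiftP a Q).filter (fun p => p.2 ≤ a) = P1 := by
  ext p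
  rw [Finset.mem_filter, Finset.mem_union]
  constructor
  · rintro ⟨hp | hp, h2⟩
    · exact hp
    · have := mem_right_bnd (a := a) hQ hp; omega
  · intro hp
    exact ⟨Or.inl hp, (h1 p hp).2.2⟩

lemma recover_right {a b : ℕ} {P1 Q : Finset (ℕ × ℕ)} (h1 : Bnd a P1) (hQ : Bnd b Q) :
    (P1 ∪ shiftP a Q).filter (fun p => a < p.1) = shiftP a Q := by
  ext p
  rw [Finset.mem_filter, Finset.mem_union]
  constructor
  · rintro ⟨hp | hp, h2⟩
    · have := h1 p hp; omega
    · exact hp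
  · intro hp
    exact ⟨Or.inr hp, (mem_right_bnd (a := a) hQ hp).1⟩

end Split

section CountSets
variable {s m : ℕ}

noncomputable def secF (s m : ℕ) (e : Fin 3 →₀ ℕ) : Finset (Finset (ℕ × ℕ)) :=
  (secFinset s m (e 0)).filter fun P => P.card = e 1 ∧ numHairpins P = e 2

noncomputable def spanF (s m : ℕ) (e : Fin 3 →₀ ℕ) : Finset (Finset (ℕ × ℕ)) :=
  (secF s m e).filter fun P => (1, e 0) ∈ P

lemma mem_secF {e : Fin 3 →₀ ℕ} {P : Finset (ℕ × ℕ)} :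
    P ∈ secF s m e ↔ IsSecStruct s m (e 0) P ∧ P.card = e 1 ∧ numHairpins P = e 2 := by
  rw [secF, Finset.mem_filter, mem_secFinset]

lemma mem_spanF {e : Fin 3 →₀ ℕ} {P : Finset (ℕ × ℕ)} :
    P ∈ spanF s m e ↔ (IsSecStruct s m (e 0) P ∧ P.card = e 1 ∧ numHairpins P = e 2)
      ∧ (1, e 0) ∈ P := by
  rw [spanF, Finset.mem_filter, mem_secF]

lemma secF_zero {e : Fin 3 →₀ ℕ} (h0 : e 0 = 0) :
    secF s m e = if e = 0 then {∅} else ∅ := by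
  have hmem : ∀ P ∈ secF s m e, P = (∅ : Finset (ℕ × ℕ)) := by
    intro P hP
    rw [mem_secF] at hP
    rw [Finset.eq_empty_iff_forall_notMem]
    intro p hp
    have := hP.1.1.1 p hp
    omega
  have hempty : (∅ : Finset (ℕ × ℕ)) ∈ secF s m e ↔ e 1 = 0 ∧ e 2 = 0 := by
    rw [mem_secF]
    simp [isSecStruct_empty, numHairpins, eq_comm]
  split_ifs with he
  · ext P
    simp only [Finset.mem_singleton]
    constructor
    · exact hmem P
    · rintro rfl
      rw [hempty, he]
      exact ⟨rfl, rfl⟩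
  · rw [Finset.eq_empty_iff_forall_notMem]
    intro P hP
    have := hmem P hP
    subst this
    rw [hempty] at hP
    rcases ne_zero3 he with h | h | h
    · exact h h0
    · exact h hP.1
    · exact h hP.2

lemma spanF_empty_of {e : Fin 3 →₀ ℕ} (h : e 0 ≤ 1 ∨ e 1 = 0) : spanF s m e = ∅ := by
  rw [Finset.eq_empty_iff_forall_notMem]
  intro P hP
  rw [mem_spanF] at hP
  obtain ⟨⟨hv, hc, _⟩, hsp⟩ := hP
  have := hv.1.1 _ hsp
  simp only at this
  rcases h with h | h
  · omega
  · rw [h] at hc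
    rw [Finset.card_eq_zero] at hc
    rw [hc] at hsp
    simp at hsp

lemma isSecStruct_pred {n : ℕ} (hn : 1 ≤ n) :
    (IsSecStruct s m n P ∧ ¬ Paired P n) ↔ IsSecStruct s m (n - 1) P := by
  constructor
  · rintro ⟨⟨⟨hb, hu, hc, hh⟩, hs⟩, hnp⟩
    refine ⟨⟨?_, hu, hc, hh⟩, hs⟩
    intro p hp
    have := hb p hp
    have h2 : p.2 ≠ n := fun he => hnp ⟨p, hp, Or.inr he⟩
    omega
  · rintro ⟨⟨hb, hu, hc, hh⟩, hs⟩
    refine ⟨⟨⟨?_, hu, hc, hh⟩, hs⟩, ?_⟩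
    · intro p hp
      have := hb p hp
      omega
    · rintro ⟨p, hp, h | h⟩ <;> have := hb p hp <;> omega
end CountSets

section LemmaA
variable {s m : ℕ}

lemma join_mem {e f : Fin 3 →₀ ℕ} {Q P1 : Finset (ℕ × ℕ)}
    (hQ : Q ∈ spanF s m e) (hP1 : P1 ∈ secF s m f) :
    (P1 ∪ shiftP (f 0) Q) ∈ secF s m (e + f) ∧
      (f 0 + 1, (e + f) 0) ∈ P1 ∪ shiftP (f 0) Q := by
  rw [mem_spanF] at hQ
  rw [mem_secF] at hP1
  obtain ⟨⟨hQv, hQc, hQh⟩, hQs⟩ := hQ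
  obtain ⟨hP1v, hP1c, hP1h⟩ := hP1
  have hBQ : Bnd (e 0) Q := hQv.1.1
  have hB1 : Bnd (f 0) P1 := hP1v.1.1
  have h0 : (e + f) 0 = f 0 + e 0 := by rw [Finsupp.add_apply]; ring
  have h1 : (e + f) 1 = e 1 + f 1 := Finsupp.add_apply e f 1
  have h2 : (e + f) 2 = e 2 + f 2 := Finsupp.add_apply e f 2
  constructor
  · rw [mem_secF]
    refine ⟨?_, ?_, ?_⟩
    · rw [h0]
      exact (isSecStruct_union hB1 hBQ).2 ⟨hP1v, hQv⟩
    · rw [card_union_parts hB1 hBQ, h1]; omega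
    · rw [numHairpins_union hB1 hBQ, h2]; omega
  · apply Finset.mem_union_right
    rw [mem_shiftP]
    refine ⟨(1, e 0), hQs, by simp [add_comm], ?_⟩
    simp only
    omega

lemma cardV (d : Fin 3 →₀ ℕ) :
    ((secF s m d).filter (fun P => Paired P (d 0))).card
      = ∑ p ∈ Finset.HasAntidiagonal.antidiagonal d, (spanF s m p.1).card * (secF s m p.2).card := by
  classical
  have key : (secF s m d).filter (fun P => Paired P (d 0))
      = (Finset.HasAntidiagonal.antidiagonal d).biUnion
          (fun p => ((spanF s m p.1) ×ˢ (secF s m p.2)).image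
            (fun QP => QP.2 ∪ shiftP (p.2 0) QP.1)) := by
    ext P
    rw [Finset.mem_filter, Finset.mem_biUnion]
    constructor
    · rintro ⟨hPm, hPp⟩
      have hPv : IsSecStruct s m (d 0) P := (mem_secF.1 hPm).1
      obtain ⟨q, hq, hor⟩ := hPp
      have hbq := hPv.1.1 q hq
      have hq2 : q.2 = d 0 := by rcases hor with h | h <;> omega
      have hin : (q.1, d 0) ∈ P := by
        have : q = (q.1, d 0) := Prod.ext rfl hq2
        rwa [this] at hq
      obtain ⟨P1, Q, hsplit, hP1v, hQv, hQs⟩ := split_main hPv hin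
      set a := q.1 - 1 with ha
      set b := d 0 - a with hb
      have hB1 : Bnd a P1 := hP1v.1.1
      have hBQ : Bnd b Q := hQv.1.1
      refine ⟨(mk3 b Q.card (numHairpins Q), mk3 a P1.card (numHairpins P1)), ?_, ?_⟩
      · rw [Finset.HasAntidiagonal.mem_antidiagonal]
        have hc : P.card = d 1 := (mem_secF.1 hPm).2.1
        have hh : numHairpins P = d 2 := (mem_secF.1 hPm).2.2
        rw [hsplit, card_union_parts hB1 hBQ] at hc
        rw [hsplit, numHairpins_union hB1 hBQ] at hh
        apply ext3 <;> simp [Finsupp.add_apply] <;> omega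
      · rw [Finset.mem_image]
        refine ⟨(Q, P1), ?_, ?_⟩
        · rw [Finset.mem_product]
          constructor
          · rw [mem_spanF]
            exact ⟨⟨by simpa using hQv, by simp, by simp⟩, by simpa using hQs⟩
          · rw [mem_secF]
            exact ⟨by simpa using hP1v, by simp, by simp⟩
        · simp only [mk3_apply0]
          exact hsplit.symm
    · rintro ⟨p, hpa, hPim⟩
      rw [Finset.HasAntidiagonal.mem_antidiagonal] at hpa
      rw [Finset.mem_image] at hPim
      obtain ⟨QP, hQP, rfl⟩ := hPim
      rw [Finset.mem_product] at hQP
      have := join_mem hQP.1 hQP.2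
      rw [hpa] at this
      exact ⟨this.1, ⟨_, this.2, Or.inr rfl⟩⟩
  rw [key, Finset.card_biUnion]
  · apply Finset.sum_congr rfl
    intro p hp
    rw [← Finset.card_product]
    apply Finset.card_image_of_injOn
    intro QP hQP QP' hQP' heq
    rw [Finset.mem_coe, Finset.mem_product] at hQP hQP'
    have hBQ : Bnd (p.1 0) QP.1 := ((mem_spanF.1 hQP.1).1.1).1.1
    have hB1 : Bnd (p.2 0) QP.2 := ((mem_secF.1 hQP.2).1).1.1
    have hBQ' : Bnd (p.1 0) QP'.1 := ((mem_spanF.1 hQP'.1).1.1).1.1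
    have hB1' : Bnd (p.2 0) QP'.2 := ((mem_secF.1 hQP'.2).1).1.1
    have e2 : QP.2 = QP'.2 := by
      have := congrArg (fun S => S.filter (fun q => q.2 ≤ p.2 0)) heq
      simpa [recover_left hB1 hBQ, recover_left hB1' hBQ'] using this
    have e1 : QP.1 = QP'.1 := by
      have := congrArg (fun S => S.filter (fun q => p.2 0 < q.1)) heq
      simp only [recover_right hB1 hBQ, recover_right hB1' hBQ'] at this
      exact shiftP_injective _ this
    exact Prod.ext e1 e2
  · intro p hp p' hp' hne
    rw [Finset.mem_coe, Finset.HasAntidiagonal.mem_antidiagonal] at hp hp'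
    rw [Function.onFun, Finset.disjoint_left]
    intro P hP hP'
    rw [Finset.mem_image] at hP hP'
    obtain ⟨QP, hQP, hPeq⟩ := hP
    obtain ⟨QP', hQP', hPeq'⟩ := hP'
    rw [Finset.mem_product] at hQP hQP'
    have hj := join_mem hQP.1 hQP.2
    have hj' := join_mem hQP'.1 hQP'.2
    rw [hp, hPeq] at hj
    rw [hp', hPeq'] at hj'
    have hPv : IsSecStruct s m (d 0) P := (mem_secF.1 hj.1).1
    have haa : p.2 0 + 1 = p'.2 0 + 1 := partner_eq hPv hj.2 hj'.2
    have ha : p.2 0 = p'.2 0 := by omega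
    apply hne
    -- recover parts
    have hBQ : Bnd (p.1 0) QP.1 := ((mem_spanF.1 hQP.1).1.1).1.1
    have hB1 : Bnd (p.2 0) QP.2 := ((mem_secF.1 hQP.2).1).1.1
    have hBQ' : Bnd (p'.1 0) QP'.1 := ((mem_spanF.1 hQP'.1).1.1).1.1
    have hB1' : Bnd (p'.2 0) QP'.2 := ((mem_secF.1 hQP'.2).1).1.1
    have heq : QP.2 ∪ shiftP (p.2 0) QP.1 = QP'.2 ∪ shiftP (p'.2 0) QP'.1 := by
      rw [hPeq, hPeq']
    have e2 : QP.2 = QP'.2 := by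
      have := congrArg (fun S => S.filter (fun q => q.2 ≤ p.2 0)) heq
      rw [recover_left hB1 hBQ, ha, recover_left hB1' hBQ'] at this
      exact this
    have e1 : QP.1 = QP'.1 := by
      have := congrArg (fun S => S.filter (fun q => p.2 0 < q.1)) heq
      rw [recover_right hB1 hBQ, ha, recover_right hB1' hBQ'] at this
      exact shiftP_injective _ this
    -- component equalities
    have c10 : p.1 0 = p'.1 0 := by
      have h1 := congrFun (congrArg (fun (f : Fin 3 →₀ ℕ) => (f : Fin 3 → ℕ)) hp) 0
      have h2 := congrFun (congrArg (fun (f : Fin 3 →₀ ℕ) => (f : Fin 3 → ℕ)) hp') 0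
      simp only [Finsupp.coe_add, Pi.add_apply] at h1 h2
      omega
    have hq1 : QP.1.card = p.1 1 := (mem_spanF.1 hQP.1).1.2.1
    have hq1' : QP'.1.card = p'.1 1 := (mem_spanF.1 hQP'.1).1.2.1
    have hq2 : numHairpins QP.1 = p.1 2 := (mem_spanF.1 hQP.1).1.2.2
    have hq2' : numHairpins QP'.1 = p'.1 2 := (mem_spanF.1 hQP'.1).1.2.2
    have hr1 : QP.2.card = p.2 1 := (mem_secF.1 hQP.2).2.1
    have hr1' : QP'.2.card = p'.2 1 := (mem_secF.1 hQP'.2).2.1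
    have hr2 : numHairpins QP.2 = p.2 2 := (mem_secF.1 hQP.2).2.2
    have hr2' : numHairpins QP'.2 = p'.2 2 := (mem_secF.1 hQP'.2).2.2
    refine Prod.ext (ext3 c10 ?_ ?_) (ext3 ha ?_ ?_)
    · rw [← hq1, ← hq1', e1]
    · rw [← hq2, ← hq2', e1]
    · rw [← hr1, ← hr1', e2]
    · rw [← hr2, ← hr2', e2]

lemma cardU (d : Fin 3 →₀ ℕ) (hn : d 0 ≠ 0) :
    (secF s m d).filter (fun P => ¬ Paired P (d 0)) = secF s m (d - Finsupp.single 0 1) := by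
  have h0 : (d - Finsupp.single 0 1 : Fin 3 →₀ ℕ) 0 = d 0 - 1 := by
    rw [sub_single0_apply]; simp
  have h1 : (d - Finsupp.single 0 1 : Fin 3 →₀ ℕ) 1 = d 1 := by
    rw [sub_single0_apply]; simp [Finsupp.single_apply]
  have h2 : (d - Finsupp.single 0 1 : Fin 3 →₀ ℕ) 2 = d 2 := by
    rw [sub_single0_apply]; simp [Finsupp.single_apply]
  ext P
  rw [Finset.mem_filter, mem_secF, mem_secF, h0, h1, h2]
  constructor
  · rintro ⟨⟨hv, hc, hh⟩, hnp⟩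
    exact ⟨(isSecStruct_pred (by omega)).1 ⟨hv, hnp⟩, hc, hh⟩
  · rintro ⟨hv, hc, hh⟩
    have := (isSecStruct_pred (n := d 0) (by omega)).2 hv
    exact ⟨⟨this.1, hc, hh⟩, this.2⟩

lemma cardA (d : Fin 3 →₀ ℕ) :
    ((secF s m d).card : ℚ)
      = (if d = 0 then 1 else 0)
        + (if d 0 = 0 then 0 else ((secF s m (d - Finsupp.single 0 1)).card : ℚ))
        + ∑ p ∈ Finset.HasAntidiagonal.antidiagonal d, ((spanF s m p.1).card : ℚ) * ((secF s m p.2).card : ℚ) := by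
  by_cases h0 : d 0 = 0
  · rw [if_pos h0]
    have hs : ∀ p ∈ Finset.HasAntidiagonal.antidiagonal d, ((spanF s m p.1).card : ℚ) * ((secF s m p.2).card : ℚ) = 0 := by
      intro p hp
      rw [Finset.HasAntidiagonal.mem_antidiagonal] at hp
      have : p.1 0 = 0 := by
        have := congrFun (congrArg (fun (f : Fin 3 →₀ ℕ) => (f : Fin 3 → ℕ)) hp) 0
        simp only [Finsupp.coe_add, Pi.add_apply] at this
        omega
      rw [spanF_empty_of (Or.inl (by omega))]
      simp
    rw [Finset.sum_eq_zero hs, secF_zero h0]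
    split_ifs <;> simp
  · rw [if_neg h0]
    have hd0 : d ≠ 0 := by
      intro h; rw [h] at h0; exact h0 rfl
    rw [if_neg hd0]
    have hsplit : ((secF s m d).filter (fun P => Paired P (d 0))).card
        + ((secF s m d).filter (fun P => ¬ Paired P (d 0))).card = (secF s m d).card :=
      Finset.card_filter_add_card_filter_not (fun P => Paired P (d 0))
    rw [← hsplit, cardV d, cardU d h0]
    push_cast
    ring

noncomputable def Dgf (s m : ℕ) : MvPowerSeries (Fin 3) ℚ :=
  fun d => ((spanF s m d).card : ℚ)

lemma coeff_Rgf (d : Fin 3 →₀ ℕ) :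
    MvPowerSeries.coeff d (Rgf3 s m) = ((secF s m d).card : ℚ) := rfl

lemma coeff_Dgf (d : Fin 3 →₀ ℕ) :
    MvPowerSeries.coeff d (Dgf s m) = ((spanF s m d).card : ℚ) := rfl

lemma single0_le_iff {d : Fin 3 →₀ ℕ} : Finsupp.single 0 1 ≤ d ↔ 1 ≤ d 0 := by
  rw [le3_iff]
  simp [Finsupp.single_apply]

lemma seriesA :
    Rgf3 s m = 1 + MvPowerSeries.X 0 * Rgf3 s m + Dgf s m * Rgf3 s m := by
  ext d
  rw [map_add, map_add, MvPowerSeries.coeff_one, coeff_Rgf,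
    MvPowerSeries.X_def, MvPowerSeries.coeff_monomial_mul, MvPowerSeries.coeff_mul]
  have hsum : ∑ p ∈ Finset.HasAntidiagonal.antidiagonal d,
      MvPowerSeries.coeff p.1 (Dgf s m) * MvPowerSeries.coeff p.2 (Rgf3 s m)
      = ∑ p ∈ Finset.HasAntidiagonal.antidiagonal d, ((spanF s m p.1).card : ℚ) * ((secF s m p.2).card : ℚ) :=
    Finset.sum_congr rfl (fun p _ => by rw [coeff_Dgf, coeff_Rgf])
  rw [hsum, coeff_Rgf (d - Finsupp.single 0 1)]
  have hX : (if (Finsupp.single 0 1 : Fin 3 →₀ ℕ) ≤ d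
        then (1:ℚ) * ((secF s m (d - Finsupp.single 0 1)).card : ℚ) else 0)
      = (if d 0 = 0 then 0 else ((secF s m (d - Finsupp.single 0 1)).card : ℚ)) := by
    by_cases h0 : d 0 = 0
    · rw [if_neg (show ¬((Finsupp.single 0 1 : Fin 3 →₀ ℕ) ≤ d) by
        rw [single0_le_iff]; omega), if_pos h0]
    · rw [if_pos (single0_le_iff.2 (by omega)), if_neg h0, one_mul]
  rw [hX]
  exact cardA d

end LemmaA

section Outer
variable {s m b n : ℕ} {Q P : Finset (ℕ × ℕ)}

lemma addOuter (hs : 1 ≤ s) (hQ : IsSecStruct s m b Q) (hsp : (1, b) ∈ Q) :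
    IsSecStruct s m (b + 2) (insert (1, b + 2) (shiftP 1 Q)) ∧
      (1 + s, b + 2 - s) ∈ insert (1, b + 2) (shiftP 1 Q) ∧
      (insert (1, b + 2) (shiftP 1 Q)).card = Q.card + 1 ∧
      numHairpins (insert (1, b + 2) (shiftP 1 Q)) = numHairpins Q := by
  have hB : Bnd b Q := hQ.1.1
  have hb2 : 2 ≤ b := by have := hB _ hsp; simp only at this; omega
  set A := insert (1, b + 2) (shiftP 1 Q) with hA
  have hshb : ∀ p ∈ shiftP 1 Q, 2 ≤ p.1 ∧ p.1 < p.2 ∧ p.2 ≤ b + 1 := by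
    intro p hp
    have := mem_right_bnd (a := 1) hB hp
    omega
  have hnotm : ((1 : ℕ), b + 2) ∉ shiftP 1 Q := by
    intro h; have := hshb _ h; omega
  have hmemA : ∀ p, p ∈ A ↔ p = (1, b + 2) ∨ p ∈ shiftP 1 Q := by
    intro p; rw [hA, Finset.mem_insert]
  have hpairedA : ∀ x, Paired A x ↔ (x = 1 ∨ x = b + 2 ∨ Paired (shiftP 1 Q) x) := by
    intro x
    constructor
    · rintro ⟨p, hp, h⟩
      rcases (hmemA p).1 hp with rfl | hp'
      · rcases h with h | h
        · left; exact h.symm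
        · right; left; exact h.symm
      · right; right; exact ⟨p, hp', h⟩
    · rintro (rfl | rfl | ⟨p, hp, h⟩)
      · exact ⟨(1, b + 2), Finset.mem_insert_self _ _, Or.inl rfl⟩
      · exact ⟨(1, b + 2), Finset.mem_insert_self _ _, Or.inr rfl⟩
      · exact ⟨p, (hmemA p).2 (Or.inr hp), h⟩
  have hpair2 : Paired A 2 := by
    refine ⟨(2, b + 1), (hmemA _).2 (Or.inr ?_), Or.inl rfl⟩
    rw [mem_shiftP]
    exact ⟨(1, b), hsp, rfl, rfl⟩
  have hpairedQ : ∀ x, Paired (shiftP 1 Q) x ↔ (1 ≤ x - 1 ∧ x - 1 ≤ b ∧ 2 ≤ x ∧ Paired Q (x - 1)) := by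
    intro x
    rw [paired_shiftP]
    constructor
    · rintro ⟨y, hy, hp⟩
      have := paired_le hB hp
      refine ⟨by omega, by omega, by omega, by rwa [show x - 1 = y by omega]⟩
    · rintro ⟨h1, h2, h3, hp⟩
      exact ⟨x - 1, by omega, hp⟩
  refine ⟨⟨⟨?_, ?_, ?_, ?_⟩, ?_⟩, ?_, ?_, ?_⟩
  · -- bounds
    intro p hp
    rcases (hmemA p).1 hp with rfl | hp'
    · exact ⟨le_refl _, show (1:ℕ) < b + 2 by omega, le_refl _⟩
    · have := hshb _ hp'; omega
  · -- uniqueness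
    intro p hp q hq hne
    rcases (hmemA p).1 hp with rfl | hp' <;> rcases (hmemA q).1 hq with rfl | hq'
    · exact absurd rfl hne
    · have := hshb _ hq'; simp only at *; omega
    · have := hshb _ hp'; simp only at *; omega
    · rw [mem_shiftP] at hp' hq'
      obtain ⟨p', hp', e1, e2⟩ := hp'
      obtain ⟨q', hq', f1, f2⟩ := hq'
      have hne' : p' ≠ q' := by
        intro h; apply hne; subst h
        exact Prod.ext (by omega) (by omega)
      have := hQ.1.2.1 p' hp' q' hq' hne'
      omega
  · -- noncrossing
    intro p hp q hq
    rcases (hmemA p).1 hp with rfl | hp' <;> rcases (hmemA q).1 hq with rfl | hq'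
    · simp only; omega
    · have := hshb _ hq'; simp only at *; omega
    · have := hshb _ hp'; simp only at *; omega
    · rw [mem_shiftP] at hp' hq'
      obtain ⟨p', hp', e1, e2⟩ := hp'
      obtain ⟨q', hq', f1, f2⟩ := hq'
      have := hQ.1.2.2.1 p' hp' q' hq'
      omega
  · -- hairpin min size
    intro p hp hunp
    rcases (hmemA p).1 hp with rfl | hp'
    · exfalso
      exact hunp 2 (by simp) (by simp; omega) hpair2
    · rw [mem_shiftP] at hp'
      obtain ⟨q, hq, e1, e2⟩ := hp'
      have hqb := hB q hq
      have := hQ.1.2.2.2 q hq ?_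
      · omega
      · intro x hx1 hx2 hpx
        refine hunp (x + 1) (by omega) (by omega) ?_
        rw [hpairedA]
        right; right
        rw [hpairedQ]
        refine ⟨by omega, ?_, by omega, by rwa [show x + 1 - 1 = x by omega]⟩
        have := paired_le hB hpx; omega
  · -- stack condition
    intro p hp hnp
    rcases (hmemA p).1 hp with rfl | hp'
    · have h0 : ((1 : ℕ) - 1, b + 2 + 1) ∉ Q := by
        intro h; have := hB _ h; omega
      have hnQ : ((1 : ℕ) - 1, b + 1) ∉ Q := by
        intro h; have := hB _ h; omega
      obtain ⟨t, ht, hst⟩ := hQ.2 (1, b) hsp (by simpa using hnQ)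
      refine ⟨t + 1, by omega, fun a ha => ?_⟩
      rcases a with _ | a'
      · simpa using (hmemA _).2 (Or.inl rfl)
      · apply (hmemA _).2
        right
        rw [mem_shiftP]
        have hm := hst a' (by omega)
        have hmb := hB _ hm
        refine ⟨(1 + a', b - a'), hm, by simp; omega, by simp only at *; omega⟩
    · rw [mem_shiftP] at hp'
      obtain ⟨q, hq, e1, e2⟩ := hp'
      have hqb := hB q hq
      by_cases hq1 : q = (1, b)
      · exfalso
        apply hnp
        apply (hmemA _).2
        left
        subst hq1
        simp only at e1 e2
        exact Prod.ext (by omega) (by omega)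
      · have hq1' : 2 ≤ q.1 := by
          rcases Nat.lt_or_ge q.1 2 with h | h
          · exfalso
            have : q.1 = 1 := by omega
            apply hq1
            have hu := hQ.1.2.1 q hq (1, b) hsp
            by_contra hne
            have := hu hne
            simp only at this
            omega
          · exact h
        have hnQ : (q.1 - 1, q.2 + 1) ∉ Q := by
          intro h
          apply hnp
          apply (hmemA _).2
          right
          rw [mem_shiftP]
          refine ⟨(q.1 - 1, q.2 + 1), h, by omega, by omega⟩
        obtain ⟨t, ht, hst⟩ := hQ.2 q hq hnQ
        refine ⟨t, ht, fun a ha => ?_⟩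
        apply (hmemA _).2
        right
        rw [mem_shiftP]
        have hm := hst a ha
        have hmb := hB _ hm
        refine ⟨(q.1 + a, q.2 - a), hm, by simp only at *; omega, by simp only at *; omega⟩
  · -- stack member (1+s, b+2-s)
    have hnQ : ((1 : ℕ) - 1, b + 1) ∉ Q := by
      intro h; have := hB _ h; omega
    obtain ⟨t, ht, hst⟩ := hQ.2 (1, b) hsp (by simpa using hnQ)
    have hm := hst (s - 1) (by omega)
    have hmb := hB _ hm
    apply (hmemA _).2
    right
    rw [mem_shiftP]
    refine ⟨(1 + (s - 1), b - (s - 1)), hm, by simp only at *; omega, by simp only at *; omega⟩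
  · -- card
    rw [hA, Finset.card_insert_of_notMem hnotm, card_shiftP]
  · -- hairpins
    have hnothp : ¬ IsHairpin A (1, b + 2) := by
      rintro ⟨_, h⟩
      exact h 2 (by simp) (by simp; omega) hpair2
    have hfilter : A.filter (IsHairpin A) = (shiftP 1 Q).filter (IsHairpin A) := by
      rw [hA, Finset.filter_insert, if_neg hnothp]
    have hcor : ∀ q ∈ Q, (IsHairpin A (q.1 + 1, q.2 + 1) ↔ IsHairpin Q q) := by
      intro q hq
      have hqb := hB q hq
      constructor
      · rintro ⟨_, h⟩
        refine ⟨hq, fun x hx1 hx2 hpx => ?_⟩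
        refine h (x + 1) (by omega) (by omega) ?_
        rw [hpairedA]
        right; right
        rw [hpairedQ]
        have := paired_le hB hpx
        refine ⟨by omega, by omega, by omega, by rwa [show x + 1 - 1 = x by omega]⟩
      · rintro ⟨_, h⟩
        refine ⟨(hmemA _).2 (Or.inr (mem_shiftP.2 ⟨q, hq, rfl, rfl⟩)), fun x hx1 hx2 hpx => ?_⟩
        simp only at hx1 hx2
        rw [hpairedA] at hpx
        rcases hpx with rfl | rfl | hpx
        · omega
        · omega
        · rw [hpairedQ] at hpx
          exact h (x - 1) (by omega) (by omega) hpx.2.2.2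
    unfold numHairpins
    rw [hfilter]
    have : (shiftP 1 Q).filter (IsHairpin A) = shiftP 1 (Q.filter (IsHairpin Q)) := by
      unfold shiftP
      rw [Finset.filter_image]
      congr 1
      apply Finset.filter_congr
      intro q hq
      simpa using hcor q hq
    rw [this, card_shiftP]

end Outer

section Outer2
variable {s m n : ℕ} {P : Finset (ℕ × ℕ)}

lemma removeOuter (hs : 1 ≤ s) (hP : IsSecStruct s m n P) (hsp : (1, n) ∈ P)
    (hstk : (1 + s, n - s) ∈ P) :
    ∃ Q, IsSecStruct s m (n - 2) Q ∧ (1, n - 2) ∈ Q ∧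
      P = insert (1, (n - 2) + 2) (shiftP 1 Q) := by
  have hB : Bnd n P := hP.1.1
  have hn4 : 2 * s + 2 ≤ n := by have := hB _ hstk; simp only at this; omega
  have hE : ∀ p ∈ P.erase (1, n), 2 ≤ p.1 ∧ p.1 < p.2 ∧ p.2 ≤ n - 1 := by
    intro p hp
    rw [Finset.mem_erase] at hp
    have hb := hB p hp.2
    have hu := hP.1.2.1 p hp.2 (1, n) hsp hp.1
    simp only at hu
    omega
  set Q := (P.erase (1, n)).image (fun p => (p.1 - 1, p.2 - 1)) with hQdef
  have hQmem : ∀ q : ℕ × ℕ, q ∈ Q ↔ (q.1 + 1, q.2 + 1) ∈ P.erase (1, n) := by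
    intro q
    rw [hQdef, Finset.mem_image]
    constructor
    · rintro ⟨p, hp, heq⟩
      have := hE p hp
      have h1 : p.1 = q.1 + 1 := by
        have := congrArg Prod.fst heq; simp only at this; omega
      have h2 : p.2 = q.2 + 1 := by
        have := congrArg Prod.snd heq; simp only at this; omega
      rwa [← h1, ← h2, Prod.mk.eta]
    · intro h
      refine ⟨(q.1 + 1, q.2 + 1), h, ?_⟩
      simp
  have hshift : shiftP 1 Q = P.erase (1, n) := by
    ext p
    rw [mem_shiftP]
    constructor
    · rintro ⟨q, hq, e1, e2⟩
      have := (hQmem q).1 hq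
      have hpe : p = (q.1 + 1, q.2 + 1) := Prod.ext (by omega) (by omega)
      rwa [hpe]
    · intro hp
      have := hE p hp
      refine ⟨(p.1 - 1, p.2 - 1), ?_, by omega, by omega⟩
      rw [hQmem]
      simp only
      have hpe : (p.1 - 1 + 1, p.2 - 1 + 1) = p := Prod.ext (by omega) (by omega)
      rwa [hpe]
  have hPeq : P = insert (1, n) (shiftP 1 Q) := by
    rw [hshift, Finset.insert_erase hsp]
  have hBQ : Bnd (n - 2) Q := by
    intro q hq
    have := hE _ ((hQmem q).1 hq)
    simp only at this
    omega
  have hfull : ∀ a, a < s + 1 → (1 + a, n - a) ∈ P := by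
    have h0 : ((1 : ℕ) - 1, n + 1) ∉ P := by
      intro h; have := hB _ h; omega
    obtain ⟨t, ht, hst⟩ := hP.2 (1, n) hsp h0
    intro a ha
    rcases Nat.lt_or_ge a s with h | h
    · exact hst a (by omega)
    · have : a = s := by omega
      subst this
      exact hstk
  have h2n1 : (2, n - 1) ∈ P := by
    have := hfull 1 (by omega)
    have he : ((1 : ℕ) + 1, n - 1) = (2, n - 1) := by norm_num
    rwa [he] at this
  have hQsp : (1, n - 2) ∈ Q := by
    rw [hQmem]
    simp only
    rw [Finset.mem_erase]
    constructor
    · intro h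
      have := congrArg Prod.fst h; simp at this
    · have he : ((1 : ℕ) + 1, n - 2 + 1) = (2, n - 1) := Prod.ext (by omega) (by omega)
      rwa [he]
  have hpq : ∀ x, 1 ≤ x → x ≤ n - 2 → (Paired Q x ↔ Paired P (x + 1)) := by
    intro x hx1 hx2
    constructor
    · rintro ⟨q, hq, h⟩
      have hmem := Finset.mem_of_mem_erase ((hQmem q).1 hq)
      rcases h with h | h
      · exact ⟨(q.1 + 1, q.2 + 1), hmem, Or.inl (by omega)⟩
      · exact ⟨(q.1 + 1, q.2 + 1), hmem, Or.inr (by omega)⟩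
    · rintro ⟨p, hp, h⟩
      have hb := hB p hp
      have hpne : p ≠ (1, n) := by
        intro he; rw [he] at h; simp only at h; omega
      have hpe : p ∈ P.erase (1, n) := Finset.mem_erase.2 ⟨hpne, hp⟩
      have hEp := hE p hpe
      have hqm : (p.1 - 1, p.2 - 1) ∈ Q := by
        rw [hQmem]
        simp only
        have he2 : (p.1 - 1 + 1, p.2 - 1 + 1) = p := Prod.ext (by omega) (by omega)
        rwa [he2]
      rcases h with h | h
      · exact ⟨(p.1 - 1, p.2 - 1), hqm, Or.inl (by omega)⟩
      · exact ⟨(p.1 - 1, p.2 - 1), hqm, Or.inr (by omega)⟩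
  refine ⟨Q, ⟨⟨hBQ, ?_, ?_, ?_⟩, ?_⟩, hQsp, by rwa [show n - 2 + 2 = n by omega]⟩
  · -- uniqueness
    intro p hp q hq hne
    have hp' := Finset.mem_of_mem_erase ((hQmem p).1 hp)
    have hq' := Finset.mem_of_mem_erase ((hQmem q).1 hq)
    have hne' : ((p.1 + 1, p.2 + 1) : ℕ × ℕ) ≠ (q.1 + 1, q.2 + 1) := by
      intro h
      apply hne
      rw [Prod.ext_iff] at h
      simp only at h
      exact Prod.ext (by omega) (by omega)
    have := hP.1.2.1 _ hp' _ hq' hne'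
    simp only at this
    omega
  · -- noncrossing
    intro p hp q hq
    have hp' := Finset.mem_of_mem_erase ((hQmem p).1 hp)
    have hq' := Finset.mem_of_mem_erase ((hQmem q).1 hq)
    have := hP.1.2.2.1 _ hp' _ hq'
    simp only at this
    omega
  · -- hairpin min size
    intro q hq hunp
    have hq' := Finset.mem_of_mem_erase ((hQmem q).1 hq)
    have hb := hBQ q hq
    have := hP.1.2.2.2 _ hq' ?_
    · simp only at this; omega
    · intro x hx1 hx2 hpx
      simp only at hx1 hx2
      have hxe : x - 1 + 1 = x := by omega
      refine hunp (x - 1) (by omega) (by omega) ?_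
      rw [hpq (x - 1) (by omega) (by omega), hxe]
      exact hpx
  · -- stack condition
    intro q hq hnp
    have hq' := (hQmem q).1 hq
    have hqP := Finset.mem_of_mem_erase hq'
    have hb := hBQ q hq
    by_cases hq1 : q = (1, n - 2)
    · subst hq1
      refine ⟨s, le_refl s, fun a ha => ?_⟩
      rw [hQmem]
      simp only
      have he : ((1 : ℕ) + a + 1, n - 2 - a + 1) = (1 + (a + 1), n - (a + 1)) :=
        Prod.ext (by omega) (by omega)
      rw [he, Finset.mem_erase]
      refine ⟨?_, hfull (a + 1) (by omega)⟩
      intro h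
      have := congrArg Prod.fst h; simp only at this; omega
    · have hq1' : 2 ≤ q.1 := by
        rcases Nat.lt_or_ge q.1 2 with h | h
        · exfalso
          have hx1 : q.1 = 1 := by omega
          have hne : ((q.1 + 1, q.2 + 1) : ℕ × ℕ) ≠ (2, n - 1) := by
            intro he
            rw [Prod.ext_iff] at he
            simp only at he
            exact hq1 (Prod.ext (by omega) (by omega))
          have := hP.1.2.1 _ hqP _ h2n1 hne
          simp only at this
          omega
        · exact h
      have hnP : (q.1 + 1 - 1, q.2 + 1 + 1) ∉ P := by
        simp only [Nat.add_sub_cancel]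
        intro h
        apply hnp
        have hne : ((q.1, q.2 + 2) : ℕ × ℕ) ≠ (1, n) := by
          intro he
          have := congrArg Prod.fst he; simp only at this; omega
        have hmem : (q.1, q.2 + 2) ∈ P.erase (1, n) := Finset.mem_erase.2 ⟨hne, h⟩
        rw [hQmem]
        simp only
        have he : ((q.1 - 1 + 1, q.2 + 1 + 1) : ℕ × ℕ) = (q.1, q.2 + 2) :=
          Prod.ext (by omega) (by omega)
        rwa [he]
      obtain ⟨t, ht, hst⟩ := hP.2 _ hqP hnP
      refine ⟨t, ht, fun a ha => ?_⟩
      have hm := hst a ha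
      simp only at hm
      have hmb := hB _ hm
      simp only at hmb
      rw [hQmem]
      simp only
      have he : ((q.1 + a + 1, q.2 - a + 1) : ℕ × ℕ) = (q.1 + 1 + a, q.2 + 1 - a) :=
        Prod.ext (by omega) (by omega)
      rw [he, Finset.mem_erase]
      refine ⟨?_, hm⟩
      intro h
      have := congrArg Prod.fst h; simp only at this; omega

lemma subw_apply (d : Fin 3 →₀ ℕ) (i : Fin 3) :
    (d - mk3 2 1 0 : Fin 3 →₀ ℕ) i = d i - mk3 2 1 0 i := Finsupp.tsub_apply d _ i

lemma cb1 (hs : 1 ≤ s) (d : Fin 3 →₀ ℕ) :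
    ((spanF s m d).filter (fun P => (1 + s, d 0 - s) ∈ P)).card
      = if (mk3 2 1 0 : Fin 3 →₀ ℕ) ≤ d then (spanF s m (d - mk3 2 1 0)).card else 0 := by
  have hwle : (mk3 2 1 0 : Fin 3 →₀ ℕ) ≤ d ↔ 2 ≤ d 0 ∧ 1 ≤ d 1 := by
    rw [le3_iff]
    simp
  split_ifs with hw
  · rw [hwle] at hw
    have he0 : (d - mk3 2 1 0 : Fin 3 →₀ ℕ) 0 = d 0 - 2 := by rw [subw_apply]; simp
    have he1 : (d - mk3 2 1 0 : Fin 3 →₀ ℕ) 1 = d 1 - 1 := by rw [subw_apply]; simp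
    have he2 : (d - mk3 2 1 0 : Fin 3 →₀ ℕ) 2 = d 2 := by rw [subw_apply]; simp
    symm
    apply Finset.card_bij (fun Q _ => insert (1, d 0) (shiftP 1 Q))
    · intro Q hQ
      rw [mem_spanF, he0, he1, he2] at hQ
      obtain ⟨⟨hQv, hQc, hQh⟩, hQs⟩ := hQ
      obtain ⟨hval, hstk, hcard, hhp⟩ := addOuter hs hQv hQs
      have hb2 : d 0 - 2 + 2 = d 0 := by omega
      rw [hb2] at hval hstk hcard hhp
      rw [Finset.mem_filter, mem_spanF]
      exact ⟨⟨⟨hval, by omega, by omega⟩, Finset.mem_insert_self _ _⟩, hstk⟩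
    · intro Q hQ Q' hQ' heq
      rw [mem_spanF, he0] at hQ hQ'
      have hb1 : ∀ R : Finset (ℕ × ℕ), Bnd (d 0 - 2) R → (1, d 0) ∉ shiftP 1 R := by
        intro R hB h
        have := mem_right_bnd (a := 1) hB h
        omega
      have := congrArg (fun S => S.erase (1, d 0)) heq
      simp only [Finset.erase_insert (hb1 Q hQ.1.1.1.1), Finset.erase_insert (hb1 Q' hQ'.1.1.1.1)]
        at this
      exact shiftP_injective _ this
    · intro P hP
      rw [Finset.mem_filter, mem_spanF] at hP
      obtain ⟨⟨⟨hPv, hPc, hPh⟩, hPs⟩, hPstk⟩ := hP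
      obtain ⟨Q, hQv, hQs, hPeq⟩ := removeOuter hs hPv hPs hPstk
      have hb2 : d 0 - 2 + 2 = d 0 := by omega
      rw [hb2] at hPeq
      refine ⟨Q, ?_, hPeq.symm⟩
      obtain ⟨hval, hstk, hcard, hhp⟩ := addOuter hs hQv hQs
      rw [hb2] at hcard hhp
      rw [mem_spanF, he0, he1, he2]
      have hcc : P.card = Q.card + 1 := by rw [hPeq]; exact hcard
      have hhh : numHairpins P = numHairpins Q := by rw [hPeq]; exact hhp
      exact ⟨⟨hQv, by omega, by omega⟩, hQs⟩
  · rw [Finset.card_eq_zero, Finset.eq_empty_iff_forall_notMem]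
    intro P hP
    rw [Finset.mem_filter, mem_spanF] at hP
    obtain ⟨⟨⟨hPv, hPc, hPh⟩, hPs⟩, _⟩ := hP
    have hb := hPv.1.1 _ hPs
    simp only at hb
    have : P.Nonempty := ⟨_, hPs⟩
    have := Finset.card_pos.2 this
    rw [hwle] at hw
    omega

end Outer2

def stackSet (s n : ℕ) : Finset (ℕ × ℕ) := (Finset.range s).image (fun a => (1 + a, n - a))

section Nest
variable {s m b : ℕ} {Q : Finset (ℕ × ℕ)}

lemma mem_stackSet {n : ℕ} {p : ℕ × ℕ} :
    p ∈ stackSet s n ↔ ∃ a, a < s ∧ p = (1 + a, n - a) := by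
  simp only [stackSet, Finset.mem_image, Finset.mem_range]
  constructor
  · rintro ⟨a, ha, rfl⟩; exact ⟨a, ha, rfl⟩
  · rintro ⟨a, ha, rfl⟩; exact ⟨a, ha, rfl⟩

lemma card_stackSet {n : ℕ} (hn : 2 * s ≤ n) : (stackSet s n).card = s := by
  rw [stackSet, Finset.card_image_of_injOn, Finset.card_range]
  intro a ha a' ha' h
  rw [Finset.mem_coe, Finset.mem_range] at ha ha'
  have := congrArg Prod.fst h
  simp only at this
  omega

lemma stackSet_bnd (hb : 1 ≤ b) {p : ℕ × ℕ} (hp : p ∈ stackSet s (b + 2 * s)) :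
    1 ≤ p.1 ∧ p.1 ≤ s ∧ b + s + 1 ≤ p.2 ∧ p.2 ≤ b + 2 * s ∧ p.1 < p.2 := by
  obtain ⟨a, ha, rfl⟩ := mem_stackSet.1 hp
  simp only
  omega

lemma pairedU (hBQ : Bnd b Q) (hb : 1 ≤ b) (x : ℕ) :
    Paired (stackSet s (b + 2 * s) ∪ shiftP s Q) x ↔
      ((1 ≤ x ∧ x ≤ s) ∨ (b + s + 1 ≤ x ∧ x ≤ b + 2 * s) ∨ (s < x ∧ Paired Q (x - s))) := by
  constructor
  · rintro ⟨p, hp, h⟩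
    rcases Finset.mem_union.1 hp with hp' | hp'
    · obtain ⟨a, ha, rfl⟩ := mem_stackSet.1 hp'
      simp only at h
      rcases h with h | h
      · left; omega
      · right; left; omega
    · rw [mem_shiftP] at hp'
      obtain ⟨q, hq, e1, e2⟩ := hp'
      have hqb := hBQ q hq
      right; right
      rcases h with h | h
      · refine ⟨by omega, ?_⟩
        rw [show x - s = q.1 by omega]
        exact ⟨q, hq, Or.inl rfl⟩
      · refine ⟨by omega, ?_⟩
        rw [show x - s = q.2 by omega]
        exact ⟨q, hq, Or.inr rfl⟩
  · rintro (⟨h1, h2⟩ | ⟨h1, h2⟩ | ⟨h1, h2⟩)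
    · refine ⟨(1 + (x - 1), b + 2 * s - (x - 1)), Finset.mem_union_left _
        (mem_stackSet.2 ⟨x - 1, by omega, rfl⟩), Or.inl (by simp; omega)⟩
    · refine ⟨(1 + (b + 2 * s - x), b + 2 * s - (b + 2 * s - x)), Finset.mem_union_left _
        (mem_stackSet.2 ⟨b + 2 * s - x, by omega, rfl⟩), Or.inr (by simp; omega)⟩
    · obtain ⟨q, hq, h⟩ := h2
      have hqb := hBQ q hq
      refine ⟨(q.1 + s, q.2 + s), Finset.mem_union_right _ (mem_shiftP.2 ⟨q, hq, rfl, rfl⟩), ?_⟩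
      rcases h with h | h
      · exact Or.inl (by simp only; omega)
      · exact Or.inr (by simp only; omega)

lemma nest_disj (hBQ : Bnd b Q) (hb : 1 ≤ b) :
    Disjoint (stackSet s (b + 2 * s)) (shiftP s Q) := by
  rw [Finset.disjoint_left]
  intro p hp hp'
  have := stackSet_bnd hb hp
  have := mem_right_bnd (a := s) hBQ hp'
  omega

lemma nest_spanning (hs : 1 ≤ s) :
    ((1 : ℕ), b + 2 * s) ∈ stackSet s (b + 2 * s) ∪ shiftP s Q :=
  Finset.mem_union_left _ (mem_stackSet.2 ⟨0, by omega, Prod.ext (by simp) (by simp)⟩)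

lemma nest_notstk (hBQ : Bnd b Q) (hnsp : (1, b) ∉ Q) :
    ((1 + s : ℕ), b + s) ∉ stackSet s (b + 2 * s) ∪ shiftP s Q := by
  intro h
  rcases Finset.mem_union.1 h with h' | h'
  · obtain ⟨a, ha, he⟩ := mem_stackSet.1 h'
    have := congrArg Prod.fst he
    simp only at this
    omega
  · rw [mem_shiftP] at h'
    obtain ⟨q, hq, e1, e2⟩ := h'
    have hqb := hBQ q hq
    apply hnsp
    have : q = (1, b) := Prod.ext (by omega) (by omega)
    rwa [this] at hq

lemma nest_card (hBQ : Bnd b Q) (hb : 1 ≤ b) :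
    (stackSet s (b + 2 * s) ∪ shiftP s Q).card = Q.card + s := by
  rw [Finset.card_union_of_disjoint (nest_disj hBQ hb), card_shiftP,
    card_stackSet (by omega)]
  omega

lemma nest_isSecStruct (hs : 1 ≤ s) (hBQ : Bnd b Q) (hnsp : (1, b) ∉ Q) (hb : 1 ≤ b) :
    IsSecStruct s m (b + 2 * s) (stackSet s (b + 2 * s) ∪ shiftP s Q) ↔
      (IsSecStruct s m b Q ∧ (Q = ∅ → m ≤ b)) := by
  set U := stackSet s (b + 2 * s) ∪ shiftP s Q with hU
  have hshb : ∀ p ∈ shiftP s Q, s + 1 ≤ p.1 ∧ p.1 < p.2 ∧ p.2 ≤ s + b := by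
    intro p hp
    have := mem_right_bnd (a := s) hBQ hp
    omega
  constructor
  · rintro ⟨⟨hbd, hu, hc, hh⟩, hstk⟩
    refine ⟨⟨⟨hBQ, ?_, ?_, ?_⟩, ?_⟩, ?_⟩
    · -- uniqueness for Q
      intro p hp q hq hne
      have hp' : (p.1 + s, p.2 + s) ∈ U := Finset.mem_union_right _ (mem_shiftP.2 ⟨p, hp, rfl, rfl⟩)
      have hq' : (q.1 + s, q.2 + s) ∈ U := Finset.mem_union_right _ (mem_shiftP.2 ⟨q, hq, rfl, rfl⟩)
      have hne' : ((p.1 + s, p.2 + s) : ℕ × ℕ) ≠ (q.1 + s, q.2 + s) := by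
        intro h
        rw [Prod.ext_iff] at h
        simp only at h
        exact hne (Prod.ext (by omega) (by omega))
      have := hu _ hp' _ hq' hne'
      simp only at this
      omega
    · -- noncrossing for Q
      intro p hp q hq
      have hp' : (p.1 + s, p.2 + s) ∈ U := Finset.mem_union_right _ (mem_shiftP.2 ⟨p, hp, rfl, rfl⟩)
      have hq' : (q.1 + s, q.2 + s) ∈ U := Finset.mem_union_right _ (mem_shiftP.2 ⟨q, hq, rfl, rfl⟩)
      have := hc _ hp' _ hq'
      simp only at this
      omega
    · -- hairpin min size for Q
      intro q hq hunp
      have hqb := hBQ q hq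
      have hq' : (q.1 + s, q.2 + s) ∈ U := Finset.mem_union_right _ (mem_shiftP.2 ⟨q, hq, rfl, rfl⟩)
      have := hh _ hq' ?_
      · simp only at this; omega
      · intro x hx1 hx2 hpx
        simp only at hx1 hx2
        rcases (pairedU hBQ hb x).1 hpx with h | h | h
        · omega
        · omega
        · exact hunp (x - s) (by omega) (by omega) h.2
    · -- stack condition for Q
      intro q hq hnq
      have hqb := hBQ q hq
      have hq' : (q.1 + s, q.2 + s) ∈ U := Finset.mem_union_right _ (mem_shiftP.2 ⟨q, hq, rfl, rfl⟩)
      have hnp : (q.1 + s - 1, q.2 + s + 1) ∉ U := by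
        intro h
        rcases Finset.mem_union.1 h with h' | h'
        · obtain ⟨a, ha, he⟩ := mem_stackSet.1 h'
          rw [Prod.ext_iff] at he
          simp only at he
          -- forces q = (1, b)
          have hq1 : q.1 = 1 := by omega
          have hq2 : q.2 = b := by omega
          apply hnsp
          have : q = (1, b) := Prod.ext hq1 hq2
          rwa [this] at hq
        · rw [mem_shiftP] at h'
          obtain ⟨q', hq', e1, e2⟩ := h'
          have hq'b := hBQ q' hq'
          apply hnq
          have : q' = (q.1 - 1, q.2 + 1) := Prod.ext (by omega) (by omega)
          rwa [this] at hq'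
      obtain ⟨t, ht, hst⟩ := hstk _ hq' hnp
      refine ⟨t, ht, fun a ha => ?_⟩
      have hm := hst a ha
      simp only at hm
      rcases Finset.mem_union.1 hm with h' | h'
      · have := stackSet_bnd hb h'
        simp only at this
        omega
      · rw [mem_shiftP] at h'
        obtain ⟨q', hq', e1, e2⟩ := h'
        have hq'b := hBQ q' hq'
        have : q' = (q.1 + a, q.2 - a) := Prod.ext (by omega) (by omega)
        rwa [this] at hq'
    · -- Q empty gives m ≤ b
      intro hQe
      have hp : ((1 + (s - 1) : ℕ), b + 2 * s - (s - 1)) ∈ U :=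
        Finset.mem_union_left _ (mem_stackSet.2 ⟨s - 1, by omega, rfl⟩)
      have := hh _ hp ?_
      · simp only at this; omega
      · intro x hx1 hx2 hpx
        simp only at hx1 hx2
        rcases (pairedU hBQ hb x).1 hpx with h | h | h
        · omega
        · omega
        · obtain ⟨p, hp, _⟩ := h.2
          rw [hQe] at hp
          simp at hp
  · rintro ⟨⟨⟨_, huQ, hcQ, hhQ⟩, hstkQ⟩, hbm⟩
    constructor
    · refine ⟨?_, ?_, ?_, ?_⟩
      · -- bounds
        intro p hp
        rcases Finset.mem_union.1 hp with h' | h'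
        · have := stackSet_bnd hb h'; omega
        · have := hshb _ h'; omega
      · -- uniqueness
        intro p hp q hq hne
        rcases Finset.mem_union.1 hp with hp' | hp' <;> rcases Finset.mem_union.1 hq with hq' | hq'
        · obtain ⟨a, ha, rfl⟩ := mem_stackSet.1 hp'
          obtain ⟨a', ha', rfl⟩ := mem_stackSet.1 hq'
          have haa : a ≠ a' := by
            intro h; exact hne (by rw [h])
          simp only
          omega
        · have h1 := stackSet_bnd hb hp'
          have h2 := hshb _ hq'
          omega
        · have h1 := stackSet_bnd hb hq'
          have h2 := hshb _ hp'
          omega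
        · rw [mem_shiftP] at hp' hq'
          obtain ⟨p', hp', e1, e2⟩ := hp'
          obtain ⟨q', hq', f1, f2⟩ := hq'
          have hne' : p' ≠ q' := by
            intro h; apply hne; subst h
            exact Prod.ext (by omega) (by omega)
          have := huQ p' hp' q' hq' hne'
          omega
      · -- noncrossing
        intro p hp q hq
        rcases Finset.mem_union.1 hp with hp' | hp' <;> rcases Finset.mem_union.1 hq with hq' | hq'
        · obtain ⟨a, ha, rfl⟩ := mem_stackSet.1 hp'
          obtain ⟨a', ha', rfl⟩ := mem_stackSet.1 hq'
          simp only
          omega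
        · have h1 := stackSet_bnd hb hp'
          have h2 := hshb _ hq'
          omega
        · have h1 := stackSet_bnd hb hq'
          have h2 := hshb _ hp'
          omega
        · rw [mem_shiftP] at hp' hq'
          obtain ⟨p', hp', e1, e2⟩ := hp'
          obtain ⟨q', hq', f1, f2⟩ := hq'
          have := hcQ p' hp' q' hq'
          omega
      · -- hairpin min size
        intro p hp hunp
        rcases Finset.mem_union.1 hp with hp' | hp'
        · obtain ⟨a, ha, rfl⟩ := mem_stackSet.1 hp'
          by_cases has : a = s - 1
          · by_cases hQe : Q = ∅
            · have := hbm hQe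
              simp only
              omega
            · exfalso
              obtain ⟨q0, hq0⟩ := Finset.nonempty_iff_ne_empty.2 hQe
              have hq0b := hBQ q0 hq0
              refine hunp (q0.1 + s) (by simp only; omega) (by simp only; omega) ?_
              apply (pairedU hBQ hb _).2
              right; right
              refine ⟨by omega, ?_⟩
              rw [show q0.1 + s - s = q0.1 by omega]
              exact ⟨q0, hq0, Or.inl rfl⟩
          · exfalso
            refine hunp (2 + a) (by simp only; omega) (by simp only; omega) ?_
            apply (pairedU hBQ hb _).2
            left
            omega
        · rw [mem_shiftP] at hp'
          obtain ⟨q, hq, e1, e2⟩ := hp'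
          have hqb := hBQ q hq
          have := hhQ q hq ?_
          · omega
          · intro x hx1 hx2 hpx
            refine hunp (x + s) (by omega) (by omega) ?_
            apply (pairedU hBQ hb _).2
            right; right
            refine ⟨by omega, ?_⟩
            rw [show x + s - s = x by omega]
            exact hpx
    · -- stack condition
      intro p hp hnp
      rcases Finset.mem_union.1 hp with hp' | hp'
      · obtain ⟨a, ha, rfl⟩ := mem_stackSet.1 hp'
        rcases Nat.eq_zero_or_pos a with rfl | hapos
        · refine ⟨s, le_refl s, fun a' ha' => ?_⟩
          apply Finset.mem_union_left
          apply mem_stackSet.2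
          refine ⟨a', by omega, ?_⟩
          simp only
          exact Prod.ext (by omega) (by omega)
        · exfalso
          apply hnp
          apply Finset.mem_union_left
          apply mem_stackSet.2
          refine ⟨a - 1, by omega, ?_⟩
          simp only
          exact Prod.ext (by omega) (by omega)
      · rw [mem_shiftP] at hp'
        obtain ⟨q, hq, e1, e2⟩ := hp'
        have hqb := hBQ q hq
        have hnq : (q.1 - 1, q.2 + 1) ∉ Q := by
          intro h
          apply hnp
          apply Finset.mem_union_right
          rw [mem_shiftP]
          refine ⟨(q.1 - 1, q.2 + 1), h, ?_, ?_⟩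
          · have := hBQ _ h; simp only at *; omega
          · simp only; omega
        obtain ⟨t, ht, hst⟩ := hstkQ q hq hnq
        refine ⟨t, ht, fun a' ha' => ?_⟩
        have hm := hst a' ha'
        have hmb := hBQ _ hm
        apply Finset.mem_union_right
        rw [mem_shiftP]
        refine ⟨(q.1 + a', q.2 - a'), hm, by simp only at *; omega, by simp only at *; omega⟩

lemma nest_hairpins (hs : 1 ≤ s) (hBQ : Bnd b Q) (hb : 1 ≤ b) :
    numHairpins (stackSet s (b + 2 * s) ∪ shiftP s Q)
      = if Q = ∅ then 1 else numHairpins Q := by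
  set U := stackSet s (b + 2 * s) ∪ shiftP s Q with hU
  have hshb : ∀ p ∈ shiftP s Q, s + 1 ≤ p.1 ∧ p.1 < p.2 ∧ p.2 ≤ s + b := by
    intro p hp
    have := mem_right_bnd (a := s) hBQ hp
    omega
  have hcor : ∀ q ∈ Q, (IsHairpin U (q.1 + s, q.2 + s) ↔ IsHairpin Q q) := by
    intro q hq
    have hqb := hBQ q hq
    constructor
    · rintro ⟨_, h⟩
      refine ⟨hq, fun x hx1 hx2 hpx => ?_⟩
      refine h (x + s) (by omega) (by omega) ?_
      apply (pairedU hBQ hb _).2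
      right; right
      refine ⟨by omega, ?_⟩
      rw [show x + s - s = x by omega]
      exact hpx
    · rintro ⟨_, h⟩
      refine ⟨Finset.mem_union_right _ (mem_shiftP.2 ⟨q, hq, rfl, rfl⟩), fun x hx1 hx2 hpx => ?_⟩
      simp only at hx1 hx2
      rcases (pairedU hBQ hb x).1 hpx with hcase | hcase | hcase
      · omega
      · omega
      · exact h (x - s) (by omega) (by omega) hcase.2
  have hshift_filter : (shiftP s Q).filter (IsHairpin U) = shiftP s (Q.filter (IsHairpin Q)) := by
    unfold shiftP
    rw [Finset.filter_image]
    congr 1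
    apply Finset.filter_congr
    intro q hq
    simpa using hcor q hq
  have hdisj : Disjoint ((stackSet s (b + 2 * s)).filter (IsHairpin U))
      ((shiftP s Q).filter (IsHairpin U)) := by
    apply Finset.disjoint_filter_filter (nest_disj hBQ hb)
  unfold numHairpins
  rw [show U.filter (IsHairpin U) = (stackSet s (b + 2 * s)).filter (IsHairpin U)
      ∪ (shiftP s Q).filter (IsHairpin U) from Finset.filter_union _ _ _,
    Finset.card_union_of_disjoint hdisj, hshift_filter, card_shiftP]
  by_cases hQe : Q = ∅
  · rw [if_pos hQe]
    have h1 : (stackSet s (b + 2 * s)).filter (IsHairpin U)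
        = {(1 + (s - 1), b + 2 * s - (s - 1))} := by
      ext x
      rw [Finset.mem_filter, Finset.mem_singleton]
      constructor
      · rintro ⟨hx, hhp⟩
        obtain ⟨a, ha, rfl⟩ := mem_stackSet.1 hx
        by_cases has : a = s - 1
        · rw [has]
        · exfalso
          refine hhp.2 (2 + a) (by simp only; omega) (by simp only; omega) ?_
          apply (pairedU hBQ hb _).2
          left
          omega
      · rintro rfl
        refine ⟨mem_stackSet.2 ⟨s - 1, by omega, rfl⟩, ?_, ?_⟩
        · exact Finset.mem_union_left _ (mem_stackSet.2 ⟨s - 1, by omega, rfl⟩)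
        · intro x hx1 hx2 hpx
          simp only at hx1 hx2
          rcases (pairedU hBQ hb x).1 hpx with h | h | h
          · omega
          · omega
          · obtain ⟨p, hp, _⟩ := h.2
            rw [hQe] at hp
            simp at hp
    rw [h1, hQe]
    simp
  · rw [if_neg hQe]
    have h1 : (stackSet s (b + 2 * s)).filter (IsHairpin U) = ∅ := by
      rw [Finset.eq_empty_iff_forall_notMem]
      intro x hx
      rw [Finset.mem_filter] at hx
      obtain ⟨hx, hhp⟩ := hx
      obtain ⟨a, ha, rfl⟩ := mem_stackSet.1 hx
      by_cases has : a = s - 1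
      · obtain ⟨q0, hq0⟩ := Finset.nonempty_iff_ne_empty.2 hQe
        have hq0b := hBQ q0 hq0
        refine hhp.2 (q0.1 + s) (by simp only; omega) (by simp only; omega) ?_
        apply (pairedU hBQ hb _).2
        right; right
        refine ⟨by omega, ?_⟩
        rw [show q0.1 + s - s = q0.1 by omega]
        exact ⟨q0, hq0, Or.inl rfl⟩
      · refine hhp.2 (2 + a) (by simp only; omega) (by simp only; omega) ?_
        apply (pairedU hBQ hb _).2
        left
        omega
    rw [h1]
    simp

end Nest

section NestSplit
variable {s m n : ℕ} {P : Finset (ℕ × ℕ)}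

lemma nest_split (hs : 1 ≤ s) (hm : 1 ≤ m)
    (hP : IsSecStruct s m n P) (hsp : (1, n) ∈ P) (hnstk : (1 + s, n - s) ∉ P) :
    ∃ Q, 2 * s < n ∧ P = stackSet s ((n - 2 * s) + 2 * s) ∪ shiftP s Q ∧
      Bnd (n - 2 * s) Q ∧ (1, n - 2 * s) ∉ Q := by
  have hB : Bnd n P := hP.1.1
  have h0 : ((1 : ℕ) - 1, n + 1) ∉ P := by
    intro h; have := hB _ h; omega
  obtain ⟨t, ht, hst⟩ := hP.2 (1, n) hsp h0
  have hstksub : ∀ a, a < s → (1 + a, n - a) ∈ P := by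
    intro a ha
    have := hst a (by omega)
    simpa using this
  have hlast := hstksub (s - 1) (by omega)
  have hlb := hB _ hlast
  simp only at hlb
  have hn2s : 2 * s ≤ n := by omega
  have hb1 : 2 * s < n := by
    rcases Nat.lt_or_ge (2 * s) n with h | h
    · exact h
    · exfalso
      have hn : n = 2 * s := by omega
      have := hP.1.2.2.2 _ hlast ?_
      · simp only at this; omega
      · intro x hx1 hx2 _
        simp only at hx1 hx2
        omega
  have hw : ∀ p ∈ P, p ∉ stackSet s n → s + 1 ≤ p.1 ∧ p.2 ≤ n - s := by
    intro p hp hpn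
    have hpb := hB p hp
    constructor
    · by_contra hc
      push_neg at hc
      have ha : p.1 - 1 < s := by omega
      have hcm := hstksub (p.1 - 1) ha
      have hne : p ≠ (1 + (p.1 - 1), n - (p.1 - 1)) := by
        intro he; apply hpn; rw [he]; exact mem_stackSet.2 ⟨p.1 - 1, ha, rfl⟩
      have := hP.1.2.1 p hp _ hcm hne
      simp only at this
      omega
    · by_contra hc
      push_neg at hc
      have ha : n - p.2 < s := by omega
      have hcm := hstksub (n - p.2) ha
      have hne : p ≠ (1 + (n - p.2), n - (n - p.2)) := by
        intro he; apply hpn; rw [he]; exact mem_stackSet.2 ⟨n - p.2, ha, rfl⟩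
      have := hP.1.2.1 p hp _ hcm hne
      simp only at this
      omega
  set Q := (P \ stackSet s n).image (fun p => (p.1 - s, p.2 - s)) with hQdef
  have hQmem : ∀ q : ℕ × ℕ, q ∈ Q ↔ (q.1 + s, q.2 + s) ∈ P \ stackSet s n := by
    intro q
    rw [hQdef, Finset.mem_image]
    constructor
    · rintro ⟨p, hp, heq⟩
      rw [Finset.mem_sdiff] at hp
      have := hw p hp.1 hp.2
      have hpb := hB p hp.1
      have h1 : p.1 = q.1 + s := by
        have := congrArg Prod.fst heq; simp only at this; omega
      have h2 : p.2 = q.2 + s := by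
        have := congrArg Prod.snd heq; simp only at this; omega
      rw [← h1, ← h2, Prod.mk.eta]
      exact Finset.mem_sdiff.2 hp
    · intro h
      exact ⟨(q.1 + s, q.2 + s), h, by simp⟩
  have hshift : shiftP s Q = P \ stackSet s n := by
    ext p
    rw [mem_shiftP]
    constructor
    · rintro ⟨q, hq, e1, e2⟩
      have := (hQmem q).1 hq
      have hpe : p = (q.1 + s, q.2 + s) := Prod.ext (by omega) (by omega)
      rwa [hpe]
    · intro hp
      have hps := Finset.mem_sdiff.1 hp
      have := hw p hps.1 hps.2
      have hpb := hB p hps.1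
      refine ⟨(p.1 - s, p.2 - s), ?_, by omega, by omega⟩
      rw [hQmem]
      simp only
      have hpe : (p.1 - s + s, p.2 - s + s) = p := Prod.ext (by omega) (by omega)
      rwa [hpe]
  have hsub : stackSet s n ⊆ P := by
    intro p hp
    obtain ⟨a, ha, rfl⟩ := mem_stackSet.1 hp
    exact hstksub a ha
  have hunion : P = stackSet s n ∪ shiftP s Q := by
    rw [hshift, Finset.union_sdiff_of_subset hsub]
  have hBQ : Bnd (n - 2 * s) Q := by
    intro q hq
    have h := Finset.mem_sdiff.1 ((hQmem q).1 hq)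
    have := hw _ h.1 h.2
    have := hB _ h.1
    simp only at *
    omega
  have hQnsp : (1, n - 2 * s) ∉ Q := by
    intro h
    have h' := Finset.mem_sdiff.1 ((hQmem _).1 h)
    apply hnstk
    have he : ((1 : ℕ) + s, n - 2 * s + s) = (1 + s, n - s) := Prod.ext rfl (by omega)
    rw [← he]
    exact h'.1
  refine ⟨Q, hb1, ?_, hBQ, hQnsp⟩
  rw [show n - 2 * s + 2 * s = n by omega]
  exact hunion

end NestSplit

section CB23
variable {s m : ℕ}

noncomputable def eFset (s m : ℕ) (d : Fin 3 →₀ ℕ) : Finset (Finset (ℕ × ℕ)) :=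
  (spanF s m d).filter (fun P => (1 + s, d 0 - s) ∉ P)

noncomputable def gFset (s m : ℕ) (e : Fin 3 →₀ ℕ) : Finset (Finset (ℕ × ℕ)) :=
  (secF s m e).filter (fun Q => (1, e 0) ∉ Q ∧ Q ≠ ∅)

lemma sub_mk3_apply (x y z : ℕ) (d : Fin 3 →₀ ℕ) (i : Fin 3) :
    (d - mk3 x y z : Fin 3 →₀ ℕ) i = d i - mk3 x y z i := Finsupp.tsub_apply d _ i

lemma cb3 (e : Fin 3 →₀ ℕ) :
    ((secF s m e).card : ℚ)
      = (if e 1 = 0 ∧ e 2 = 0 then 1 else 0) + ((spanF s m e).card : ℚ)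
        + ((gFset s m e).card : ℚ) := by
  classical
  have hsplit : ((secF s m e).filter (fun Q => (1, e 0) ∈ Q)).card
      + ((secF s m e).filter (fun Q => (1, e 0) ∉ Q)).card = (secF s m e).card :=
    Finset.card_filter_add_card_filter_not _
  have hspan : (secF s m e).filter (fun Q => (1, e 0) ∈ Q) = spanF s m e := rfl
  have hsplit2 : (((secF s m e).filter (fun Q => (1, e 0) ∉ Q)).filter (fun Q => Q = ∅)).card
      + (((secF s m e).filter (fun Q => (1, e 0) ∉ Q)).filter (fun Q => ¬ Q = ∅)).card
      = ((secF s m e).filter (fun Q => (1, e 0) ∉ Q)).card :=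
    Finset.card_filter_add_card_filter_not _
  have hg : ((secF s m e).filter (fun Q => (1, e 0) ∉ Q)).filter (fun Q => ¬ Q = ∅)
      = gFset s m e := by
    rw [gFset, Finset.filter_filter]
  have hempt : ((secF s m e).filter (fun Q => (1, e 0) ∉ Q)).filter (fun Q => Q = ∅)
      = if e 1 = 0 ∧ e 2 = 0 then {∅} else ∅ := by
    ext Q
    rw [Finset.mem_filter, Finset.mem_filter, mem_secF]
    constructor
    · rintro ⟨⟨⟨hv, hc, hh⟩, _⟩, rfl⟩
      rw [if_pos ⟨by simpa using hc.symm, by simpa [numHairpins] using hh.symm⟩]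
      simp
    · intro hQ
      split_ifs at hQ with hcond
      · rw [Finset.mem_singleton] at hQ
        subst hQ
        refine ⟨⟨⟨isSecStruct_empty, by simp [hcond.1], ?_⟩, by simp⟩, rfl⟩
        simp [numHairpins, hcond.2]
      · simp at hQ
  have hcard : (((secF s m e).filter (fun Q => (1, e 0) ∉ Q)).filter (fun Q => Q = ∅)).card
      = if e 1 = 0 ∧ e 2 = 0 then 1 else 0 := by
    rw [hempt]; split_ifs <;> simp
  rw [← hsplit, ← hsplit2, hspan, hg, hcard]
  push_cast
  ring

set_option maxHeartbeats 2000000 in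
lemma cb2 (hs : 1 ≤ s) (hm : 1 ≤ m) (d : Fin 3 →₀ ℕ) :
    ((eFset s m d).card : ℚ)
      = if (mk3 (2 * s) s 0 : Fin 3 →₀ ℕ) ≤ d then
          ((if (d - mk3 (2 * s) s 0 : Fin 3 →₀ ℕ) 1 = 0
              ∧ (d - mk3 (2 * s) s 0 : Fin 3 →₀ ℕ) 2 = 1
              ∧ m ≤ (d - mk3 (2 * s) s 0 : Fin 3 →₀ ℕ) 0 then (1 : ℚ) else 0)
            + ((gFset s m (d - mk3 (2 * s) s 0)).card : ℚ))
        else 0 := by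
  classical
  set e := (d - mk3 (2 * s) s 0 : Fin 3 →₀ ℕ) with he
  have hvle : (mk3 (2 * s) s 0 : Fin 3 →₀ ℕ) ≤ d ↔ 2 * s ≤ d 0 ∧ s ≤ d 1 := by
    rw [le3_iff]; simp
  have he0 : e 0 = d 0 - 2 * s := by rw [he, sub_mk3_apply]; simp
  have he1 : e 1 = d 1 - s := by rw [he, sub_mk3_apply]; simp
  have he2 : e 2 = d 2 := by rw [he, sub_mk3_apply]; simp
  set T : Finset (Finset (ℕ × ℕ)) :=
    (gFset s m e) ∪ (if e 1 = 0 ∧ e 2 = 1 ∧ m ≤ e 0 then {∅} else ∅) with hT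
  have hTcard : (T.card : ℚ)
      = (if e 1 = 0 ∧ e 2 = 1 ∧ m ≤ e 0 then (1 : ℚ) else 0) + ((gFset s m e).card : ℚ) := by
    rw [hT, Finset.card_union_of_disjoint]
    · split_ifs <;> simp [add_comm]
    · rw [Finset.disjoint_right]
      intro Q hQ
      split_ifs at hQ with hc
      · rw [Finset.mem_singleton] at hQ
        subst hQ
        rw [gFset, Finset.mem_filter]
        rintro ⟨_, _, hne⟩
        exact hne rfl
      · simp at hQ
  have hTmem : ∀ Q, Q ∈ T ↔
      (IsSecStruct s m (e 0) Q ∧ Q.card = e 1 ∧ (1, e 0) ∉ Q ∧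
        ((Q = ∅ ∧ e 2 = 1 ∧ m ≤ e 0) ∨ (Q ≠ ∅ ∧ numHairpins Q = e 2))) := by
    intro Q
    rw [hT, Finset.mem_union, gFset, Finset.mem_filter, mem_secF]
    constructor
    · rintro (⟨⟨hval, hc, hh⟩, hns, hne⟩ | hQ)
      · exact ⟨hval, hc, hns, Or.inr ⟨hne, hh⟩⟩
      · split_ifs at hQ with hc
        · rw [Finset.mem_singleton] at hQ
          subst hQ
          exact ⟨isSecStruct_empty, by simp [hc.1], by simp, Or.inl ⟨rfl, hc.2⟩⟩
        · simp at hQ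
    · rintro ⟨hval, hc, hns, (⟨rfl, h2, h3⟩ | ⟨hne, hh⟩)⟩
      · right
        rw [if_pos ⟨by simpa using hc.symm, h2, h3⟩]
        simp
      · exact Or.inl ⟨⟨hval, hc, hh⟩, hns, hne⟩
  clear_value T e
  by_cases hv : (mk3 (2 * s) s 0 : Fin 3 →₀ ℕ) ≤ d
  · rw [if_pos hv, ← hTcard]
    rw [hvle] at hv
    congr 1
    symm
    apply Finset.card_bij (fun Q _ => stackSet s (e 0 + 2 * s) ∪ shiftP s Q)
    · -- membership
      intro Q hQ
      obtain ⟨hQv, hQc, hQns, hQd⟩ := (hTmem Q).1 hQ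
      have hBQ : Bnd (e 0) Q := hQv.1.1
      have hb : 1 ≤ e 0 := by
        rcases hQd with ⟨_, _, h3⟩ | ⟨hne, _⟩
        · omega
        · obtain ⟨q0, hq0⟩ := Finset.nonempty_iff_ne_empty.2 hne
          have := hBQ q0 hq0
          omega
      have hQbm : Q = ∅ → m ≤ e 0 := by
        intro hQe
        rcases hQd with ⟨_, _, h3⟩ | ⟨hne, _⟩
        · exact h3
        · exact absurd hQe hne
      have hval := (nest_isSecStruct (m := m) hs hBQ hQns hb).2 ⟨hQv, hQbm⟩
      have hcard := nest_card (s := s) hBQ hb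
      have hhp := nest_hairpins hs hBQ hb
      have hd0 : e 0 + 2 * s = d 0 := by omega
      rw [eFset, Finset.mem_filter, mem_spanF]
      rw [← hd0]
      refine ⟨⟨⟨hval, ?_, ?_⟩, nest_spanning hs⟩, ?_⟩
      · rw [hcard]; omega
      · rw [hhp]
        rcases hQd with ⟨hQe, h2, _⟩ | ⟨hne, hh⟩
        · rw [if_pos hQe]; omega
        · rw [if_neg hne]; omega
      · rw [show e 0 + 2 * s - s = e 0 + s by omega]
        exact nest_notstk hBQ hQns
    · -- injectivity
      intro Q hQ Q' hQ' heq
      have hBQ : Bnd (e 0) Q := ((hTmem Q).1 hQ).1.1.1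
      have hBQ' : Bnd (e 0) Q' := ((hTmem Q').1 hQ').1.1.1
      have hd1 : Disjoint (stackSet s (e 0 + 2 * s)) (shiftP s Q) := by
        rw [Finset.disjoint_left]
        intro p hp hp'
        obtain ⟨a, ha, rfl⟩ := mem_stackSet.1 hp
        have := mem_right_bnd (a := s) hBQ hp'
        simp only at *
        omega
      have hd2 : Disjoint (stackSet s (e 0 + 2 * s)) (shiftP s Q') := by
        rw [Finset.disjoint_left]
        intro p hp hp'
        obtain ⟨a, ha, rfl⟩ := mem_stackSet.1 hp
        have := mem_right_bnd (a := s) hBQ' hp'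
        simp only at *
        omega
      have := congrArg (fun S => S \ stackSet s (e 0 + 2 * s)) heq
      simp only [Finset.union_sdiff_cancel_left hd1, Finset.union_sdiff_cancel_left hd2] at this
      exact shiftP_injective _ this
    · -- surjectivity
      intro P hP
      rw [eFset, Finset.mem_filter, mem_spanF] at hP
      obtain ⟨⟨⟨hPv, hPc, hPh⟩, hPs⟩, hPstk⟩ := hP
      obtain ⟨Q, hb1, hunion, hBQ, hQns⟩ := nest_split hs hm hPv hPs hPstk
      have hd0 : d 0 - 2 * s = e 0 := by omega
      rw [hd0] at hunion hBQ hQns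
      have hb : 1 ≤ e 0 := by omega
      have hval : IsSecStruct s m (e 0 + 2 * s) (stackSet s (e 0 + 2 * s) ∪ shiftP s Q) := by
        rw [← hunion, show e 0 + 2 * s = d 0 by omega]
        exact hPv
      have hQval := (nest_isSecStruct (m := m) hs hBQ hQns hb).1 hval
      have hcard := nest_card (s := s) hBQ hb
      have hhp := nest_hairpins hs hBQ hb
      rw [← hunion] at hcard hhp
      refine ⟨Q, (hTmem Q).2 ⟨hQval.1, by omega, hQns, ?_⟩, hunion.symm⟩
      by_cases hQe : Q = ∅
      · rw [if_pos hQe] at hhp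
        exact Or.inl ⟨hQe, by omega, hQval.2 hQe⟩
      · rw [if_neg hQe] at hhp
        exact Or.inr ⟨hQe, by omega⟩
  · -- eFset empty
    rw [if_neg hv]
    have hemp : eFset s m d = ∅ := by
      rw [Finset.eq_empty_iff_forall_notMem]
      intro P hP
      rw [eFset, Finset.mem_filter, mem_spanF] at hP
      obtain ⟨⟨⟨hPv, hPc, hPh⟩, hPs⟩, hPstk⟩ := hP
      obtain ⟨Q, hb1, hunion, hBQ, hQns⟩ := nest_split hs hm hPv hPs hPstk
      have hcard := nest_card (s := s) hBQ (by omega)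
      rw [← hunion] at hcard
      rw [hvle] at hv
      omega
    rw [hemp]
    simp

end CB23

section Series
variable {s m : ℕ}

noncomputable def Hgf (m : ℕ) : MvPowerSeries (Fin 3) ℚ :=
  fun e => if e 1 = 0 ∧ e 2 = 1 ∧ m ≤ e 0 then 1 else 0

noncomputable def Egf : MvPowerSeries (Fin 3) ℚ :=
  fun e => if e 1 = 0 ∧ e 2 = 0 then 1 else 0

lemma coeff_Hgf (d : Fin 3 →₀ ℕ) :
    MvPowerSeries.coeff d (Hgf m) = if d 1 = 0 ∧ d 2 = 1 ∧ m ≤ d 0 then 1 else 0 := rfl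

lemma coeff_Egf (d : Fin 3 →₀ ℕ) :
    MvPowerSeries.coeff d Egf = if d 1 = 0 ∧ d 2 = 0 then 1 else 0 := rfl

lemma X01_monomial (x y : ℕ) :
    (MvPowerSeries.X 0 ^ x * MvPowerSeries.X 1 ^ y : MvPowerSeries (Fin 3) ℚ)
      = MvPowerSeries.monomial (mk3 x y 0) 1 := by
  rw [MvPowerSeries.X_pow_eq, MvPowerSeries.X_pow_eq, MvPowerSeries.monomial_mul_monomial,
    one_mul]
  have he : (Finsupp.single (0 : Fin 3) x + Finsupp.single 1 y) = mk3 x y 0 := by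
    apply ext3 <;> simp [Finsupp.add_apply, Finsupp.single_apply]
  rw [he]

lemma X2m_monomial (x : ℕ) :
    (MvPowerSeries.X 2 * MvPowerSeries.X 0 ^ x : MvPowerSeries (Fin 3) ℚ)
      = MvPowerSeries.monomial (mk3 x 0 1) 1 := by
  rw [MvPowerSeries.X_def, MvPowerSeries.X_pow_eq, MvPowerSeries.monomial_mul_monomial,
    one_mul]
  have he : (Finsupp.single (2 : Fin 3) 1 + Finsupp.single 0 x) = mk3 x 0 1 := by
    apply ext3 <;> simp [Finsupp.add_apply, Finsupp.single_apply]
  rw [he]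

lemma X01_monomial' :
    (MvPowerSeries.X 0 ^ 2 * MvPowerSeries.X 1 : MvPowerSeries (Fin 3) ℚ)
      = MvPowerSeries.monomial (mk3 2 1 0) 1 := by
  rw [show (MvPowerSeries.X 1 : MvPowerSeries (Fin 3) ℚ) = MvPowerSeries.X 1 ^ 1 from
    (pow_one _).symm]
  exact X01_monomial 2 1

lemma eq_mk3_iff {d : Fin 3 →₀ ℕ} {x y z : ℕ} :
    d = mk3 x y z ↔ d 0 = x ∧ d 1 = y ∧ d 2 = z := by
  constructor
  · rintro rfl; simp
  · rintro ⟨h0, h1, h2⟩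
    apply ext3 <;> simp [h0, h1, h2]

lemma sub1_apply1 (d : Fin 3 →₀ ℕ) : (d - Finsupp.single 0 1 : Fin 3 →₀ ℕ) 1 = d 1 := by
  rw [sub_single0_apply]; simp [Finsupp.single_apply]

lemma sub1_apply2 (d : Fin 3 →₀ ℕ) : (d - Finsupp.single 0 1 : Fin 3 →₀ ℕ) 2 = d 2 := by
  rw [sub_single0_apply]; simp [Finsupp.single_apply]

lemma sub1_apply0 (d : Fin 3 →₀ ℕ) : (d - Finsupp.single 0 1 : Fin 3 →₀ ℕ) 0 = d 0 - 1 := by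
  rw [sub_single0_apply]; simp

lemma seriesE : (1 - MvPowerSeries.X 0 : MvPowerSeries (Fin 3) ℚ) * Egf = 1 := by
  ext d
  rw [sub_mul, one_mul, map_sub, MvPowerSeries.coeff_one, MvPowerSeries.X_def,
    MvPowerSeries.coeff_monomial_mul, coeff_Egf]
  by_cases h1 : d 1 = 0 ∧ d 2 = 0
  · by_cases h0 : d 0 = 0
    · have hd0 : d = 0 := by apply ext3 <;> simp [h0, h1.1, h1.2]
      rw [if_pos h1, if_neg (show ¬((Finsupp.single 0 1 : Fin 3 →₀ ℕ) ≤ d) by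
        rw [single0_le_iff]; omega), if_pos hd0]
      norm_num
    · have hd0 : d ≠ 0 := by intro h; rw [h] at h0; exact h0 rfl
      rw [if_pos h1, if_pos (single0_le_iff.2 (by omega)), coeff_Egf,
        if_pos ⟨by rw [sub1_apply1]; exact h1.1, by rw [sub1_apply2]; exact h1.2⟩,
        if_neg hd0]
      norm_num
  · have hd0 : d ≠ 0 := by
      intro h
      apply h1
      rw [h]
      simp
    rw [if_neg h1, if_neg hd0]
    have hinner : MvPowerSeries.coeff (d - Finsupp.single 0 1) Egf = 0 := by
      rw [coeff_Egf, if_neg]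
      rw [sub1_apply1, sub1_apply2]
      exact h1
    split_ifs with h
    · rw [hinner]; norm_num
    · norm_num

lemma seriesH (hm : 1 ≤ m) :
    (1 - MvPowerSeries.X 0 : MvPowerSeries (Fin 3) ℚ) * Hgf m
      = MvPowerSeries.X 2 * MvPowerSeries.X 0 ^ m := by
  ext d
  rw [X2m_monomial, MvPowerSeries.coeff_monomial, sub_mul, one_mul, map_sub,
    MvPowerSeries.X_def, MvPowerSeries.coeff_monomial_mul, coeff_Hgf]
  by_cases h1 : d 1 = 0 ∧ d 2 = 1
  · rcases Nat.lt_trichotomy (d 0) m with hc | hc | hc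
    · rw [if_neg (by omega : ¬(d 1 = 0 ∧ d 2 = 1 ∧ m ≤ d 0)),
        if_neg (by rw [eq_mk3_iff]; omega : ¬(d = mk3 m 0 1))]
      have hinner : MvPowerSeries.coeff (d - Finsupp.single 0 1) (Hgf m) = 0 := by
        rw [coeff_Hgf, if_neg]
        rw [sub1_apply0]
        omega
      split_ifs with h
      · rw [hinner]; norm_num
      · norm_num
    · rw [if_pos ⟨h1.1, h1.2, by omega⟩,
        if_pos (eq_mk3_iff.2 ⟨hc, h1.1, h1.2⟩),
        if_pos (single0_le_iff.2 (by omega)), coeff_Hgf,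
        if_neg (by rw [sub1_apply0]; omega : ¬((d - Finsupp.single 0 1 : Fin 3 →₀ ℕ) 1 = 0
          ∧ (d - Finsupp.single 0 1 : Fin 3 →₀ ℕ) 2 = 1
          ∧ m ≤ (d - Finsupp.single 0 1 : Fin 3 →₀ ℕ) 0))]
      norm_num
    · rw [if_pos ⟨h1.1, h1.2, by omega⟩,
        if_neg (by rw [eq_mk3_iff]; omega : ¬(d = mk3 m 0 1)),
        if_pos (single0_le_iff.2 (by omega)), coeff_Hgf,
        if_pos ⟨by rw [sub1_apply1]; exact h1.1, by rw [sub1_apply2]; exact h1.2,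
          by rw [sub1_apply0]; omega⟩]
      norm_num
  · rw [if_neg (by tauto : ¬(d 1 = 0 ∧ d 2 = 1 ∧ m ≤ d 0)),
      if_neg (by rw [eq_mk3_iff]; tauto : ¬(d = mk3 m 0 1))]
    have hinner : MvPowerSeries.coeff (d - Finsupp.single 0 1) (Hgf m) = 0 := by
      rw [coeff_Hgf, if_neg]
      rw [sub1_apply1, sub1_apply2]
      tauto
    split_ifs with h
    · rw [hinner]; norm_num
    · norm_num

lemma seriesB (hs : 1 ≤ s) (hm : 1 ≤ m) :
    (1 - MvPowerSeries.X 0 ^ 2 * MvPowerSeries.X 1 : MvPowerSeries (Fin 3) ℚ) * Dgf s m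
      = MvPowerSeries.X 0 ^ (2 * s) * MvPowerSeries.X 1 ^ s
        * (Hgf m + Rgf3 s m - Egf - Dgf s m) := by
  ext d
  have hsplit := Finset.card_filter_add_card_filter_not
    (s := spanF s m d) (p := fun P => (1 + s, d 0 - s) ∈ P)
  have heF : (spanF s m d).filter (fun P => ¬ (1 + s, d 0 - s) ∈ P) = eFset s m d := rfl
  rw [heF] at hsplit
  have hc1 := cb1 (s := s) (m := m) hs d
  have h1 : (MvPowerSeries.coeff d)
      ((1 - MvPowerSeries.X 0 ^ 2 * MvPowerSeries.X 1) * Dgf s m)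
      = ((eFset s m d).card : ℚ) := by
    rw [sub_mul, one_mul, map_sub, X01_monomial', MvPowerSeries.coeff_monomial_mul,
      coeff_Dgf]
    by_cases hw : (mk3 2 1 0 : Fin 3 →₀ ℕ) ≤ d
    · rw [if_pos hw]
      rw [if_pos hw] at hc1
      rw [coeff_Dgf, ← hsplit, hc1]
      push_cast
      ring
    · rw [if_neg hw]
      rw [if_neg hw] at hc1
      rw [← hsplit, hc1]
      push_cast
      ring
  have h2 : (MvPowerSeries.coeff d)
      (MvPowerSeries.X 0 ^ (2 * s) * MvPowerSeries.X 1 ^ s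
        * (Hgf m + Rgf3 s m - Egf - Dgf s m))
      = ((eFset s m d).card : ℚ) := by
    rw [X01_monomial, MvPowerSeries.coeff_monomial_mul]
    have hc2 := cb2 (s := s) hs hm d
    by_cases hv : (mk3 (2 * s) s 0 : Fin 3 →₀ ℕ) ≤ d
    · rw [if_pos hv]
      rw [if_pos hv] at hc2
      rw [map_sub, map_sub, map_add, coeff_Hgf, coeff_Rgf, coeff_Egf, coeff_Dgf]
      rw [cb3 (s := s) (m := m) (d - mk3 (2 * s) s 0), hc2]
      push_cast
      ring
    · rw [if_neg hv]
      rw [if_neg hv] at hc2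
      rw [hc2]
    
  rw [h1, h2]

end Series
end SecProof

theorem stmt9 (s m : ℕ) (hs : 1 ≤ s) (hm : 1 ≤ m) :
    (1 - MvPowerSeries.X 0 : MvPowerSeries (Fin 3) ℚ)
        * MvPowerSeries.X 0 ^ (2 * s) * MvPowerSeries.X 1 ^ s * Rgf3 s m ^ 2
      - ((1 - MvPowerSeries.X 0) ^ 2
            * (1 - MvPowerSeries.X 0 ^ 2 * MvPowerSeries.X 1
                + MvPowerSeries.X 0 ^ (2 * s) * MvPowerSeries.X 1 ^ s)
          + MvPowerSeries.X 0 ^ (2 * s) * MvPowerSeries.X 1 ^ s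
            * (1 - MvPowerSeries.X 2 * MvPowerSeries.X 0 ^ m)) * Rgf3 s m
      + (1 - MvPowerSeries.X 0)
          * (1 - MvPowerSeries.X 0 ^ 2 * MvPowerSeries.X 1
              + MvPowerSeries.X 0 ^ (2 * s) * MvPowerSeries.X 1 ^ s) = 0 := by
  have hA := SecProof.seriesA (s := s) (m := m)
  have hB := SecProof.seriesB (s := s) (m := m) hs hm
  have hE := SecProof.seriesE
  have hH := SecProof.seriesH (m := m) hm
  linear_combination
    (-((1 - MvPowerSeries.X 0 : MvPowerSeries (Fin 3) ℚ)
        * (1 - MvPowerSeries.X 0 ^ 2 * MvPowerSeries.X 1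
            + MvPowerSeries.X 0 ^ (2 * s) * MvPowerSeries.X 1 ^ s))) * hA
    + (-((1 - MvPowerSeries.X 0 : MvPowerSeries (Fin 3) ℚ) * Rgf3 s m)) * hB
    + (MvPowerSeries.X 0 ^ (2 * s) * MvPowerSeries.X 1 ^ s * Rgf3 s m) * hE
    + (-(MvPowerSeries.X 0 ^ (2 * s) * MvPowerSeries.X 1 ^ s * Rgf3 s m)) * hH
end
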